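/- arXiv:2002.00099 — 5 statements merged into one kernel-verified Lean document; each statement's English description precedes it below -/
import Mathlib

section
/- Let n ≥ 1 and let P ∈ ℝ^{n×n} be row-stochastic with stationary distribution π ∈ (0,1)^n (π = πP, Σ_i π_i = 1). Let y_{i,t} ∈ ℝ^m satisfy y_{i,0} = 0 and y_{i,t+1} = Σ_{j=1}^n P_{ij} y_{j,t} + g_{i,t} for all i and t ≥ 0, where the vectors g_{i,t} ∈ ℝ^m satisfy ‖g_{i,t}‖_* ≤ L for some L ≥ 0, and let ȳ_t = Σ_{i=1}^n π_i y_{i,t}. Suppose there exist γ ∈ (0,1) and an integer ν ≥ 1 such that |(P^k)_{ij} − π_j| ≤ γ^{⌊k/ν⌋} for all integers k ≥ 1 and all i, j. Then for all i = 1,…,n and all t ≥ 0, ‖ȳ_t − y_{i,t}‖_* ≤ nL/(γ(1 − γ^{1/ν})) + 2L, where γ^{1/ν} is the real ν-th root of γ. -/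
open Finset
open scoped RealInnerProductSpace BigOperators

section auxN
variable {m : ℕ} {N : EuclideanSpace ℝ (Fin m) → ℝ}

lemma auxNzero (hNdef : ∀ a, N a = 0 ↔ a = 0) : N 0 = 0 := (hNdef 0).mpr rfl

lemma auxNneg (hNsmul : ∀ (c : ℝ) (a : EuclideanSpace ℝ (Fin m)), N (c • a) = |c| * N a)
    (a : EuclideanSpace ℝ (Fin m)) : N (-a) = N a := by
  simpa using hNsmul (-1) a

lemma auxNnonneg (hNtri : ∀ a b, N (a + b) ≤ N a + N b)
    (hNsmul : ∀ (c : ℝ) (a : EuclideanSpace ℝ (Fin m)), N (c • a) = |c| * N a)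
    (hNdef : ∀ a, N a = 0 ↔ a = 0) (a : EuclideanSpace ℝ (Fin m)) : 0 ≤ N a := by
  have h := hNtri a (-a)
  rw [add_neg_cancel, auxNzero hNdef, auxNneg hNsmul] at h
  linarith

lemma auxNsum (hNtri : ∀ a b, N (a + b) ≤ N a + N b) (hNdef : ∀ a, N a = 0 ↔ a = 0)
    {ι : Type*} (s : Finset ι) (f : ι → EuclideanSpace ℝ (Fin m)) :
    N (∑ i ∈ s, f i) ≤ ∑ i ∈ s, N (f i) :=
  Finset.le_sum_of_subadditive N (auxNzero hNdef).le hNtri s f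

lemma auxNupper (hNtri : ∀ a b, N (a + b) ≤ N a + N b)
    (hNsmul : ∀ (c : ℝ) (a : EuclideanSpace ℝ (Fin m)), N (c • a) = |c| * N a)
    (hNdef : ∀ a, N a = 0 ↔ a = 0) :
    ∃ C : ℝ, 0 ≤ C ∧ ∀ a, N a ≤ C * ‖a‖ := by
  refine ⟨∑ i, N (EuclideanSpace.single i (1:ℝ)), Finset.sum_nonneg fun i _ =>
    auxNnonneg hNtri hNsmul hNdef _, fun a => ?_⟩
  have hdec : a = ∑ i, a i • EuclideanSpace.single i (1:ℝ) := by
    have := (EuclideanSpace.basisFun (Fin m) ℝ).sum_repr a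
    simp only [EuclideanSpace.basisFun_apply, EuclideanSpace.basisFun_repr] at this
    exact this.symm
  calc N a = N (∑ i, a i • EuclideanSpace.single i (1:ℝ)) := by rw [← hdec]
    _ ≤ ∑ i, N (a i • EuclideanSpace.single i (1:ℝ)) := auxNsum hNtri hNdef _ _
    _ = ∑ i, |a i| * N (EuclideanSpace.single i (1:ℝ)) := by simp [hNsmul]
    _ ≤ ∑ i, ‖a‖ * N (EuclideanSpace.single i (1:ℝ)) := by
        apply Finset.sum_le_sum
        intro i _
        apply mul_le_mul_of_nonneg_right _ (auxNnonneg hNtri hNsmul hNdef _)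
        · rw [EuclideanSpace.norm_eq, ← Real.sqrt_sq_eq_abs]
          apply Real.sqrt_le_sqrt
          calc a i ^ 2 = ‖a i‖^2 := by rw [Real.norm_eq_abs, sq_abs]
          _ ≤ _ := Finset.single_le_sum (f := fun j => ‖a j‖^2) (fun j _ => by positivity)
                (mem_univ i)
    _ = (∑ i, N (EuclideanSpace.single i (1:ℝ))) * ‖a‖ := by
        rw [Finset.sum_mul]
        exact Finset.sum_congr rfl fun i _ => mul_comm _ _

lemma auxNcont (hNtri : ∀ a b, N (a + b) ≤ N a + N b)
    (hNsmul : ∀ (c : ℝ) (a : EuclideanSpace ℝ (Fin m)), N (c • a) = |c| * N a)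
    (hNdef : ∀ a, N a = 0 ↔ a = 0) : Continuous N := by
  obtain ⟨C, hC0, hC⟩ := auxNupper hNtri hNsmul hNdef
  have lip : LipschitzWith (Real.toNNReal C) N := by
    apply LipschitzWith.of_dist_le_mul
    intro a b
    have key : ∀ u v : EuclideanSpace ℝ (Fin m), N u - N v ≤ C * ‖u - v‖ := by
      intro u v
      have h1 : N u ≤ N v + N (u - v) := by
        have := hNtri v (u - v); simpa using this
      have := hC (u - v)
      linarith
    rw [Real.dist_eq, abs_sub_le_iff]
    constructor
    · simpa [Real.coe_toNNReal C hC0, dist_eq_norm] using key a b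
    · have h3 := key b a
      have h4 : ‖b - a‖ = ‖a - b‖ := norm_sub_rev b a
      rw [h4] at h3
      simpa [Real.coe_toNNReal C hC0, dist_eq_norm] using h3
  exact lip.continuous

lemma auxNlower (hNtri : ∀ a b, N (a + b) ≤ N a + N b)
    (hNsmul : ∀ (c : ℝ) (a : EuclideanSpace ℝ (Fin m)), N (c • a) = |c| * N a)
    (hNdef : ∀ a, N a = 0 ↔ a = 0) :
    ∃ c : ℝ, 0 < c ∧ ∀ a, c * ‖a‖ ≤ N a := by
  rcases Nat.eq_zero_or_pos m with hm | hm
  · subst hm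
    refine ⟨1, one_pos, fun a => ?_⟩
    have : a = 0 := Subsingleton.elim a 0
    simp [this, auxNzero hNdef]
  · haveI : Nonempty (Fin m) := ⟨⟨0, hm⟩⟩
    have hsph : (Metric.sphere (0 : EuclideanSpace ℝ (Fin m)) 1).Nonempty :=
      NormedSpace.sphere_nonempty.2 zero_le_one
    obtain ⟨x₀, hx₀mem, hmin⟩ := (isCompact_sphere (0 : EuclideanSpace ℝ (Fin m)) 1).exists_isMinOn
      hsph ((auxNcont hNtri hNsmul hNdef).continuousOn)
    have hx₀norm : ‖x₀‖ = 1 := by simpa using hx₀mem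
    have hx₀ne : x₀ ≠ 0 := by intro h; rw [h] at hx₀norm; simp at hx₀norm
    have hc : 0 < N x₀ := by
      rcases lt_or_eq_of_le (auxNnonneg hNtri hNsmul hNdef x₀) with h | h
      · exact h
      · exact absurd ((hNdef x₀).1 h.symm) hx₀ne
    refine ⟨N x₀, hc, fun a => ?_⟩
    rcases eq_or_ne a 0 with rfl | ha
    · simp [auxNzero hNdef]
    · have hna : 0 < ‖a‖ := norm_pos_iff.2 ha
      set u := ‖a‖⁻¹ • a with hu
      have hunorm : ‖u‖ = 1 := by
        rw [hu, norm_smul]; simp [abs_of_pos (inv_pos.2 hna), inv_mul_cancel₀ hna.ne']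
      have humem : u ∈ Metric.sphere (0 : EuclideanSpace ℝ (Fin m)) 1 := by
        simp [hunorm]
      have h1 : N x₀ ≤ N u := hmin humem
      have h2 : N a = ‖a‖ * N u := by
        rw [hu, hNsmul]
        rw [abs_of_pos (inv_pos.2 hna)]
        field_simp
      rw [h2, mul_comm (N x₀) ‖a‖]
      exact mul_le_mul_of_nonneg_left h1 hna.le

end auxN

section auxNd
variable {m : ℕ} {N Nd : EuclideanSpace ℝ (Fin m) → ℝ}

lemma auxBdd (hNtri : ∀ a b, N (a + b) ≤ N a + N b)
    (hNsmul : ∀ (c : ℝ) (a : EuclideanSpace ℝ (Fin m)), N (c • a) = |c| * N a)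
    (hNdef : ∀ a, N a = 0 ↔ a = 0) (v : EuclideanSpace ℝ (Fin m)) :
    BddAbove {r : ℝ | ∃ a, N a ≤ 1 ∧ r = ⟪v, a⟫} := by
  obtain ⟨c, hc0, hc⟩ := auxNlower hNtri hNsmul hNdef
  refine ⟨‖v‖ * c⁻¹, fun r hr => ?_⟩
  obtain ⟨a, ha1, rfl⟩ := hr
  have hnorm : ‖a‖ ≤ c⁻¹ := by
    have h1 : c * ‖a‖ ≤ 1 := (hc a).trans ha1
    rw [← mul_le_mul_iff_right₀ hc0, mul_inv_cancel₀ hc0.ne']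
    exact h1
  calc ⟪v, a⟫ ≤ ‖v‖ * ‖a‖ := real_inner_le_norm v a
    _ ≤ ‖v‖ * c⁻¹ := by apply mul_le_mul_of_nonneg_left hnorm (norm_nonneg v)

lemma auxNdNonneg (hNdef : ∀ a, N a = 0 ↔ a = 0)
    (hNd : ∀ v, Nd v = sSup {r : ℝ | ∃ a, N a ≤ 1 ∧ r = ⟪v, a⟫})
    (hbdd : ∀ v, BddAbove {r : ℝ | ∃ a, N a ≤ 1 ∧ r = ⟪v, a⟫})
    (v : EuclideanSpace ℝ (Fin m)) : 0 ≤ Nd v := by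
  rw [hNd]
  apply le_csSup (hbdd v)
  exact ⟨0, by simp [auxNzero hNdef]⟩

lemma auxNdPair (hNd : ∀ v, Nd v = sSup {r : ℝ | ∃ a, N a ≤ 1 ∧ r = ⟪v, a⟫})
    (hbdd : ∀ v, BddAbove {r : ℝ | ∃ a, N a ≤ 1 ∧ r = ⟪v, a⟫})
    (v a : EuclideanSpace ℝ (Fin m)) (ha : N a ≤ 1) : ⟪v, a⟫ ≤ Nd v := by
  rw [hNd]
  exact le_csSup (hbdd v) ⟨a, ha, rfl⟩

lemma auxNdAbsPair (hNsmul : ∀ (c : ℝ) (a : EuclideanSpace ℝ (Fin m)), N (c • a) = |c| * N a)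
    (hNd : ∀ v, Nd v = sSup {r : ℝ | ∃ a, N a ≤ 1 ∧ r = ⟪v, a⟫})
    (hbdd : ∀ v, BddAbove {r : ℝ | ∃ a, N a ≤ 1 ∧ r = ⟪v, a⟫})
    (v a : EuclideanSpace ℝ (Fin m)) (ha : N a ≤ 1) : |⟪v, a⟫| ≤ Nd v := by
  rw [abs_le]
  constructor
  · have h := auxNdPair hNd hbdd v (-a) (by rw [auxNneg hNsmul]; exact ha)
    rw [inner_neg_right] at h
    linarith
  · exact auxNdPair hNd hbdd v a ha

lemma auxNdSumSmul (hNtri : ∀ a b, N (a + b) ≤ N a + N b)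
    (hNsmul : ∀ (c : ℝ) (a : EuclideanSpace ℝ (Fin m)), N (c • a) = |c| * N a)
    (hNdef : ∀ a, N a = 0 ↔ a = 0)
    (hNd : ∀ v, Nd v = sSup {r : ℝ | ∃ a, N a ≤ 1 ∧ r = ⟪v, a⟫})
    {ι : Type*} (s : Finset ι) (c : ι → ℝ) (v : ι → EuclideanSpace ℝ (Fin m)) :
    Nd (∑ i ∈ s, c i • v i) ≤ ∑ i ∈ s, |c i| * Nd (v i) := by
  have hbdd := auxBdd hNtri hNsmul hNdef (N := N)
  rw [hNd]
  apply Real.sSup_le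
  · rintro r ⟨a, ha, rfl⟩
    rw [sum_inner]
    apply Finset.sum_le_sum
    intro i _
    rw [real_inner_smul_left]
    calc c i * ⟪v i, a⟫ ≤ |c i * ⟪v i, a⟫| := le_abs_self _
      _ = |c i| * |⟪v i, a⟫| := abs_mul _ _
      _ ≤ |c i| * Nd (v i) :=
          mul_le_mul_of_nonneg_left (auxNdAbsPair hNsmul hNd hbdd (v i) a ha) (abs_nonneg _)
  · exact Finset.sum_nonneg fun i _ =>
      mul_nonneg (abs_nonneg _) (auxNdNonneg hNdef hNd hbdd (v i))

end auxNd

/-- **Lemma 2 (bound on the deviation of the dual variables from their weighted average).**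
For the distributed dual averaging recursion `y_{i,t+1} = Σ_j P_{ij} y_{j,t} + g_{i,t}` with
`y_{i,0} = 0`, dual-norm-bounded increments `‖g_{i,t}‖_* ≤ L`, a row-stochastic matrix `P`
with stationary distribution `π ∈ (0,1)^n`, and geometric mixing
`|(P^k)_{ij} − π_j| ≤ γ^⌊k/ν⌋`, the weighted average `ȳ_t = Σ_i π_i y_{i,t}` satisfies
`‖ȳ_t − y_{i,t}‖_* ≤ nL/(γ(1 − γ^{1/ν})) + 2L` for all `i` and `t`. -/
theorem dual_average_deviation_bound {m : ℕ} (n : ℕ) (hn : 1 ≤ n)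
    -- `N` is a norm on `ℝ^m` and `Nd` its dual norm
    (N : EuclideanSpace ℝ (Fin m) → ℝ)
    (hNtri : ∀ a b, N (a + b) ≤ N a + N b)
    (hNsmul : ∀ (c : ℝ) (a : EuclideanSpace ℝ (Fin m)), N (c • a) = |c| * N a)
    (hNdef : ∀ a, N a = 0 ↔ a = 0)
    (Nd : EuclideanSpace ℝ (Fin m) → ℝ)
    (hNd : ∀ v, Nd v = sSup {r : ℝ | ∃ a, N a ≤ 1 ∧ r = ⟪v, a⟫})
    -- `P` is row-stochastic with stationary distribution `π ∈ (0,1)^n`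
    (P : Matrix (Fin n) (Fin n) ℝ)
    (hPnn : ∀ i j, 0 ≤ P i j) (hProw : ∀ i, ∑ j, P i j = 1)
    (π : Fin n → ℝ) (hπ0 : ∀ i, 0 < π i) (hπ1 : ∀ i, π i < 1)
    (hπsum : ∑ i, π i = 1) (hπstat : ∀ j, ∑ i, π i * P i j = π j)
    -- the dual variables and their bounded increments
    (L : ℝ) (hL : 0 ≤ L)
    (g y : Fin n → ℕ → EuclideanSpace ℝ (Fin m))
    (hg : ∀ i t, Nd (g i t) ≤ L)
    (hy0 : ∀ i, y i 0 = 0)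
    (hyrec : ∀ i t, y i (t + 1) = (∑ j, P i j • y j t) + g i t)
    -- the weighted dual average
    (ybar : ℕ → EuclideanSpace ℝ (Fin m))
    (hybar : ∀ t, ybar t = ∑ i, π i • y i t)
    -- geometric mixing of the matrix powers of `P` (`k / ν` is `⌊k/ν⌋`)
    (γ : ℝ) (hγ0 : 0 < γ) (hγ1 : γ < 1) (ν : ℕ) (hν : 1 ≤ ν)
    (hmix : ∀ k : ℕ, 1 ≤ k → ∀ i j, |(P ^ k) i j - π j| ≤ γ ^ (k / ν)) :
    ∀ (i : Fin n) (t : ℕ),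
      Nd (ybar t - y i t) ≤ n * L / (γ * (1 - γ ^ ((1 : ℝ) / (ν : ℝ)))) + 2 * L := by
  intro i t
  have hbdd := auxBdd hNtri hNsmul hNdef (N := N)
  set β : ℝ := γ ^ ((1 : ℝ) / (ν : ℝ)) with hβdef
  have hν0 : (0:ℝ) < (ν:ℝ) := by exact_mod_cast hν
  have hβ0 : 0 < β := Real.rpow_pos_of_pos hγ0 _
  have hβ1 : β < 1 := Real.rpow_lt_one hγ0.le hγ1 (div_pos one_pos hν0)
  have h1β : 0 < 1 - β := by linarith
  -- closed form for y
  have hyform : ∀ t i, y i t = ∑ s ∈ Finset.range t, ∑ l, (P ^ (t - 1 - s)) i l • g l s := by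
    intro t
    induction t with
    | zero => intro i; simp [hy0]
    | succ t ih =>
      intro i
      rw [hyrec, Finset.sum_range_succ]
      have hlast : (∑ l, (P ^ (t + 1 - 1 - t)) i l • g l t) = g i t := by
        simp [Matrix.one_apply, ite_smul]
      rw [hlast]
      congr 1
      calc (∑ j, P i j • y j t)
          = ∑ j, P i j • ∑ s ∈ Finset.range t, ∑ l, (P ^ (t - 1 - s)) j l • g l s := by
            exact Finset.sum_congr rfl fun j _ => by rw [ih j]
        _ = ∑ j, ∑ s ∈ Finset.range t, ∑ l, (P i j * (P ^ (t - 1 - s)) j l) • g l s := by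
            refine Finset.sum_congr rfl fun j _ => ?_
            rw [Finset.smul_sum]
            refine Finset.sum_congr rfl fun s _ => ?_
            rw [Finset.smul_sum]
            exact Finset.sum_congr rfl fun l _ => smul_smul _ _ _
        _ = ∑ s ∈ Finset.range t, ∑ j, ∑ l, (P i j * (P ^ (t - 1 - s)) j l) • g l s :=
            Finset.sum_comm
        _ = ∑ s ∈ Finset.range t, ∑ l, (∑ j, P i j * (P ^ (t - 1 - s)) j l) • g l s := by
            refine Finset.sum_congr rfl fun s _ => ?_
            rw [Finset.sum_comm]
            exact Finset.sum_congr rfl fun l _ => (Finset.sum_smul).symm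
        _ = ∑ s ∈ Finset.range t, ∑ l, (P ^ (t + 1 - 1 - s)) i l • g l s := by
            refine Finset.sum_congr rfl fun s hs => Finset.sum_congr rfl fun l _ => ?_
            have hs' : s < t := Finset.mem_range.1 hs
            have hidx : t + 1 - 1 - s = (t - 1 - s) + 1 := by omega
            rw [hidx, pow_succ', Matrix.mul_apply]
  -- stationarity of powers
  have hstatpow : ∀ k l, ∑ i, π i * (P ^ k) i l = π l := by
    intro k
    induction k with
    | zero => intro l; simp [Matrix.one_apply]
    | succ k ih =>
      intro l
      rw [pow_succ]
      calc ∑ i, π i * (P ^ k * P) i l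
          = ∑ i, ∑ j, π i * ((P ^ k) i j * P j l) := by
            refine Finset.sum_congr rfl fun i _ => ?_
            rw [Matrix.mul_apply, Finset.mul_sum]
        _ = ∑ j, ∑ i, π i * ((P ^ k) i j * P j l) := Finset.sum_comm
        _ = ∑ j, (∑ i, π i * (P ^ k) i j) * P j l := by
            refine Finset.sum_congr rfl fun j _ => ?_
            rw [Finset.sum_mul]
            exact Finset.sum_congr rfl fun i _ => by ring
        _ = ∑ j, π j * P j l := by
            exact Finset.sum_congr rfl fun j _ => by rw [ih j]
        _ = π l := hπstat l
  -- closed form for ybar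
  have hybarform : ybar t = ∑ s ∈ Finset.range t, ∑ l, π l • g l s := by
    rw [hybar]
    calc (∑ i, π i • y i t)
        = ∑ i, ∑ s ∈ Finset.range t, ∑ l, (π i * (P ^ (t - 1 - s)) i l) • g l s := by
          refine Finset.sum_congr rfl fun j _ => ?_
          rw [hyform t j, Finset.smul_sum]
          refine Finset.sum_congr rfl fun s _ => ?_
          rw [Finset.smul_sum]
          exact Finset.sum_congr rfl fun l _ => smul_smul _ _ _
      _ = ∑ s ∈ Finset.range t, ∑ j, ∑ l, (π j * (P ^ (t - 1 - s)) j l) • g l s :=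
          Finset.sum_comm
      _ = ∑ s ∈ Finset.range t, ∑ l, (∑ j, π j * (P ^ (t - 1 - s)) j l) • g l s := by
          refine Finset.sum_congr rfl fun s _ => ?_
          rw [Finset.sum_comm]
          exact Finset.sum_congr rfl fun l _ => (Finset.sum_smul).symm
      _ = ∑ s ∈ Finset.range t, ∑ l, π l • g l s := by
          refine Finset.sum_congr rfl fun s _ => Finset.sum_congr rfl fun l _ => ?_
          rw [hstatpow]
  -- the difference
  have hdiff : ybar t - y i t
      = ∑ s ∈ Finset.range t, ∑ l, (π l - (P ^ (t - 1 - s)) i l) • g l s := by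
    rw [hybarform, hyform t i, ← Finset.sum_sub_distrib]
    refine Finset.sum_congr rfl fun s _ => ?_
    rw [← Finset.sum_sub_distrib]
    exact Finset.sum_congr rfl fun l _ => (sub_smul _ _ _).symm
  -- Nd bound via sum over product
  have hndbound : Nd (ybar t - y i t)
      ≤ ∑ s ∈ Finset.range t, ∑ l, |π l - (P ^ (t - 1 - s)) i l| * Nd (g l s) := by
    rw [hdiff, ← Finset.sum_product']
    calc Nd (∑ p ∈ Finset.range t ×ˢ (Finset.univ : Finset (Fin n)),
            (π p.2 - (P ^ (t - 1 - p.1)) i p.2) • g p.2 p.1)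
        ≤ ∑ p ∈ Finset.range t ×ˢ (Finset.univ : Finset (Fin n)),
            |π p.2 - (P ^ (t - 1 - p.1)) i p.2| * Nd (g p.2 p.1) :=
          auxNdSumSmul hNtri hNsmul hNdef hNd _ _ _
      _ = _ := Finset.sum_product _ _ _
  -- replace Nd (g l s) by L
  have hndbound2 : Nd (ybar t - y i t)
      ≤ ∑ s ∈ Finset.range t, ∑ l, |(P ^ (t - 1 - s)) i l - π l| * L := by
    refine hndbound.trans (Finset.sum_le_sum fun s _ => Finset.sum_le_sum fun l _ => ?_)
    rw [abs_sub_comm]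
    exact mul_le_mul_of_nonneg_left (hg l s) (abs_nonneg _)
  set D : ℕ → ℝ := fun k => ∑ l, |(P ^ k) i l - π l| * L with hD
  have hreflect : ∑ s ∈ Finset.range t, ∑ l, |(P ^ (t - 1 - s)) i l - π l| * L
      = ∑ k ∈ Finset.range t, D k := Finset.sum_range_reflect D t
  -- bound on D 0
  have hD0 : D 0 ≤ 2 * L := by
    have hone : ∑ l, (1 : Matrix (Fin n) (Fin n) ℝ) i l = 1 := by
      simp [Matrix.one_apply]
    calc D 0 = ∑ l, |(1 : Matrix (Fin n) (Fin n) ℝ) i l - π l| * L := by rw [hD]; simp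
      _ ≤ ∑ l, ((1 : Matrix (Fin n) (Fin n) ℝ) i l + π l) * L := by
          refine Finset.sum_le_sum fun l _ => mul_le_mul_of_nonneg_right ?_ hL
          have h1 : (0:ℝ) ≤ (1 : Matrix (Fin n) (Fin n) ℝ) i l := by
            rw [Matrix.one_apply]; positivity
          have h2 := (hπ0 l).le
          calc |(1 : Matrix (Fin n) (Fin n) ℝ) i l - π l|
              ≤ |(1 : Matrix (Fin n) (Fin n) ℝ) i l| + |π l| := abs_sub _ _
            _ = _ := by rw [abs_of_nonneg h1, abs_of_nonneg h2]
      _ = 2 * L := by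
          rw [← Finset.sum_mul, Finset.sum_add_distrib, hone, hπsum]
          ring
  -- rpow key inequality
  have hpowkey : ∀ K : ℕ, (γ : ℝ) ^ (K / ν) ≤ β ^ K / γ := by
    intro K
    have h1 : K < ν * (K / ν) + ν := by
      have h := Nat.div_add_mod K ν
      have h2 := Nat.mod_lt K (show 0 < ν by omega)
      omega
    have h2 : (K : ℝ) < (ν : ℝ) * ((K / ν : ℕ) : ℝ) + (ν : ℝ) := by exact_mod_cast h1
    have hfl : ((K : ℝ) / (ν : ℝ)) - 1 ≤ ((K / ν : ℕ) : ℝ) := by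
      rw [sub_le_iff_le_add, div_le_iff₀ hν0]
      nlinarith
    calc (γ : ℝ) ^ (K / ν) = γ ^ (((K / ν : ℕ) : ℝ)) := (Real.rpow_natCast γ _).symm
      _ ≤ γ ^ ((K : ℝ) / (ν : ℝ) - 1) := Real.rpow_le_rpow_of_exponent_ge hγ0 hγ1.le hfl
      _ = γ ^ ((K : ℝ) / (ν : ℝ)) / γ := by rw [Real.rpow_sub hγ0, Real.rpow_one]
      _ = β ^ K / γ := by
          congr 1
          rw [show (K : ℝ) / (ν : ℝ) = ((1 : ℝ) / (ν : ℝ)) * (K : ℕ) by push_cast; ring,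
            Real.rpow_mul hγ0.le, Real.rpow_natCast]
  -- bound on D (k+1)
  have hDk : ∀ k : ℕ, D (k + 1) ≤ n * L / γ * β ^ (k + 1) := by
    intro k
    have hpow := hpowkey (k + 1)
    calc D (k + 1) ≤ ∑ _l : Fin n, γ ^ ((k + 1) / ν) * L := by
          refine Finset.sum_le_sum fun l _ => mul_le_mul_of_nonneg_right ?_ hL
          exact hmix (k + 1) (by omega) i l
      _ = n * (γ ^ ((k + 1) / ν) * L) := by
          rw [Finset.sum_const, Finset.card_univ, Fintype.card_fin, nsmul_eq_mul]
      _ ≤ n * (β ^ (k + 1) / γ * L) := by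
          exact mul_le_mul_of_nonneg_left (mul_le_mul_of_nonneg_right hpow hL)
            (Nat.cast_nonneg n)
      _ = n * L / γ * β ^ (k + 1) := by ring
  -- geometric sum bound
  have hgeom : ∀ T : ℕ, ∑ k ∈ Finset.range T, β ^ k ≤ 1 / (1 - β) := by
    intro T
    induction T with
    | zero =>
      rw [Finset.sum_range_zero]
      exact div_nonneg zero_le_one h1β.le
    | succ T ih =>
      rw [Finset.sum_range_succ']
      have hshift : ∑ j ∈ Finset.range T, β ^ (j + 1) = β * ∑ j ∈ Finset.range T, β ^ j := by
        rw [Finset.mul_sum]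
        exact Finset.sum_congr rfl fun j _ => pow_succ' β j
      rw [hshift, pow_zero]
      have h1 : β * ∑ j ∈ Finset.range T, β ^ j ≤ β * (1 / (1 - β)) :=
        mul_le_mul_of_nonneg_left ih hβ0.le
      have hne : (1:ℝ) - β ≠ 0 := h1β.ne'
      have h2 : β * (1 / (1 - β)) + 1 = 1 / (1 - β) := by
        field_simp
        ring
      linarith
  -- total sum bound
  have htotal : ∑ k ∈ Finset.range t, D k ≤ n * L / (γ * (1 - β)) + 2 * L := by
    have hrhs1 : 0 ≤ n * L / (γ * (1 - β)) :=
      div_nonneg (mul_nonneg (Nat.cast_nonneg n) hL) (le_of_lt (mul_pos hγ0 h1β))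
    cases t with
    | zero =>
      rw [Finset.sum_range_zero]
      linarith
    | succ t =>
      rw [Finset.sum_range_succ']
      have h1 : ∑ j ∈ Finset.range t, D (j + 1)
          ≤ ∑ j ∈ Finset.range t, n * L / γ * β ^ (j + 1) :=
        Finset.sum_le_sum fun j _ => hDk j
      have h2 : ∑ j ∈ Finset.range t, n * L / γ * β ^ (j + 1)
          = n * L / γ * (β * ∑ j ∈ Finset.range t, β ^ j) := by
        rw [Finset.mul_sum, Finset.mul_sum]
        exact Finset.sum_congr rfl fun j _ => by rw [pow_succ']
      have h3 : β * ∑ j ∈ Finset.range t, β ^ j ≤ 1 / (1 - β) := by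
        have := mul_le_mul_of_nonneg_left (hgeom t) hβ0.le
        have hb1 : β * (1 / (1 - β)) ≤ 1 / (1 - β) := by
          have hdn : 0 ≤ 1 / (1 - β) := div_nonneg zero_le_one h1β.le
          nlinarith
        linarith
      have h4 : n * L / γ * (β * ∑ j ∈ Finset.range t, β ^ j) ≤ n * L / γ * (1 / (1 - β)) :=
        mul_le_mul_of_nonneg_left h3 (div_nonneg (mul_nonneg (Nat.cast_nonneg n) hL) hγ0.le)
      have h5 : n * L / γ * (1 / (1 - β)) = n * L / (γ * (1 - β)) := by
        rw [div_mul_div_comm, mul_one]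
      linarith
  calc Nd (ybar t - y i t) ≤ ∑ k ∈ Finset.range t, D k := by
        rw [← hreflect]; exact hndbound2
    _ ≤ n * L / (γ * (1 - β)) + 2 * L := htotal
end

section
/- Let n ≥ 1 and let P ∈ ℝ^{n×n} have nonnegative entries. Suppose p ∈ (0,1) is such that every entry of the k-th matrix power of P satisfies (P^k)_{ij} ≤ p^k for all integers k ≥ 1 and all i,j. Let π ∈ (0,1)^n with Σ_i π_i = 1, let y_{i,t} ∈ ℝ^m satisfy y_{i,0} = 0 and y_{i,t+1} = Σ_{j=1}^n P_{ij} y_{j,t} + g_{i,t} for all i and t ≥ 0, where ‖g_{i,t}‖_* ≤ L for some L ≥ 0, and let ȳ_t = Σ_{i=1}^n π_i y_{i,t}. Then for all t ≥ 1, ‖ȳ_t‖_* ≤ n²L/(1 − p) + L. -/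
open Finset
open scoped RealInnerProductSpace BigOperators

lemma aux_norm_bdd {m : ℕ} (N : EuclideanSpace ℝ (Fin m) → ℝ)
    (hNtri : ∀ a b, N (a + b) ≤ N a + N b)
    (hNsmul : ∀ (c : ℝ) (a : EuclideanSpace ℝ (Fin m)), N (c • a) = |c| * N a)
    (hNdef : ∀ a, N a = 0 ↔ a = 0) :
    ∃ R : ℝ, 0 ≤ R ∧ ∀ a, N a ≤ 1 → ‖a‖ ≤ R := by
  have hN0 : N 0 = 0 := (hNdef 0).mpr rfl
  have hNneg : ∀ a, 0 ≤ N a := by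
    intro a
    have h1 : N (a + (-1 : ℝ) • a) ≤ N a + N ((-1 : ℝ) • a) := hNtri _ _
    have h2 : N ((-1 : ℝ) • a) = N a := by rw [hNsmul]; simp
    have h3 : a + (-1 : ℝ) • a = 0 := by simp
    rw [h3, hN0, h2] at h1
    linarith
  -- upper bound : N a ≤ C * ‖a‖
  set C : ℝ := ∑ i, N (EuclideanSpace.single i (1 : ℝ)) with hC
  have hCnn : 0 ≤ C := Finset.sum_nonneg fun i _ => hNneg _
  have hub : ∀ a, N a ≤ C * ‖a‖ := by
    intro a
    have hrepr : ∑ i, a i • EuclideanSpace.single i (1 : ℝ) = a := by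
      have := (EuclideanSpace.basisFun (Fin m) ℝ).sum_repr a
      simpa [EuclideanSpace.basisFun_apply, EuclideanSpace.basisFun_repr] using this
    calc N a = N (∑ i, a i • EuclideanSpace.single i (1 : ℝ)) := by rw [hrepr]
      _ ≤ ∑ i, N (a i • EuclideanSpace.single i (1 : ℝ)) :=
          Finset.le_sum_of_subadditive N hN0.le hNtri _ _
      _ = ∑ i, |a i| * N (EuclideanSpace.single i (1 : ℝ)) := by
          simp only [hNsmul]
      _ ≤ ∑ i, ‖a‖ * N (EuclideanSpace.single i (1 : ℝ)) := by
          apply Finset.sum_le_sum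
          intro i _
          have habs : |a i| ≤ ‖a‖ := by
            have h1 : ⟪a, EuclideanSpace.single i (1 : ℝ)⟫ = a i := by
              simp [EuclideanSpace.inner_single_right]
            have h2 := abs_real_inner_le_norm a (EuclideanSpace.single i (1 : ℝ))
            rw [h1, EuclideanSpace.norm_single] at h2
            simpa using h2
          exact mul_le_mul_of_nonneg_right habs (hNneg _)
      _ = C * ‖a‖ := by rw [← Finset.mul_sum, mul_comm]
  -- N is Lipschitz hence continuous
  have hcont : Continuous N := by
    apply (LipschitzWith.of_dist_le_mul (K := C.toNNReal) (f := N) ?_).continuous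
    intro a b
    have h1 : N a ≤ N (a - b) + N b := by
      have := hNtri (a - b) b; simpa using this
    have h2 : N b ≤ N (b - a) + N a := by
      have := hNtri (b - a) a; simpa using this
    have h3 : N (b - a) = N (a - b) := by
      have : b - a = (-1 : ℝ) • (a - b) := by ring_nf; module
      rw [this, hNsmul]; simp
    have h4 : N (a - b) ≤ C * ‖a - b‖ := hub _
    rw [Real.dist_eq, dist_eq_norm]
    have hck : (C.toNNReal : ℝ) = C := Real.coe_toNNReal _ hCnn
    rw [hck, abs_le]
    constructor <;> [linarith [h2, h3, h4]; linarith [h1, h4]]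
  rcases subsingleton_or_nontrivial (EuclideanSpace ℝ (Fin m)) with hsub | hnt
  · exact ⟨0, le_refl _, fun a _ => by
      have : a = 0 := Subsingleton.elim a 0
      simp [this]⟩
  · have hne : (Metric.sphere (0 : EuclideanSpace ℝ (Fin m)) 1).Nonempty :=
      NormedSpace.sphere_nonempty.mpr zero_le_one
    obtain ⟨z, hz, hmin⟩ := (isCompact_sphere (0 : EuclideanSpace ℝ (Fin m)) 1).exists_isMinOn
      hne hcont.continuousOn
    have hznorm : ‖z‖ = 1 := mem_sphere_zero_iff_norm.mp hz
    have hzne : z ≠ 0 := by intro h; rw [h, norm_zero] at hznorm; norm_num at hznorm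
    have hε : 0 < N z := lt_of_le_of_ne (hNneg z) (Ne.symm fun h => hzne ((hNdef z).mp h))
    refine ⟨1 / N z, by positivity, fun a ha => ?_⟩
    rcases eq_or_ne a 0 with rfl | hane
    · simp; positivity
    · have hna : 0 < ‖a‖ := norm_pos_iff.mpr hane
      have hw : (‖a‖⁻¹ • a) ∈ Metric.sphere (0 : EuclideanSpace ℝ (Fin m)) 1 := by
        rw [mem_sphere_zero_iff_norm, norm_smul]
        simp [abs_of_pos (inv_pos.mpr hna), inv_mul_cancel₀ (ne_of_gt hna)]
      have h5 : N z ≤ N (‖a‖⁻¹ • a) := hmin hw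
      rw [hNsmul, abs_of_pos (inv_pos.mpr hna)] at h5
      rw [le_div_iff₀ hε]
      have h6 : ‖a‖ * (‖a‖⁻¹ * N a) = N a := by field_simp
      nlinarith [mul_le_mul_of_nonneg_left h5 hna.le]


/-- **Lemma 3 (bound on the dual norm of the weighted dual average).**
For the distributed dual averaging recursion `y_{i,t+1} = Σ_j P_{ij} y_{j,t} + g_{i,t}` with
`y_{i,0} = 0`, dual-norm-bounded increments `‖g_{i,t}‖_* ≤ L`, nonnegative `P` whose matrix
powers satisfy the entrywise decay `(P^k)_{ij} ≤ p^k` for `p ∈ (0,1)`, and weights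
`π ∈ (0,1)^n` summing to one, the weighted average `ȳ_t = Σ_i π_i y_{i,t}` satisfies
`‖ȳ_t‖_* ≤ n²L/(1 − p) + L` for all `t ≥ 1`. -/
theorem dual_average_norm_bound {m : ℕ} (n : ℕ) (hn : 1 ≤ n)
    -- `N` is a norm on `ℝ^m` and `Nd` its dual norm
    (N : EuclideanSpace ℝ (Fin m) → ℝ)
    (hNtri : ∀ a b, N (a + b) ≤ N a + N b)
    (hNsmul : ∀ (c : ℝ) (a : EuclideanSpace ℝ (Fin m)), N (c • a) = |c| * N a)
    (hNdef : ∀ a, N a = 0 ↔ a = 0)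
    (Nd : EuclideanSpace ℝ (Fin m) → ℝ)
    (hNd : ∀ v, Nd v = sSup {r : ℝ | ∃ a, N a ≤ 1 ∧ r = ⟪v, a⟫})
    -- `P` has nonnegative entries and entrywise geometrically decaying powers
    (P : Matrix (Fin n) (Fin n) ℝ)
    (hPnn : ∀ i j, 0 ≤ P i j)
    (p : ℝ) (hp0 : 0 < p) (hp1 : p < 1)
    (hPpow : ∀ k : ℕ, 1 ≤ k → ∀ i j, (P ^ k) i j ≤ p ^ k)
    -- the weights `π ∈ (0,1)^n`
    (π : Fin n → ℝ) (hπ0 : ∀ i, 0 < π i) (hπ1 : ∀ i, π i < 1)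
    (hπsum : ∑ i, π i = 1)
    -- the dual variables and their bounded increments
    (L : ℝ) (hL : 0 ≤ L)
    (g y : Fin n → ℕ → EuclideanSpace ℝ (Fin m))
    (hg : ∀ i t, Nd (g i t) ≤ L)
    (hy0 : ∀ i, y i 0 = 0)
    (hyrec : ∀ i t, y i (t + 1) = (∑ j, P i j • y j t) + g i t)
    -- the weighted dual average
    (ybar : ℕ → EuclideanSpace ℝ (Fin m))
    (hybar : ∀ t, ybar t = ∑ i, π i • y i t) :
    ∀ t : ℕ, 1 ≤ t → Nd (ybar t) ≤ (n : ℝ) ^ 2 * L / (1 - p) + L := by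
  obtain ⟨R, hR0, hR⟩ := aux_norm_bdd N hNtri hNsmul hNdef
  have h1p : 0 < 1 - p := by linarith
  -- entries of powers of P are nonnegative
  have hPpownn : ∀ s : ℕ, ∀ i j, 0 ≤ (P ^ s) i j := by
    intro s
    induction s with
    | zero => intro i j; rw [pow_zero]; rw [Matrix.one_apply]; positivity
    | succ s ih =>
      intro i j
      rw [pow_succ', Matrix.mul_apply]
      exact Finset.sum_nonneg fun k _ => mul_nonneg (hPnn i k) (ih k j)
  -- each inner product with a unit-N vector is at most Nd, hence at most L
  have hkey : ∀ (v : EuclideanSpace ℝ (Fin m)) (a : EuclideanSpace ℝ (Fin m)),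
      N a ≤ 1 → ⟪v, a⟫ ≤ Nd v := by
    intro v a ha
    rw [hNd]
    apply le_csSup
    · refine ⟨‖v‖ * R, ?_⟩
      rintro r ⟨b, hb, rfl⟩
      calc ⟪v, b⟫ ≤ ‖v‖ * ‖b‖ := real_inner_le_norm v b
        _ ≤ ‖v‖ * R := mul_le_mul_of_nonneg_left (hR b hb) (norm_nonneg v)
    · exact ⟨a, ha, rfl⟩
  -- unrolled recursion
  have hun : ∀ t : ℕ, ∀ i, y i t = ∑ s ∈ Finset.range t, ∑ j, (P ^ s) i j • g j (t - 1 - s) := by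
    intro t
    induction t with
    | zero => intro i; simp [hy0]
    | succ t ih =>
      intro i
      rw [hyrec, Finset.sum_range_succ']
      have hf0 : (∑ j, (P ^ 0) i j • g j (t + 1 - 1 - 0)) = g i t := by
        simp [Matrix.one_apply]
      rw [hf0]
      congr 1
      have hstep : ∀ j, P i j • y j t
          = ∑ s ∈ Finset.range t, ∑ k, (P i j * (P ^ s) j k) • g k (t - 1 - s) := by
        intro j
        rw [ih j, Finset.smul_sum]
        refine Finset.sum_congr rfl fun s _ => ?_
        rw [Finset.smul_sum]
        exact Finset.sum_congr rfl fun k _ => smul_smul _ _ _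
      calc (∑ j, P i j • y j t)
          = ∑ j, ∑ s ∈ Finset.range t, ∑ k, (P i j * (P ^ s) j k) • g k (t - 1 - s) :=
            Finset.sum_congr rfl fun j _ => hstep j
        _ = ∑ s ∈ Finset.range t, ∑ j, ∑ k, (P i j * (P ^ s) j k) • g k (t - 1 - s) :=
            Finset.sum_comm
        _ = ∑ s ∈ Finset.range t, ∑ k, ∑ j, (P i j * (P ^ s) j k) • g k (t - 1 - s) :=
            Finset.sum_congr rfl fun s _ => Finset.sum_comm
        _ = ∑ s ∈ Finset.range t, ∑ k, (P ^ (s + 1)) i k • g k (t + 1 - 1 - (s + 1)) := by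
            refine Finset.sum_congr rfl fun s _ => Finset.sum_congr rfl fun k _ => ?_
            have hidx : t + 1 - 1 - (s + 1) = t - 1 - s := by omega
            rw [hidx, ← Finset.sum_smul, pow_succ', Matrix.mul_apply]
  -- main bound
  intro t ht
  rw [hNd]
  have hB : (0:ℝ) ≤ (n : ℝ) ^ 2 * L / (1 - p) + L := by positivity
  apply Real.sSup_le _ hB
  rintro r ⟨a, ha, rfl⟩
  have hga : ∀ j s, ⟪g j s, a⟫ ≤ L := fun j s => (hkey _ a ha).trans (hg j s)
  -- expand the inner product
  have hexp : ⟪ybar t, a⟫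
      = ∑ i, π i * ∑ s ∈ Finset.range t, ∑ j, (P ^ s) i j * ⟪g j (t - 1 - s), a⟫ := by
    rw [hybar, sum_inner]
    refine Finset.sum_congr rfl fun i _ => ?_
    rw [real_inner_smul_left, hun t i, sum_inner]
    congr 1
    refine Finset.sum_congr rfl fun s _ => ?_
    rw [sum_inner]
    exact Finset.sum_congr rfl fun j _ => real_inner_smul_left _ _ _
  rw [hexp]
  -- bound each i-term
  have hterm : ∀ i, (∑ s ∈ Finset.range t, ∑ j, (P ^ s) i j * ⟪g j (t - 1 - s), a⟫)
      ≤ (n : ℝ) ^ 2 * L / (1 - p) + L := by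
    intro i
    have h1 : (∑ s ∈ Finset.range t, ∑ j, (P ^ s) i j * ⟪g j (t - 1 - s), a⟫)
        ≤ ∑ s ∈ Finset.range t, ∑ j, (P ^ s) i j * L := by
      refine Finset.sum_le_sum fun s _ => Finset.sum_le_sum fun j _ => ?_
      exact mul_le_mul_of_nonneg_left (hga j _) (hPpownn s i j)
    refine h1.trans ?_
    rw [Finset.range_eq_Ico, Finset.sum_eq_sum_Ico_succ_bot ht]
    have h00 : (∑ j, (P ^ 0) i j * L) = L := by
      simp [Matrix.one_apply]
    rw [h00]
    have h2 : (∑ s ∈ Finset.Ico 1 t, ∑ j, (P ^ s) i j * L)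
        ≤ ∑ s ∈ Finset.Ico 1 t, (n : ℝ) * (p ^ s * L) := by
      refine Finset.sum_le_sum fun s hs => ?_
      have hs1 : 1 ≤ s := (Finset.mem_Ico.mp hs).1
      calc (∑ j, (P ^ s) i j * L) ≤ ∑ j : Fin n, p ^ s * L :=
            Finset.sum_le_sum fun j _ =>
              mul_le_mul_of_nonneg_right (hPpow s hs1 i j) hL
        _ = (n : ℝ) * (p ^ s * L) := by
            rw [Finset.sum_const, card_univ, Fintype.card_fin, nsmul_eq_mul]
    have h3 : (∑ s ∈ Finset.Ico 1 t, (n : ℝ) * (p ^ s * L))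
        ≤ (n : ℝ) ^ 2 * L / (1 - p) := by
      have hsum : (∑ s ∈ Finset.Ico 1 t, p ^ s) ≤ 1 / (1 - p) := by
        calc (∑ s ∈ Finset.Ico 1 t, p ^ s) ≤ ∑ s ∈ Finset.range t, p ^ s := by
              rw [Finset.range_eq_Ico]
              refine Finset.sum_le_sum_of_subset_of_nonneg
                (Finset.Ico_subset_Ico (by omega) le_rfl) fun s _ _ => by positivity
          _ ≤ 1 / (1 - p) := by
              rw [geom_sum_eq (by linarith : p ≠ 1)]
              have heq : (p ^ t - 1) / (p - 1) = (1 - p ^ t) / (1 - p) := by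
                rw [← neg_div_neg_eq]; ring_nf
              rw [heq]
              gcongr
              all_goals first | linarith | nlinarith [pow_pos hp0 t]
      calc (∑ s ∈ Finset.Ico 1 t, (n : ℝ) * (p ^ s * L))
          = (n : ℝ) * L * ∑ s ∈ Finset.Ico 1 t, p ^ s := by
            rw [Finset.mul_sum]; refine Finset.sum_congr rfl fun s _ => by ring
        _ ≤ (n : ℝ) * L * (1 / (1 - p)) := by
            apply mul_le_mul_of_nonneg_left hsum (by positivity)
        _ ≤ (n : ℝ) ^ 2 * L / (1 - p) := by
            rw [div_eq_mul_one_div ((n:ℝ)^2 * L) (1-p)]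
            have hn1 : (1:ℝ) ≤ (n:ℝ) := by exact_mod_cast hn
            have h1d : 0 ≤ 1 / (1 - p) := by positivity
            have hnn : (n : ℝ) ≤ (n : ℝ) ^ 2 := by nlinarith
            exact mul_le_mul_of_nonneg_right (mul_le_mul_of_nonneg_right hnn hL) h1d
    linarith
  calc (∑ i, π i * ∑ s ∈ Finset.range t, ∑ j, (P ^ s) i j * ⟪g j (t - 1 - s), a⟫)
      ≤ ∑ i, π i * ((n : ℝ) ^ 2 * L / (1 - p) + L) :=
        Finset.sum_le_sum fun i _ => mul_le_mul_of_nonneg_left (hterm i) (hπ0 i).le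
    _ = (n : ℝ) ^ 2 * L / (1 - p) + L := by rw [← Finset.sum_mul, hπsum, one_mul]
end

section
/- (Network dynamic regret bound for D-ODWDA.) Let n ≥ 1, T ≥ 1, β > 0, and α = β/T. Let P ∈ ℝ^{n×n} be row-stochastic with stationary distribution π ∈ (0,1)^n (π = πP, Σ_i π_i = 1), and suppose there exist γ ∈ (0,1) and an integer ν ≥ 1 such that |(P^k)_{ij} − π_j| ≤ γ^{⌊k/ν⌋} for all integers k ≥ 1 and all i,j. Let X ⊆ ℝ^m be nonempty, compact, and convex, and let ψ: ℝ^m → ℝ be 1-strongly convex with respect to ‖·‖. For t = 1,…,T+1 and i = 1,…,n, let f_{i,t}: ℝ^m → ℝ be convex and differentiable with ‖∇f_{i,t}(x)‖_* ≤ L for all x ∈ X, and set f_t(x) = (1/n)Σ_{i=1}^n f_{i,t}(x). Generate iterates by y_{i,0} = 0, x_{i,0} ∈ X, y_{i,t+1} = Σ_{j=1}^n P_{ij} y_{j,t} + ∇f_{i,t}(x_{i,t}), and x_{i,t+1} = Π(y_{i,t+1}, α), and set ȳ_t = Σ_{i=1}^n π_i y_{i,t}. For each t = 1,…,T+1 let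 x*_t ∈ X be a minimizer of f_t over X, and suppose: (i) there is D ≥ 0 with ‖ȳ_t‖_* ≤ D for all t = 1,…,T; (ii) there is Y ≥ 0 such that for every i and every t = 2,…,T+1 there exists y*_{i,t} ∈ ℝ^m with x*_t = Π(y*_{i,t}, α) and ‖y*_{i,t}‖_* ≤ Y. Then the network dynamic regret R_T = Σ_{t=1}^T ((1/n)Σ_{i=1}^n f_{i,t}(x_{i,t}) − f_t(x*_t)) satisfies R_T ≤ βL²(n/(γ(1 − γ^{1/ν})) + 2) + βL(D + Y) + L·V_T, where V_T = Σ_{t=1}^T ‖x*_{t+1} − x*_t‖. -/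
open Finset
open scoped RealInnerProductSpace BigOperators

namespace DODWDA

variable {m : ℕ}

local notation "E" => EuclideanSpace ℝ (Fin m)

section NormBasics
variable (N : EuclideanSpace ℝ (Fin m) → ℝ)
  (hNtri : ∀ a b, N (a + b) ≤ N a + N b)
  (hNsmul : ∀ (c : ℝ) (a : EuclideanSpace ℝ (Fin m)), N (c • a) = |c| * N a)
  (hNdef : ∀ a, N a = 0 ↔ a = 0)

include hNsmul in
theorem N_neg (a : E) : N (-a) = N a := by
  have := hNsmul (-1) a
  simpa using this

include hNdef in
theorem N_zero : N 0 = 0 := (hNdef 0).2 rfl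

include hNtri hNsmul hNdef in
theorem N_nonneg (a : E) : 0 ≤ N a := by
  have h := hNtri a (-a)
  rw [add_neg_cancel, N_zero N hNdef, N_neg N hNsmul] at h
  linarith

include hNtri hNdef in
theorem N_sum_le {ι : Type*} (s : Finset ι) (v : ι → E) :
    N (∑ i ∈ s, v i) ≤ ∑ i ∈ s, N (v i) := by
  classical
  induction s using Finset.induction_on with
  | empty => simp [N_zero N hNdef]
  | insert _ _ hx ih =>
      rename_i a s
      rw [Finset.sum_insert hx, Finset.sum_insert hx]
      exact (hNtri _ _).trans (by linarith)

end NormBasics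

theorem coord_le_norm (a : E) (i : Fin m) : |a i| ≤ ‖a‖ := by
  have h := abs_real_inner_le_norm (EuclideanSpace.single i (1:ℝ)) a
  rw [EuclideanSpace.inner_single_left] at h
  simpa [EuclideanSpace.norm_single] using h

theorem N_lip (N : E → ℝ)
    (hNtri : ∀ a b, N (a + b) ≤ N a + N b)
    (hNsmul : ∀ (c : ℝ) (a : E), N (c • a) = |c| * N a)
    (hNdef : ∀ a, N a = 0 ↔ a = 0) :
    ∃ K : ℝ, 0 ≤ K ∧ ∀ a : E, N a ≤ K * ‖a‖ := by
  classical
  refine ⟨∑ i : Fin m, N (EuclideanSpace.single i (1:ℝ)), ?_, ?_⟩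
  · exact Finset.sum_nonneg fun i _ => N_nonneg N hNtri hNsmul hNdef _
  · intro a
    have hrepr : a = ∑ i : Fin m, a i • EuclideanSpace.single i (1:ℝ) := by
      ext j
      rw [WithLp.ofLp_sum, Finset.sum_apply]
      simp [EuclideanSpace.single_apply, PiLp.smul_apply]
    calc N a = N (∑ i : Fin m, a i • EuclideanSpace.single i (1:ℝ)) := by rw [← hrepr]
      _ ≤ ∑ i : Fin m, N (a i • EuclideanSpace.single i (1:ℝ)) :=
          N_sum_le N hNtri hNdef _ _
      _ ≤ ∑ i : Fin m, N (EuclideanSpace.single i (1:ℝ)) * ‖a‖ := by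
          refine Finset.sum_le_sum fun i _ => ?_
          rw [hNsmul, mul_comm (N _) ‖a‖]
          exact mul_le_mul_of_nonneg_right (coord_le_norm a i)
            (N_nonneg N hNtri hNsmul hNdef _)
      _ = (∑ i : Fin m, N (EuclideanSpace.single i (1:ℝ))) * ‖a‖ := by
          rw [Finset.sum_mul]

/-- Norm lower bound: there is `c > 0` with `c * ‖a‖ ≤ N a`. -/
theorem N_lower (N : E → ℝ)
    (hNtri : ∀ a b, N (a + b) ≤ N a + N b)
    (hNsmul : ∀ (c : ℝ) (a : E), N (c • a) = |c| * N a)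
    (hNdef : ∀ a, N a = 0 ↔ a = 0) :
    ∃ c : ℝ, 0 < c ∧ ∀ a : E, c * ‖a‖ ≤ N a := by
  classical
  by_cases hm : ∃ a : E, a ≠ 0
  · obtain ⟨a0, ha0⟩ := hm
    -- N is continuous
    obtain ⟨K, hK0, hK⟩ := N_lip N hNtri hNsmul hNdef
    have hcont : Continuous N := by
      have : ∀ a b : E, |N a - N b| ≤ K * ‖a - b‖ := by
        intro a b
        have h1 : N a ≤ N b + N (a - b) := by
          have := hNtri b (a - b); simpa using this
        have h2 : N b ≤ N a + N (a - b) := by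
          have := hNtri a (b - a)
          have hnb : N (b - a) = N (a - b) := by
            rw [← N_neg N hNsmul (a - b)]; congr 1; abel
          rw [hnb] at this; simpa using this
        have := hK (a - b)
        rw [abs_sub_le_iff]
        constructor <;> linarith
      have : LipschitzWith (Real.toNNReal K) N := by
        intro a b
        rw [edist_dist, edist_dist]
        have hd : dist (N a) (N b) ≤ K * dist a b := by
          rw [Real.dist_eq, dist_eq_norm]; exact this a b
        calc ENNReal.ofReal (dist (N a) (N b)) ≤ ENNReal.ofReal (K * dist a b) :=
              ENNReal.ofReal_le_ofReal hd
          _ ≤ (Real.toNNReal K) * ENNReal.ofReal (dist a b) := by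
              rw [ENNReal.ofReal_mul hK0]
              simp [ENNReal.ofReal]
      exact this.continuous
    have hsne : (Metric.sphere (0:E) 1).Nonempty := ⟨‖a0‖⁻¹ • a0, by
      simp [norm_smul, norm_ne_zero_iff.mpr ha0,
        inv_mul_cancel₀ (norm_ne_zero_iff.mpr ha0)]⟩
    obtain ⟨z, hz, hzmin⟩ := (isCompact_sphere (0:E) 1).exists_isMinOn hsne
      hcont.continuousOn
    have hz1 : ‖z‖ = 1 := by simpa using hz
    have hzne : z ≠ 0 := by intro h; rw [h] at hz1; simp at hz1
    have hc0 : 0 < N z := by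
      rcases lt_or_eq_of_le (N_nonneg N hNtri hNsmul hNdef z) with h | h
      · exact h
      · exact absurd ((hNdef z).1 h.symm) hzne
    refine ⟨N z, hc0, fun a => ?_⟩
    by_cases ha : a = 0
    · simp [ha, N_zero N hNdef]
    · have hna : (0:ℝ) < ‖a‖ := norm_pos_iff.mpr ha
      have hmem : ‖a‖⁻¹ • a ∈ Metric.sphere (0:E) 1 := by
        simp [norm_smul, abs_of_pos (inv_pos.mpr hna), inv_mul_cancel₀ hna.ne']
      have hle : N z ≤ N (‖a‖⁻¹ • a) := hzmin hmem
      have heq : N (‖a‖⁻¹ • a) = ‖a‖⁻¹ * N a := by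
        rw [hNsmul, abs_of_pos (inv_pos.mpr hna)]
      rw [heq] at hle
      calc N z * ‖a‖ ≤ (‖a‖⁻¹ * N a) * ‖a‖ :=
            mul_le_mul_of_nonneg_right hle hna.le
        _ = N a := by field_simp
  · push_neg at hm
    refine ⟨1, one_pos, fun a => ?_⟩
    rw [hm a]
    simp [N_zero N hNdef]

section Dual
variable (N : EuclideanSpace ℝ (Fin m) → ℝ)
  (hNtri : ∀ a b, N (a + b) ≤ N a + N b)
  (hNsmul : ∀ (c : ℝ) (a : EuclideanSpace ℝ (Fin m)), N (c • a) = |c| * N a)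
  (hNdef : ∀ a, N a = 0 ↔ a = 0)
  (Nd : EuclideanSpace ℝ (Fin m) → ℝ)
  (hNd : ∀ v, Nd v = sSup {r : ℝ | ∃ a, N a ≤ 1 ∧ r = ⟪v, a⟫})

include hNdef in
theorem S_nonempty (v : E) : {r : ℝ | ∃ a, N a ≤ 1 ∧ r = ⟪v, a⟫}.Nonempty :=
  ⟨0, 0, by simp [N_zero N hNdef], by simp⟩

include hNtri hNsmul hNdef in
theorem S_bdd (v : E) : BddAbove {r : ℝ | ∃ a, N a ≤ 1 ∧ r = ⟪v, a⟫} := by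
  obtain ⟨c, hc0, hc⟩ := N_lower N hNtri hNsmul hNdef
  refine ⟨‖v‖ * c⁻¹, fun r hr => ?_⟩
  obtain ⟨a, ha, rfl⟩ := hr
  have h1 : ‖a‖ ≤ c⁻¹ := by
    have h := (hc a).trans ha
    calc ‖a‖ = c⁻¹ * (c * ‖a‖) := by field_simp
      _ ≤ c⁻¹ * 1 := mul_le_mul_of_nonneg_left h (inv_pos.mpr hc0).le
      _ = c⁻¹ := mul_one _
  calc ⟪v, a⟫ ≤ ‖v‖ * ‖a‖ := real_inner_le_norm v a
    _ ≤ ‖v‖ * c⁻¹ := mul_le_mul_of_nonneg_left h1 (norm_nonneg v)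


include hNtri hNsmul hNdef hNd in
theorem inner_le_Nd {v a : E} (ha : N a ≤ 1) : ⟪v, a⟫ ≤ Nd v := by
  rw [hNd]
  exact le_csSup (S_bdd N hNtri hNsmul hNdef v) ⟨a, ha, rfl⟩

include hNdef hNd in
theorem Nd_le {v : E} {C : ℝ} (h : ∀ a, N a ≤ 1 → ⟪v, a⟫ ≤ C) : Nd v ≤ C := by
  rw [hNd]
  refine csSup_le (S_nonempty N hNdef v) ?_
  rintro r ⟨a, ha, rfl⟩
  exact h a ha

include hNtri hNsmul hNdef hNd in
theorem Nd_nonneg (v : E) : 0 ≤ Nd v := by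
  have := inner_le_Nd N hNtri hNsmul hNdef Nd hNd
    (v := v) (a := 0) (by simp [N_zero N hNdef])
  simpa using this

include hNtri hNsmul hNdef hNd in
theorem abs_inner_le_Nd {v a : E} (ha : N a ≤ 1) : |⟪v, a⟫| ≤ Nd v := by
  rw [abs_le]
  constructor
  · have hna : N (-a) ≤ 1 := by rw [N_neg N hNsmul]; exact ha
    have := inner_le_Nd N hNtri hNsmul hNdef Nd hNd (v := v) hna
    rw [inner_neg_right] at this
    linarith
  · exact inner_le_Nd N hNtri hNsmul hNdef Nd hNd ha

include hNtri hNsmul hNdef hNd in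
/-- Generalized Cauchy–Schwarz for the dual norm. -/
theorem inner_le_Nd_mul_N (v w : E) : ⟪v, w⟫ ≤ Nd v * N w := by
  by_cases hw : N w = 0
  · have hw' : w = 0 := (hNdef w).1 hw
    subst hw'
    rw [hw]
    simp
  · have hw0 : 0 < N w := lt_of_le_of_ne (N_nonneg N hNtri hNsmul hNdef w) (Ne.symm hw)
    have ha : N ((N w)⁻¹ • w) ≤ 1 := by
      rw [hNsmul, abs_of_pos (inv_pos.mpr hw0), inv_mul_cancel₀ hw]
    have := inner_le_Nd N hNtri hNsmul hNdef Nd hNd (v := v) ha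
    rw [real_inner_smul_right] at this
    calc ⟪v, w⟫ = ((N w)⁻¹ * ⟪v, w⟫) * N w := by field_simp
      _ ≤ Nd v * N w := mul_le_mul_of_nonneg_right this hw0.le

include hNtri hNsmul hNdef hNd in
theorem Nd_add_le (u v : E) : Nd (u + v) ≤ Nd u + Nd v := by
  refine Nd_le N hNdef Nd hNd fun a ha => ?_
  rw [inner_add_left]
  exact add_le_add (inner_le_Nd N hNtri hNsmul hNdef Nd hNd ha)
    (inner_le_Nd N hNtri hNsmul hNdef Nd hNd ha)

include hNtri hNsmul hNdef hNd in
theorem Nd_neg (v : E) : Nd (-v) = Nd v := by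
  have key : ∀ w : E, Nd (-w) ≤ Nd w := by
    intro w
    refine Nd_le N hNdef Nd hNd fun a ha => ?_
    have hna : N (-a) ≤ 1 := by rw [N_neg N hNsmul]; exact ha
    have := inner_le_Nd N hNtri hNsmul hNdef Nd hNd (v := w) hna
    rw [inner_neg_left, inner_neg_right] at *
    linarith
  have h2 := key (-v)
  rw [neg_neg] at h2
  exact le_antisymm (key v) h2

include hNtri hNsmul hNdef hNd in
/-- Dual norm bound for a finite linear combination. -/
theorem Nd_sum_smul_le {ι : Type*} (s : Finset ι) (c : ι → ℝ) (v : ι → E) (L : ℝ)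
    (hL : ∀ i ∈ s, Nd (v i) ≤ L) :
    Nd (∑ i ∈ s, c i • v i) ≤ ∑ i ∈ s, |c i| * L := by
  refine Nd_le N hNdef Nd hNd fun a ha => ?_
  rw [sum_inner]
  refine Finset.sum_le_sum fun i hi => ?_
  rw [real_inner_smul_left]
  calc c i * ⟪v i, a⟫ ≤ |c i| * |⟪v i, a⟫| := by
        rw [← abs_mul]; exact le_abs_self _
    _ ≤ |c i| * L := mul_le_mul_of_nonneg_left
        ((abs_inner_le_Nd N hNtri hNsmul hNdef Nd hNd ha).trans (hL i hi)) (abs_nonneg _)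

end Dual

section Proj
variable (N : EuclideanSpace ℝ (Fin m) → ℝ)
  (hNtri : ∀ a b, N (a + b) ≤ N a + N b)
  (hNsmul : ∀ (c : ℝ) (a : EuclideanSpace ℝ (Fin m)), N (c • a) = |c| * N a)
  (hNdef : ∀ a, N a = 0 ↔ a = 0)
  (Nd : EuclideanSpace ℝ (Fin m) → ℝ)
  (hNd : ∀ v, Nd v = sSup {r : ℝ | ∃ a, N a ≤ 1 ∧ r = ⟪v, a⟫})
  (X : Set (EuclideanSpace ℝ (Fin m))) (hXcv : Convex ℝ X)
  (ψ : EuclideanSpace ℝ (Fin m) → ℝ)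
  (hψ : ∀ (a b : EuclideanSpace ℝ (Fin m)) (θ : ℝ), 0 ≤ θ → θ ≤ 1 →
    ψ (θ • a + (1 - θ) • b) ≤ θ * ψ a + (1 - θ) * ψ b - θ * (1 - θ) / 2 * (N (a - b)) ^ 2)
  (α : ℝ) (hα0 : 0 < α)
  (Proj : EuclideanSpace ℝ (Fin m) → EuclideanSpace ℝ (Fin m))
  (hProjX : ∀ z, Proj z ∈ X)
  (hProjMin : ∀ z, ∀ u ∈ X,
    ⟪z, Proj z⟫ + (1 / α) * ψ (Proj z) ≤ ⟪z, u⟫ + (1 / α) * ψ u)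

include hNtri hNsmul hNdef hXcv hψ hα0 hProjX hProjMin in
theorem proj_strong (z : EuclideanSpace ℝ (Fin m)) (u' : EuclideanSpace ℝ (Fin m))
    (hu' : u' ∈ X) :
    ⟪z, Proj z⟫ + (1 / α) * ψ (Proj z) + (N (Proj z - u')) ^ 2 / (2 * α)
      ≤ ⟪z, u'⟫ + (1 / α) * ψ u' := by
  set u := Proj z with hu
  have hd0 : 0 ≤ ⟪z, u'⟫ + (1 / α) * ψ u' - (⟪z, u⟫ + (1 / α) * ψ u) := by
    have := hProjMin z u' hu'
    linarith
  have hc0 : 0 ≤ (N (u - u')) ^ 2 / (2 * α) :=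
    div_nonneg (sq_nonneg _) (by linarith)
  -- key: for all θ ∈ (0,1), (1-θ) * c ≤ d
  have key : ∀ θ : ℝ, 0 < θ → θ < 1 →
      (1 - θ) * ((N (u - u')) ^ 2 / (2 * α))
        ≤ ⟪z, u'⟫ + (1 / α) * ψ u' - (⟪z, u⟫ + (1 / α) * ψ u) := by
    intro θ hθ0 hθ1
    have hw : θ • u' + (1 - θ) • u ∈ X := hXcv hu' (hProjX z) hθ0.le (by linarith)
      (by ring)
    have hmin := hProjMin z _ hw
    have hψw := hψ u' u θ hθ0.le hθ1.le
    have hNsym : N (u' - u) = N (u - u') := by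
      rw [← N_neg N hNsmul (u - u')]; congr 1; abel
    rw [hNsym] at hψw
    have hinner : ⟪z, θ • u' + (1 - θ) • u⟫ = θ * ⟪z, u'⟫ + (1 - θ) * ⟪z, u⟫ := by
      rw [inner_add_right, real_inner_smul_right, real_inner_smul_right]
    rw [hinner] at hmin
    have hαinv : 0 < (1 : ℝ) / α := by positivity
    -- from hmin and hψw:
    have h1 : ⟪z, u⟫ + (1 / α) * ψ u ≤ θ * ⟪z, u'⟫ + (1 - θ) * ⟪z, u⟫
        + (1 / α) * (θ * ψ u' + (1 - θ) * ψ u - θ * (1 - θ) / 2 * (N (u - u')) ^ 2) := by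
      refine hmin.trans ?_
      have := mul_le_mul_of_nonneg_left hψw hαinv.le
      linarith
    -- rearrange: θ * (F u + (1-θ) c) ≤ θ * F u'
    have h2 : θ * ((⟪z, u⟫ + (1 / α) * ψ u) + (1 - θ) * ((N (u - u')) ^ 2 / (2 * α)))
        ≤ θ * (⟪z, u'⟫ + (1 / α) * ψ u') := by
      have e : θ * (⟪z, u'⟫ + (1 / α) * ψ u')
          = θ * ⟪z, u'⟫ + (1 - θ) * ⟪z, u⟫
            + (1 / α) * (θ * ψ u' + (1 - θ) * ψ u - θ * (1 - θ) / 2 * (N (u - u')) ^ 2)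
            - (1 - θ) * (⟪z, u⟫ + (1 / α) * ψ u)
            + θ * (1 - θ) / 2 * (1 / α) * (N (u - u')) ^ 2 := by ring
      rw [e]
      have e2 : θ * ((⟪z, u⟫ + (1 / α) * ψ u) + (1 - θ) * ((N (u - u')) ^ 2 / (2 * α)))
          = θ * (⟪z, u⟫ + (1 / α) * ψ u)
            + θ * (1 - θ) / 2 * (1 / α) * (N (u - u')) ^ 2 := by
        field_simp
      rw [e2]
      linarith
    have h3 := le_of_mul_le_mul_left h2 hθ0
    linarith
  -- pass to the limit θ → 0
  have final : (N (u - u')) ^ 2 / (2 * α)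
      ≤ ⟪z, u'⟫ + (1 / α) * ψ u' - (⟪z, u⟫ + (1 / α) * ψ u) := by
    set c := (N (u - u')) ^ 2 / (2 * α)
    set d := ⟪z, u'⟫ + (1 / α) * ψ u' - (⟪z, u⟫ + (1 / α) * ψ u)
    refine le_of_forall_pos_le_add fun ε hε => ?_
    rcases le_or_gt c ε with h | h
    · linarith
    · have hc0' : 0 < c := lt_trans hε h
      have hθ1 : ε / c < 1 := (div_lt_one hc0').mpr h
      have hθ0 : 0 < ε / c := div_pos hε hc0'
      have := key (ε / c) hθ0 hθ1
      have e : (1 - ε / c) * c = c - ε := by field_simp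
      rw [e] at this
      linarith
  linarith

include hNtri hNsmul hNdef hNd hXcv hψ hα0 hProjX hProjMin in
theorem proj_lipschitz (z z' : EuclideanSpace ℝ (Fin m)) :
    N (Proj z - Proj z') ≤ α * Nd (z - z') := by
  set u := Proj z
  set u' := Proj z'
  have h1 := proj_strong N hNtri hNsmul hNdef X hXcv ψ hψ α hα0 Proj hProjX hProjMin
    z u' (hProjX z')
  have h2 := proj_strong N hNtri hNsmul hNdef X hXcv ψ hψ α hα0 Proj hProjX hProjMin
    z' u (hProjX z)
  have hNsym : N (u' - u) = N (u - u') := by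
    rw [← N_neg N hNsmul (u - u')]; congr 1; abel
  rw [hNsym] at h2
  have hsum : (N (u - u')) ^ 2 / α ≤ ⟪z, u'⟫ - ⟪z, u⟫ + ⟪z', u⟫ - ⟪z', u'⟫ := by
    have e : (N (u - u')) ^ 2 / (2 * α) + (N (u - u')) ^ 2 / (2 * α)
        = (N (u - u')) ^ 2 / α := by field_simp; ring
    linarith
  have hinner : ⟪z, u'⟫ - ⟪z, u⟫ + ⟪z', u⟫ - ⟪z', u'⟫ = ⟪z - z', u' - u⟫ := by
    rw [inner_sub_left, inner_sub_right, inner_sub_right]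
    ring
  rw [hinner] at hsum
  have hCS : ⟪z - z', u' - u⟫ ≤ Nd (z - z') * N (u - u') := by
    have := inner_le_Nd_mul_N N hNtri hNsmul hNdef Nd hNd (z - z') (u' - u)
    rw [hNsym] at this
    exact this
  by_cases hN0 : N (u - u') = 0
  · rw [hN0]
    exact mul_nonneg hα0.le (Nd_nonneg N hNtri hNsmul hNdef Nd hNd _)
  · have hNpos : 0 < N (u - u') :=
      lt_of_le_of_ne (N_nonneg N hNtri hNsmul hNdef _) (Ne.symm hN0)
    have : (N (u - u')) ^ 2 / α ≤ Nd (z - z') * N (u - u') := hsum.trans hCS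
    rw [div_le_iff₀ hα0] at this
    -- N² ≤ Nd * N * α  ⇒  N ≤ α * Nd
    have := le_of_mul_le_mul_right (by nlinarith : N (u - u') * N (u - u')
        ≤ (α * Nd (z - z')) * N (u - u')) hNpos
    exact this

end Proj

section Network
variable {n : ℕ}

theorem y_closed_form (P : Matrix (Fin n) (Fin n) ℝ)
    (g : Fin n → ℕ → EuclideanSpace ℝ (Fin m))
    (y : Fin n → ℕ → EuclideanSpace ℝ (Fin m))
    (hy0 : ∀ i, y i 0 = 0)
    (hyrec : ∀ i t, y i (t + 1) = (∑ j, P i j • y j t) + g i t) :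
    ∀ t i, y i t = ∑ s ∈ range t, ∑ j, ((P ^ (t - 1 - s)) i j) • g j s := by
  intro t
  induction t with
  | zero => intro i; simp [hy0]
  | succ t ih =>
      intro i
      rw [hyrec]
      have step1 : (∑ j, P i j • y j t)
          = ∑ s ∈ range t, ∑ k, ((P ^ (t - s)) i k) • g k s := by
        calc ∑ j, P i j • y j t
            = ∑ j, ∑ s ∈ range t, ∑ k, (P i j * (P ^ (t - 1 - s)) j k) • g k s := by
              refine Finset.sum_congr rfl fun j _ => ?_
              rw [ih j, Finset.smul_sum]
              refine Finset.sum_congr rfl fun s _ => ?_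
              rw [Finset.smul_sum]
              refine Finset.sum_congr rfl fun k _ => ?_
              rw [smul_smul]
          _ = ∑ s ∈ range t, ∑ j, ∑ k, (P i j * (P ^ (t - 1 - s)) j k) • g k s :=
              Finset.sum_comm
          _ = ∑ s ∈ range t, ∑ k, ∑ j, (P i j * (P ^ (t - 1 - s)) j k) • g k s := by
              refine Finset.sum_congr rfl fun s _ => Finset.sum_comm
          _ = ∑ s ∈ range t, ∑ k, ((P ^ (t - s)) i k) • g k s := by
              refine Finset.sum_congr rfl fun s hs => Finset.sum_congr rfl fun k _ => ?_
              rw [← Finset.sum_smul]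
              congr 1
              have hst : s < t := Finset.mem_range.mp hs
              have hpow : P ^ (t - s) = P * P ^ (t - 1 - s) := by
                have : t - s = (t - 1 - s) + 1 := by omega
                rw [this, pow_succ']
              rw [hpow, Matrix.mul_apply]
      rw [step1, Finset.sum_range_succ]
      simp only [Nat.add_sub_cancel]
      congr 1
      simp [Nat.sub_self, Matrix.one_apply]

theorem pi_pow_stat (P : Matrix (Fin n) (Fin n) ℝ) (π : Fin n → ℝ)
    (hπstat : ∀ j, ∑ i, π i * P i j = π j) :
    ∀ (k : ℕ) (j : Fin n), ∑ i, π i * (P ^ k) i j = π j := by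
  intro k
  induction k with
  | zero => intro j; simp [Matrix.one_apply, mul_ite]
  | succ k ih =>
      intro j
      rw [pow_succ]
      calc ∑ i, π i * (P ^ k * P) i j
          = ∑ i, ∑ l, π i * ((P ^ k) i l * P l j) := by
            refine Finset.sum_congr rfl fun i _ => ?_
            rw [Matrix.mul_apply, Finset.mul_sum]
        _ = ∑ l, (∑ i, π i * (P ^ k) i l) * P l j := by
            rw [Finset.sum_comm]
            refine Finset.sum_congr rfl fun l _ => ?_
            rw [Finset.sum_mul]
            refine Finset.sum_congr rfl fun i _ => by ring
        _ = ∑ l, π l * P l j := by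
            refine Finset.sum_congr rfl fun l _ => by rw [ih l]
        _ = π j := hπstat j

theorem mixing_sum_le (γ : ℝ) (hγ0 : 0 < γ) (hγ1 : γ < 1) (ν : ℕ) (hν : 1 ≤ ν) (t : ℕ) :
    ∑ k ∈ Ico 1 t, γ ^ (k / ν) ≤ 1 / (γ * (1 - γ ^ ((1 : ℝ) / (ν : ℝ)))) := by
  set q : ℝ := γ ^ ((1 : ℝ) / (ν : ℝ)) with hq
  have hν0 : (0 : ℝ) < (ν : ℝ) := by exact_mod_cast hν
  have hq0 : 0 < q := Real.rpow_pos_of_pos hγ0 _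
  have hq1 : q < 1 := Real.rpow_lt_one hγ0.le hγ1 (by positivity)
  -- termwise bound: γ ^ (k / ν) ≤ q ^ k / γ
  have hterm : ∀ k : ℕ, γ ^ (k / ν) ≤ q ^ k / γ := by
    intro k
    have hfloor : (k : ℝ) / (ν : ℝ) - 1 ≤ ((k / ν : ℕ) : ℝ) := by
      have h1 := Nat.div_add_mod k ν
      have h2 : k % ν < ν := Nat.mod_lt k (by omega)
      have h3 : k < ν * (k / ν) + ν := by omega
      have h4 : (k : ℝ) < (ν : ℝ) * ((k / ν : ℕ) : ℝ) + (ν : ℝ) := by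
        exact_mod_cast h3
      rw [sub_le_iff_le_add, div_le_iff₀ hν0]
      nlinarith
    have e1 : (γ : ℝ) ^ (k / ν) = γ ^ (((k / ν : ℕ) : ℝ)) := by
      rw [Real.rpow_natCast]
    have e2 : γ ^ (((k / ν : ℕ) : ℝ)) ≤ γ ^ ((k : ℝ) / (ν : ℝ) - 1) :=
      Real.rpow_le_rpow_of_exponent_ge hγ0 hγ1.le hfloor
    have e3 : γ ^ ((k : ℝ) / (ν : ℝ) - 1) = q ^ k / γ := by
      rw [Real.rpow_sub hγ0, Real.rpow_one]
      congr 1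
      have : (k : ℝ) / (ν : ℝ) = ((1 : ℝ) / (ν : ℝ)) * (k : ℝ) := by ring
      rw [this, Real.rpow_mul hγ0.le, ← hq, Real.rpow_natCast]
    rw [e1]
    rw [e3] at e2
    exact e2
  have hgeom : ∑ k ∈ Ico 1 t, q ^ k ≤ 1 / (1 - q) := by
    have hsub : ∑ k ∈ Ico 1 t, q ^ k ≤ ∑ k ∈ range t, q ^ k := by
      refine Finset.sum_le_sum_of_subset_of_nonneg ?_ fun k _ _ => by positivity
      intro k hk
      rw [Finset.mem_range]
      exact (Finset.mem_Ico.mp hk).2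
    have heq : ∑ k ∈ range t, q ^ k = (q ^ t - 1) / (q - 1) := geom_sum_eq hq1.ne t
    have hle : (q ^ t - 1) / (q - 1) ≤ 1 / (1 - q) := by
      have hqt : 0 ≤ q ^ t := by positivity
      have h1q : 0 < 1 - q := by linarith
      have e : (q ^ t - 1) / (q - 1) = (1 - q ^ t) / (1 - q) := by
        rw [← neg_div_neg_eq]
        ring_nf
      rw [e, div_le_div_iff₀ h1q h1q]
      nlinarith
    linarith
  calc ∑ k ∈ Ico 1 t, γ ^ (k / ν) ≤ ∑ k ∈ Ico 1 t, q ^ k / γ :=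
        Finset.sum_le_sum fun k _ => hterm k
    _ = (∑ k ∈ Ico 1 t, q ^ k) / γ := by rw [Finset.sum_div]
    _ ≤ (1 / (1 - q)) / γ := (div_le_div_iff_of_pos_right hγ0).mpr hgeom
    _ = 1 / (γ * (1 - q)) := by
        rw [div_div]
        ring_nf

theorem network_error
    (N : EuclideanSpace ℝ (Fin m) → ℝ)
    (hNtri : ∀ a b, N (a + b) ≤ N a + N b)
    (hNsmul : ∀ (c : ℝ) (a : EuclideanSpace ℝ (Fin m)), N (c • a) = |c| * N a)
    (hNdef : ∀ a, N a = 0 ↔ a = 0)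
    (Nd : EuclideanSpace ℝ (Fin m) → ℝ)
    (hNd : ∀ v, Nd v = sSup {r : ℝ | ∃ a, N a ≤ 1 ∧ r = ⟪v, a⟫})
    (P : Matrix (Fin n) (Fin n) ℝ)
    (π : Fin n → ℝ) (hπ0 : ∀ i, 0 < π i) (hπsum : ∑ i, π i = 1)
    (hπstat : ∀ j, ∑ i, π i * P i j = π j)
    (γ : ℝ) (hγ0 : 0 < γ) (hγ1 : γ < 1) (ν : ℕ) (hν : 1 ≤ ν)
    (hmix : ∀ k : ℕ, 1 ≤ k → ∀ i j, |(P ^ k) i j - π j| ≤ γ ^ (k / ν))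
    (g : Fin n → ℕ → EuclideanSpace ℝ (Fin m))
    (y : Fin n → ℕ → EuclideanSpace ℝ (Fin m))
    (hy0 : ∀ i, y i 0 = 0)
    (hyrec : ∀ i t, y i (t + 1) = (∑ j, P i j • y j t) + g i t)
    (L : ℝ) (hL0 : 0 ≤ L) (t : ℕ) (hLg : ∀ j, ∀ s, s < t → Nd (g j s) ≤ L)
    (i : Fin n) :
    Nd (y i t - ∑ i', π i' • y i' t)
      ≤ L * ((n : ℝ) / (γ * (1 - γ ^ ((1 : ℝ) / (ν : ℝ)))) + 2) := by
  classical
  set q : ℝ := γ ^ ((1 : ℝ) / (ν : ℝ)) with hqdef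
  have hq0 : 0 < q := Real.rpow_pos_of_pos hγ0 _
  have hq1 : q < 1 := Real.rpow_lt_one hγ0.le hγ1
    (by positivity)
  have hcf := y_closed_form P g y hy0 hyrec
  -- error representation
  have herr : y i t - ∑ i', π i' • y i' t
      = ∑ s ∈ range t, ∑ j, ((P ^ (t - 1 - s)) i j - π j) • g j s := by
    have hbar : (∑ i', π i' • y i' t)
        = ∑ s ∈ range t, ∑ j, π j • g j s := by
      calc ∑ i', π i' • y i' t
          = ∑ i', ∑ s ∈ range t, ∑ j, (π i' * (P ^ (t - 1 - s)) i' j) • g j s := by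
            refine Finset.sum_congr rfl fun i' _ => ?_
            rw [hcf t i', Finset.smul_sum]
            refine Finset.sum_congr rfl fun s _ => ?_
            rw [Finset.smul_sum]
            refine Finset.sum_congr rfl fun j _ => by rw [smul_smul]
        _ = ∑ s ∈ range t, ∑ i', ∑ j, (π i' * (P ^ (t - 1 - s)) i' j) • g j s :=
            Finset.sum_comm
        _ = ∑ s ∈ range t, ∑ j, ∑ i', (π i' * (P ^ (t - 1 - s)) i' j) • g j s := by
            exact Finset.sum_congr rfl fun s _ => Finset.sum_comm
        _ = ∑ s ∈ range t, ∑ j, π j • g j s := by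
            refine Finset.sum_congr rfl fun s _ => Finset.sum_congr rfl fun j _ => ?_
            rw [← Finset.sum_smul, pi_pow_stat P π hπstat]
    rw [hcf t i, hbar, ← Finset.sum_sub_distrib]
    refine Finset.sum_congr rfl fun s _ => ?_
    rw [← Finset.sum_sub_distrib]
    refine Finset.sum_congr rfl fun j _ => ?_
    rw [sub_smul]
  rw [herr]
  -- dual norm bound via the product indexing
  have hprod : (∑ s ∈ range t, ∑ j, ((P ^ (t - 1 - s)) i j - π j) • g j s)
      = ∑ p ∈ (range t) ×ˢ (Finset.univ : Finset (Fin n)),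
          ((P ^ (t - 1 - p.1)) i p.2 - π p.2) • g p.2 p.1 := by
    rw [Finset.sum_product]
  rw [hprod]
  have hbd := Nd_sum_smul_le N hNtri hNsmul hNdef Nd hNd
    ((range t) ×ˢ (Finset.univ : Finset (Fin n)))
    (fun p => (P ^ (t - 1 - p.1)) i p.2 - π p.2)
    (fun p => g p.2 p.1) L ?hL
  case hL =>
    rintro ⟨s, j⟩ hp
    exact hLg j s (Finset.mem_range.mp (Finset.mem_product.mp hp).1)
  refine hbd.trans ?_
  have hsplit : ∑ p ∈ (range t) ×ˢ (Finset.univ : Finset (Fin n)),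
        |(P ^ (t - 1 - p.1)) i p.2 - π p.2| * L
      = ∑ s ∈ range t, (∑ j, |(P ^ (t - 1 - s)) i j - π j|) * L := by
    rw [Finset.sum_product]
    refine Finset.sum_congr rfl fun s _ => ?_
    rw [Finset.sum_mul]
  rw [hsplit]
  -- reflect the sum
  have hrefl : ∑ s ∈ range t, (∑ j, |(P ^ (t - 1 - s)) i j - π j|) * L
      = ∑ k ∈ range t, (∑ j, |(P ^ k) i j - π j|) * L := by
    exact Finset.sum_range_reflect (fun k => (∑ j, |(P ^ k) i j - π j|) * L) t
  rw [hrefl]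
  -- split off k = 0 and bound
  have hsum_le : ∑ k ∈ range t, (∑ j, |(P ^ k) i j - π j|)
      ≤ (n : ℝ) / (γ * (1 - q)) + 2 := by
    rcases Nat.eq_zero_or_pos t with ht0 | ht0
    · subst ht0
      simp only [Finset.range_zero, Finset.sum_empty]
      have hpos : 0 < γ * (1 - q) := mul_pos hγ0 (by linarith)
      positivity
    · rw [Finset.range_eq_Ico, Finset.sum_eq_sum_Ico_succ_bot ht0]
      have h0 : ∑ j, |(P ^ 0) i j - π j| ≤ 2 := by
        calc ∑ j, |(P ^ 0) i j - π j| ≤ ∑ j, ((1 : Matrix (Fin n) (Fin n) ℝ) i j + π j) := by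
              refine Finset.sum_le_sum fun j _ => ?_
              rw [pow_zero]
              refine (abs_sub _ _).trans ?_
              rw [abs_of_nonneg (by rw [Matrix.one_apply]; positivity),
                abs_of_nonneg (hπ0 j).le]
          _ = 2 := by
              rw [Finset.sum_add_distrib, hπsum]
              simp [Matrix.one_apply]
              norm_num
      have hk : ∑ k ∈ Ico (0 + 1) t, (∑ j, |(P ^ k) i j - π j|)
          ≤ (n : ℝ) / (γ * (1 - q)) := by
        calc ∑ k ∈ Ico (0 + 1) t, (∑ j, |(P ^ k) i j - π j|)
            ≤ ∑ k ∈ Ico 1 t, (n : ℝ) * γ ^ (k / ν) := by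
              refine Finset.sum_le_sum fun k hk => ?_
              have hk1 : 1 ≤ k := (Finset.mem_Ico.mp hk).1
              calc ∑ j, |(P ^ k) i j - π j| ≤ ∑ _j : Fin n, γ ^ (k / ν) :=
                    Finset.sum_le_sum fun j _ => hmix k hk1 i j
                _ = (n : ℝ) * γ ^ (k / ν) := by
                    rw [Finset.sum_const, Finset.card_univ, Fintype.card_fin,
                      nsmul_eq_mul]
          _ = (n : ℝ) * ∑ k ∈ Ico 1 t, γ ^ (k / ν) := by rw [Finset.mul_sum]
          _ ≤ (n : ℝ) * (1 / (γ * (1 - q))) := by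
              refine mul_le_mul_of_nonneg_left ?_ (by positivity)
              exact mixing_sum_le γ hγ0 hγ1 ν hν t
          _ = (n : ℝ) / (γ * (1 - q)) := by ring
      linarith
  calc ∑ k ∈ range t, (∑ j, |(P ^ k) i j - π j|) * L
      = (∑ k ∈ range t, (∑ j, |(P ^ k) i j - π j|)) * L := by rw [Finset.sum_mul]
    _ ≤ ((n : ℝ) / (γ * (1 - q)) + 2) * L := mul_le_mul_of_nonneg_right hsum_le hL0
    _ = L * ((n : ℝ) / (γ * (1 - q)) + 2) := by ring
end Network

theorem grad_ineq (f : EuclideanSpace ℝ (Fin m) → ℝ)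
    (hconv : ConvexOn ℝ Set.univ f)
    (g a b : EuclideanSpace ℝ (Fin m)) (hg : HasGradientAt f g a) :
    f a + ⟪g, b - a⟫ ≤ f b := by
  set φ : ℝ → ℝ := fun θ => f ((AffineMap.lineMap a b : ℝ →ᵃ[ℝ] _) θ) with hφ
  have hφconv : ConvexOn ℝ Set.univ φ := by
    have := hconv.comp_affineMap (AffineMap.lineMap a b : ℝ →ᵃ[ℝ] _)
    simp only [Set.preimage_univ] at this
    exact this
  have hc : HasDerivAt (fun θ : ℝ => (AffineMap.lineMap a b : ℝ →ᵃ[ℝ] _) θ) (b - a) 0 := by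
    have h := ((hasDerivAt_id (0:ℝ)).smul_const (b - a)).add_const a
    have he : (fun x : ℝ => x • (b - a) + a)
        = fun θ : ℝ => (AffineMap.lineMap a b : ℝ →ᵃ[ℝ] _) θ := by
      funext θ
      simp [AffineMap.lineMap_apply_module]
      module
    rw [← he]
    simpa using h
  have hca : (AffineMap.lineMap a b : ℝ →ᵃ[ℝ] _) (0:ℝ) = a := by
    simp
  have hfd : HasFDerivAt f (InnerProductSpace.toDual ℝ _ g)
      ((AffineMap.lineMap a b : ℝ →ᵃ[ℝ] _) (0:ℝ)) := by
    rw [hca]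
    exact hg.hasFDerivAt
  have hφd : HasDerivAt φ ⟪g, b - a⟫ 0 := by
    have := hfd.comp_hasDerivAt 0 hc
    exact (by simpa [InnerProductSpace.toDual_apply_apply] using this :
      HasDerivAt (f ∘ ⇑(AffineMap.lineMap a b : ℝ →ᵃ[ℝ] _)) ⟪g, b - a⟫ 0)
  have hslope := hφconv.le_slope_of_hasDerivWithinAt_Ioi (Set.mem_univ (0:ℝ))
    (Set.mem_univ (1:ℝ)) one_pos hφd.hasDerivWithinAt
  rw [slope_def_field] at hslope
  have h0 : φ 0 = f a := by rw [hφ]; simp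
  have h1 : φ 1 = f b := by rw [hφ]; simp
  rw [h0, h1] at hslope
  have : ⟪g, b - a⟫ ≤ f b - f a := by
    simpa using hslope
  linarith
end DODWDA


/-- **Theorem 1 (network dynamic regret bound for D-ODWDA).**
Under the stated assumptions on the network matrix `P` (row-stochastic, stationary
distribution `π ∈ (0,1)^n`, geometric mixing with constants `γ ∈ (0,1)` and `ν ≥ 1`),
the decision set `X` (nonempty, compact, convex), the regularizer `ψ` (1-strongly convex
w.r.t. the norm `N` with dual norm `Nd`), the losses `f_{i,t}` (convex, differentiable,
with gradients dual-norm-bounded by `L` on `X`), the D-ODWDA iterates with constant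
stepsize `α = β/T`, a uniform bound `D` on `‖ȳ_t‖_*`, and a bound `Y` on dual
representatives of the round optima `x*_t`, the network dynamic regret satisfies
`R_T ≤ βL²(n/(γ(1 − γ^{1/ν})) + 2) + βL(D + Y) + L·V_T`. -/
theorem dodwda_network_dynamic_regret {m : ℕ} (n T : ℕ) (hn : 1 ≤ n) (hT : 1 ≤ T)
    (β α : ℝ) (hβ : 0 < β) (hα : α = β / T)
    -- `P` is row-stochastic with stationary distribution `π ∈ (0,1)^n`
    (P : Matrix (Fin n) (Fin n) ℝ)
    (hPnn : ∀ i j, 0 ≤ P i j) (hProw : ∀ i, ∑ j, P i j = 1)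
    (π : Fin n → ℝ) (hπ0 : ∀ i, 0 < π i) (hπ1 : ∀ i, π i < 1)
    (hπsum : ∑ i, π i = 1) (hπstat : ∀ j, ∑ i, π i * P i j = π j)
    -- geometric mixing of the matrix powers of `P` (`k / ν` is `⌊k/ν⌋`)
    (γ : ℝ) (hγ0 : 0 < γ) (hγ1 : γ < 1) (ν : ℕ) (hν : 1 ≤ ν)
    (hmix : ∀ k : ℕ, 1 ≤ k → ∀ i j, |(P ^ k) i j - π j| ≤ γ ^ (k / ν))
    -- `X` is nonempty, compact, and convex
    (X : Set (EuclideanSpace ℝ (Fin m)))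
    (hXne : X.Nonempty) (hXcp : IsCompact X) (hXcv : Convex ℝ X)
    -- `N` is a norm on `ℝ^m` and `Nd` its dual norm
    (N : EuclideanSpace ℝ (Fin m) → ℝ)
    (hNtri : ∀ a b, N (a + b) ≤ N a + N b)
    (hNsmul : ∀ (c : ℝ) (a : EuclideanSpace ℝ (Fin m)), N (c • a) = |c| * N a)
    (hNdef : ∀ a, N a = 0 ↔ a = 0)
    (Nd : EuclideanSpace ℝ (Fin m) → ℝ)
    (hNd : ∀ v, Nd v = sSup {r : ℝ | ∃ a, N a ≤ 1 ∧ r = ⟪v, a⟫})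
    -- `ψ` is 1-strongly convex with respect to `N`
    (ψ : EuclideanSpace ℝ (Fin m) → ℝ)
    (hψ : ∀ (a b : EuclideanSpace ℝ (Fin m)) (θ : ℝ), 0 ≤ θ → θ ≤ 1 →
      ψ (θ • a + (1 - θ) • b) ≤ θ * ψ a + (1 - θ) * ψ b - θ * (1 - θ) / 2 * (N (a - b)) ^ 2)
    -- `Proj` is the `ψ`-regularized projection onto `X` with stepsize `α`
    (Proj : EuclideanSpace ℝ (Fin m) → EuclideanSpace ℝ (Fin m))
    (hProjX : ∀ z, Proj z ∈ X)
    (hProjMin : ∀ z, ∀ u ∈ X,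
      ⟪z, Proj z⟫ + (1 / α) * ψ (Proj z) ≤ ⟪z, u⟫ + (1 / α) * ψ u)
    -- the losses: convex, differentiable, with dual-norm-bounded gradients on `X`
    (L : ℝ)
    (f : Fin n → ℕ → EuclideanSpace ℝ (Fin m) → ℝ)
    (grad : Fin n → ℕ → EuclideanSpace ℝ (Fin m) → EuclideanSpace ℝ (Fin m))
    (hconv : ∀ (i : Fin n) (t : ℕ), t ≤ T + 1 → ConvexOn ℝ Set.univ (f i t))
    (hdiff : ∀ (i : Fin n) (t : ℕ), t ≤ T + 1 → ∀ z, HasGradientAt (f i t) (grad i t z) z)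
    (hgradbd : ∀ (i : Fin n) (t : ℕ), t ≤ T + 1 → ∀ z ∈ X, Nd (grad i t z) ≤ L)
    -- the D-ODWDA iterates
    (y x : Fin n → ℕ → EuclideanSpace ℝ (Fin m))
    (hy0 : ∀ i, y i 0 = 0) (hx0 : ∀ i, x i 0 ∈ X)
    (hyrec : ∀ i t, y i (t + 1) = (∑ j, P i j • y j t) + grad i t (x i t))
    (hxrec : ∀ i t, x i (t + 1) = Proj (y i (t + 1)))
    -- the weighted dual average
    (ybar : ℕ → EuclideanSpace ℝ (Fin m))
    (hybar : ∀ t, ybar t = ∑ i, π i • y i t)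
    -- `x*_t` minimizes `f_t = (1/n) Σ_i f_{i,t}` over `X`
    (xstar : ℕ → EuclideanSpace ℝ (Fin m))
    (hxstarX : ∀ t : ℕ, 1 ≤ t → t ≤ T + 1 → xstar t ∈ X)
    (hxstarMin : ∀ t : ℕ, 1 ≤ t → t ≤ T + 1 → ∀ u ∈ X,
      (1 / (n : ℝ)) * ∑ i, f i t (xstar t) ≤ (1 / (n : ℝ)) * ∑ i, f i t u)
    -- (i) a uniform bound on `‖ȳ_t‖_*`
    (D : ℝ) (hD : 0 ≤ D)
    (hybarbd : ∀ t : ℕ, 1 ≤ t → t ≤ T → Nd (ybar t) ≤ D)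
    -- (ii) dual representatives of the round optima, dual-norm-bounded by `Y`
    (Y : ℝ) (hY : 0 ≤ Y)
    (hYstar : ∀ (i : Fin n) (t : ℕ), 2 ≤ t → t ≤ T + 1 →
      ∃ ystar : EuclideanSpace ℝ (Fin m), xstar t = Proj ystar ∧ Nd ystar ≤ Y) :
    -- the network dynamic regret bound
    ∑ t ∈ Icc 1 T,
        ((1 / (n : ℝ)) * ∑ i, f i t (x i t) - (1 / (n : ℝ)) * ∑ i, f i t (xstar t))
      ≤ β * L ^ 2 * ((n : ℝ) / (γ * (1 - γ ^ ((1 : ℝ) / (ν : ℝ)))) + 2)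
        + β * L * (D + Y)
        + L * ∑ t ∈ Icc 1 T, N (xstar (t + 1) - xstar t) := by
  classical
  -- basic facts
  have hT0 : (0:ℝ) < (T:ℝ) := by exact_mod_cast hT
  have hα0 : 0 < α := by rw [hα]; positivity
  have hαT : α * (T:ℝ) = β := by rw [hα]; field_simp
  have hn0 : (0:ℝ) < (n:ℝ) := by exact_mod_cast hn
  obtain ⟨x0, hx0X⟩ := hXne
  have i0 : Fin n := ⟨0, hn⟩
  have hL0 : 0 ≤ L :=
    le_trans (DODWDA.Nd_nonneg N hNtri hNsmul hNdef Nd hNd _)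
      (hgradbd i0 1 (by omega) x0 hx0X)
  set q : ℝ := γ ^ ((1 : ℝ) / (ν : ℝ)) with hqdef
  set C : ℝ := L * ((n : ℝ) / (γ * (1 - q)) + 2) with hCdef
  -- membership of iterates
  have hxX : ∀ (i : Fin n) (t : ℕ), x i t ∈ X := by
    intro i t
    cases t with
    | zero => exact hx0 i
    | succ s => rw [hxrec]; exact hProjX _
  have hxProj : ∀ (i : Fin n) (t : ℕ), 1 ≤ t → x i t = Proj (y i t) := by
    intro i t ht
    cases t with
    | zero => omega
    | succ s => exact hxrec i s
  -- network error bound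
  have hnet : ∀ t : ℕ, t ≤ T → ∀ i, Nd (y i t - ybar t) ≤ C := by
    intro t ht i
    rw [hybar]
    exact DODWDA.network_error N hNtri hNsmul hNdef Nd hNd P π hπ0 hπsum hπstat
      γ hγ0 hγ1 ν hν hmix (fun j s => grad j s (x j s)) y hy0 hyrec L hL0 t
      (fun j s hs => hgradbd j s (by omega) _ (hxX j s)) i
  -- Lipschitz property of the projection
  have hlip : ∀ z z', N (Proj z - Proj z') ≤ α * Nd (z - z') :=
    DODWDA.proj_lipschitz N hNtri hNsmul hNdef Nd hNd X hXcv ψ hψ α hα0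
      Proj hProjX hProjMin
  -- key per-iterate bound
  have key : ∀ t : ℕ, 1 ≤ t → t ≤ T → ∀ i : Fin n,
      f i t (x i t) - f i t (xstar (max t 2)) ≤ α * (L * (C + D + Y)) := by
    intro t ht1 htT i
    have hτ2 : 2 ≤ max t 2 := le_max_right _ _
    have hτT : max t 2 ≤ T + 1 := by omega
    obtain ⟨ystar, hxs, hYs⟩ := hYstar i (max t 2) hτ2 hτT
    have hgi := DODWDA.grad_ineq (f i t) ((hconv i t (by omega)).subset
      (Set.subset_univ _) convex_univ) (grad i t (x i t)) (x i t) (xstar (max t 2))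
      (hdiff i t (by omega) _)
    have hCS := DODWDA.inner_le_Nd_mul_N N hNtri hNsmul hNdef Nd hNd
      (grad i t (x i t)) (x i t - xstar (max t 2))
    have hgL : Nd (grad i t (x i t)) ≤ L := hgradbd i t (by omega) _ (hxX i t)
    have hNnn : 0 ≤ N (x i t - xstar (max t 2)) :=
      DODWDA.N_nonneg N hNtri hNsmul hNdef _
    have hNx : N (x i t - xstar (max t 2)) ≤ α * (C + D + Y) := by
      rw [hxProj i t ht1, hxs]
      refine (hlip (y i t) ystar).trans ?_
      have hdec : y i t - ystar = (y i t - ybar t) + (ybar t + -ystar) := by abel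
      have h1 : Nd (y i t - ystar) ≤ Nd (y i t - ybar t) + (Nd (ybar t) + Nd (-ystar)) := by
        rw [hdec]
        refine (DODWDA.Nd_add_le N hNtri hNsmul hNdef Nd hNd _ _).trans ?_
        exact add_le_add_right (DODWDA.Nd_add_le N hNtri hNsmul hNdef Nd hNd _ _) _
      rw [DODWDA.Nd_neg N hNtri hNsmul hNdef Nd hNd] at h1
      have h2 : Nd (y i t - ystar) ≤ C + D + Y := by
        have := hnet t htT i
        have := hybarbd t ht1 htT
        linarith
      exact mul_le_mul_of_nonneg_left h2 hα0.le
    have hinner : ⟪grad i t (x i t), x i t - xstar (max t 2)⟫ ≤ L * (α * (C + D + Y)) := by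
      refine hCS.trans ?_
      calc Nd (grad i t (x i t)) * N (x i t - xstar (max t 2))
          ≤ L * N (x i t - xstar (max t 2)) := mul_le_mul_of_nonneg_right hgL hNnn
        _ ≤ L * (α * (C + D + Y)) := mul_le_mul_of_nonneg_left hNx hL0
    have : f i t (x i t) - f i t (xstar (max t 2))
        ≤ ⟪grad i t (x i t), x i t - xstar (max t 2)⟫ := by
      have heq : ⟪grad i t (x i t), xstar (max t 2) - x i t⟫
          = -⟪grad i t (x i t), x i t - xstar (max t 2)⟫ := by
        rw [← inner_neg_right]
        congr 1
        abel
      have := hgi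
      rw [heq] at this
      linarith
    calc f i t (x i t) - f i t (xstar (max t 2))
        ≤ ⟪grad i t (x i t), x i t - xstar (max t 2)⟫ := this
      _ ≤ L * (α * (C + D + Y)) := hinner
      _ = α * (L * (C + D + Y)) := by ring
  -- bridge for t = 1
  have bridge : ∀ i : Fin n, f i 1 (xstar 2) - f i 1 (xstar 1)
      ≤ L * N (xstar 2 - xstar 1) := by
    intro i
    have hgi := DODWDA.grad_ineq (f i 1) ((hconv i 1 (by omega)).subset
      (Set.subset_univ _) convex_univ) (grad i 1 (xstar 2)) (xstar 2) (xstar 1)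
      (hdiff i 1 (by omega) _)
    have hCS := DODWDA.inner_le_Nd_mul_N N hNtri hNsmul hNdef Nd hNd
      (grad i 1 (xstar 2)) (xstar 2 - xstar 1)
    have hgL : Nd (grad i 1 (xstar 2)) ≤ L :=
      hgradbd i 1 (by omega) _ (hxstarX 2 (by omega) (by omega))
    have hNnn : 0 ≤ N (xstar 2 - xstar 1) := DODWDA.N_nonneg N hNtri hNsmul hNdef _
    have heq : ⟪grad i 1 (xstar 2), xstar 1 - xstar 2⟫
        = -⟪grad i 1 (xstar 2), xstar 2 - xstar 1⟫ := by
      rw [← inner_neg_right]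
      congr 1
      abel
    rw [heq] at hgi
    have : ⟪grad i 1 (xstar 2), xstar 2 - xstar 1⟫ ≤ L * N (xstar 2 - xstar 1) :=
      hCS.trans (mul_le_mul_of_nonneg_right hgL hNnn)
    linarith
  -- per-round bound
  have perT : ∀ t ∈ Icc 1 T,
      (1 / (n : ℝ)) * ∑ i, f i t (x i t) - (1 / (n : ℝ)) * ∑ i, f i t (xstar t)
        ≤ α * (L * (C + D + Y)) + (if t = 1 then L * N (xstar 2 - xstar 1) else 0) := by
    intro t ht
    obtain ⟨ht1, htT⟩ := Finset.mem_Icc.mp ht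
    have hterm : ∀ i : Fin n, f i t (x i t) - f i t (xstar t)
        ≤ α * (L * (C + D + Y)) + (if t = 1 then L * N (xstar 2 - xstar 1) else 0) := by
      intro i
      rcases eq_or_lt_of_le ht1 with h1 | h2
      · have h1' : t = 1 := h1.symm
        subst h1'
        simp only [eq_self_iff_true, if_true]
        have hk := key 1 le_rfl htT i
        have hb := bridge i
        have hmax : max 1 2 = 2 := by norm_num
        rw [hmax] at hk
        linarith
      · have hmax : max t 2 = t := by omega
        have hk := key t ht1 htT i
        rw [hmax] at hk
        have hne : t ≠ 1 := by omega
        simp only [if_neg hne]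
        linarith
    have havg : (1 / (n : ℝ)) * ∑ i, f i t (x i t)
        - (1 / (n : ℝ)) * ∑ i, f i t (xstar t)
        = (1 / (n : ℝ)) * ∑ i, (f i t (x i t) - f i t (xstar t)) := by
      rw [Finset.sum_sub_distrib, mul_sub]
    rw [havg]
    set B := α * (L * (C + D + Y)) + (if t = 1 then L * N (xstar 2 - xstar 1) else 0)
    calc (1 / (n : ℝ)) * ∑ i, (f i t (x i t) - f i t (xstar t))
        ≤ (1 / (n : ℝ)) * ∑ _i : Fin n, B := by
          refine mul_le_mul_of_nonneg_left ?_ (by positivity)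
          exact Finset.sum_le_sum fun i _ => hterm i
      _ = B := by
          rw [Finset.sum_const, Finset.card_univ, Fintype.card_fin, nsmul_eq_mul]
          field_simp
    -- sum up
  calc ∑ t ∈ Icc 1 T,
        ((1 / (n : ℝ)) * ∑ i, f i t (x i t) - (1 / (n : ℝ)) * ∑ i, f i t (xstar t))
      ≤ ∑ t ∈ Icc 1 T, (α * (L * (C + D + Y))
          + (if t = 1 then L * N (xstar 2 - xstar 1) else 0)) :=
        Finset.sum_le_sum perT
    _ = (T : ℝ) * (α * (L * (C + D + Y))) + L * N (xstar 2 - xstar 1) := by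
        rw [Finset.sum_add_distrib, Finset.sum_const, Nat.card_Icc]
        rw [Finset.sum_ite_eq' (Icc 1 T) 1 (fun _ => L * N (xstar 2 - xstar 1))]
        simp [Finset.mem_Icc, hT]
    _ ≤ β * L ^ 2 * ((n : ℝ) / (γ * (1 - γ ^ ((1 : ℝ) / (ν : ℝ)))) + 2)
        + β * L * (D + Y) + L * ∑ t ∈ Icc 1 T, N (xstar (t + 1) - xstar t) := by
        have e1 : (T : ℝ) * (α * (L * (C + D + Y)))
            = β * L ^ 2 * ((n : ℝ) / (γ * (1 - q)) + 2) + β * L * (D + Y) := by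
          rw [hCdef]
          have : (T : ℝ) * α = β := by rw [mul_comm]; exact hαT
          calc (T : ℝ) * (α * (L * (L * ((n : ℝ) / (γ * (1 - q)) + 2) + D + Y)))
              = ((T : ℝ) * α) * (L * (L * ((n : ℝ) / (γ * (1 - q)) + 2) + D + Y)) := by
                ring
            _ = β * (L * (L * ((n : ℝ) / (γ * (1 - q)) + 2) + D + Y)) := by rw [this]
            _ = β * L ^ 2 * ((n : ℝ) / (γ * (1 - q)) + 2) + β * L * (D + Y) := by
                ring
        rw [e1, hqdef]
        have e2 : L * N (xstar 2 - xstar 1)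
            ≤ L * ∑ t ∈ Icc 1 T, N (xstar (t + 1) - xstar t) := by
          refine mul_le_mul_of_nonneg_left ?_ hL0
          have h1mem : (1 : ℕ) ∈ Icc 1 T := Finset.mem_Icc.mpr ⟨le_rfl, hT⟩
          have : N (xstar (1 + 1) - xstar 1)
              ≤ ∑ t ∈ Icc 1 T, N (xstar (t + 1) - xstar t) :=
            Finset.single_le_sum
              (f := fun t => N (xstar (t + 1) - xstar t))
              (fun t _ => DODWDA.N_nonneg N hNtri hNsmul hNdef _) h1mem
          simpa using this
        linarith
end

section
/- (Local dynamic regret bound for D-ODWDA.) Under exactly the hypotheses of the network dynamic regret theorem — row-stochastic P with stationary distribution π ∈ (0,1)^n, mixing bound |(P^k)_{ij} − π_j| ≤ γ^{⌊k/ν⌋} with γ ∈ (0,1) and integer ν ≥ 1, nonempty compact convex X ⊆ ℝ^m, 1-strongly convex ψ, convex differentiable losses f_{i,t} with ‖∇f_{i,t}(x)‖_* ≤ L on X, iterates y_{i,0} = 0, x_{i,0} ∈ X, y_{i,t+1} = Σ_j P_{ij} y_{j,t} + ∇f_{i,t}(x_{i,t}), x_{i,t+1} = Π(y_{i,t+1},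 α) with α = β/T, minimizers x*_t of f_t = (1/n)Σ_i f_{i,t} over X for t = 1,…,T+1, a constant D ≥ 0 with ‖ȳ_t‖_* ≤ D for t = 1,…,T where ȳ_t = Σ_i π_i y_{i,t}, and a constant Y ≥ 0 such that for every i and t = 2,…,T+1 there is y*_{i,t} with x*_t = Π(y*_{i,t}, α) and ‖y*_{i,t}‖_* ≤ Y — for every agent j ∈ {1,…,n} the local dynamic regret R_T(j) = Σ_{t=1}^T (f_t(x_{j,t}) − f_t(x*_t)) satisfies R_T(j) ≤ βL²(n/(γ(1 − γ^{1/ν})) + 2) + βL(D + Y) + L·V_T, where V_T = Σ_{t=1}^T ‖x*_{t+1} − x*_t‖. -/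
open Finset
open scoped RealInnerProductSpace BigOperators

namespace DODWDAaux

variable {m : ℕ}

lemma N_zero (N : EuclideanSpace ℝ (Fin m) → ℝ)
    (hNsmul : ∀ (c : ℝ) a, N (c • a) = |c| * N a) : N 0 = 0 := by
  have := hNsmul 0 0
  simpa using this

lemma N_nonneg (N : EuclideanSpace ℝ (Fin m) → ℝ)
    (hNtri : ∀ a b, N (a + b) ≤ N a + N b)
    (hNsmul : ∀ (c : ℝ) a, N (c • a) = |c| * N a) : ∀ a, 0 ≤ N a := by
  intro a
  have h0 : N 0 = 0 := N_zero N hNsmul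
  have hneg : N (-a) = N a := by
    have := hNsmul (-1) a
    simpa using this
  have := hNtri a (-a)
  simp only [add_neg_cancel, h0, hneg] at this
  linarith

lemma N_sum_le {ι : Type*} (N : EuclideanSpace ℝ (Fin m) → ℝ)
    (hNtri : ∀ a b, N (a + b) ≤ N a + N b)
    (hNsmul : ∀ (c : ℝ) a, N (c • a) = |c| * N a)
    (s : Finset ι) (v : ι → EuclideanSpace ℝ (Fin m)) :
    N (∑ i ∈ s, v i) ≤ ∑ i ∈ s, N (v i) := by
  classical
  induction s using Finset.induction_on with
  | empty => simp [N_zero N hNsmul]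
  | @insert a s h ih
    =>
    rw [Finset.sum_insert h, Finset.sum_insert h]
    exact (hNtri _ _).trans (by linarith)

/-- Norm equivalence: Euclidean norm bounded by a multiple of `N`. -/
lemma norm_le_mul_N (N : EuclideanSpace ℝ (Fin m) → ℝ)
    (hNtri : ∀ a b, N (a + b) ≤ N a + N b)
    (hNsmul : ∀ (c : ℝ) a, N (c • a) = |c| * N a)
    (hNdef : ∀ a, N a = 0 ↔ a = 0) :
    ∃ C : ℝ, 0 ≤ C ∧ ∀ a, ‖a‖ ≤ C * N a := by
  classical
  rcases Nat.eq_zero_or_pos m with hm | hm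
  · refine ⟨1, zero_le_one, fun a => ?_⟩
    subst hm
    have : a = 0 := Subsingleton.elim a 0
    simp [this, N_zero N hNsmul]
  -- N is Lipschitz hence continuous
  have hcoord : ∀ (v : EuclideanSpace ℝ (Fin m)) (i : Fin m), |v i| ≤ ‖v‖ := by
    intro v i
    have h1 : ⟪EuclideanSpace.single i (1:ℝ), v⟫ = v i := by
      simp [EuclideanSpace.inner_single_left]
    have h2 := abs_real_inner_le_norm (EuclideanSpace.single i (1:ℝ)) v
    rw [h1, EuclideanSpace.norm_single] at h2
    simpa using h2
  set C1 : ℝ := ∑ i : Fin m, N (EuclideanSpace.single i 1) with hC1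
  have hNle : ∀ v, N v ≤ C1 * ‖v‖ := by
    intro v
    have hv : v = ∑ i : Fin m, v i • EuclideanSpace.single i (1:ℝ) := by
      ext j
      rw [WithLp.ofLp_sum, Finset.sum_apply]
      simp [EuclideanSpace.single_apply, PiLp.smul_apply]
    calc N v = N (∑ i : Fin m, v i • EuclideanSpace.single i (1:ℝ)) := by rw [← hv]
      _ ≤ ∑ i : Fin m, N (v i • EuclideanSpace.single i (1:ℝ)) :=
          N_sum_le N hNtri hNsmul _ _
      _ = ∑ i : Fin m, |v i| * N (EuclideanSpace.single i (1:ℝ)) := by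
          simp [hNsmul]
      _ ≤ ∑ i : Fin m, ‖v‖ * N (EuclideanSpace.single i (1:ℝ)) := by
          apply Finset.sum_le_sum
          intro i _
          exact mul_le_mul_of_nonneg_right (hcoord v i) (N_nonneg N hNtri hNsmul _)
      _ = C1 * ‖v‖ := by rw [hC1, Finset.sum_mul]; ring_nf
  have hlip : LipschitzWith (Real.toNNReal C1) N := by
    apply LipschitzWith.of_dist_le_mul
    intro a b
    have h1 : N a - N b ≤ N (a - b) := by
      have := hNtri (a - b) b
      simp only [sub_add_cancel] at this
      linarith
    have h2 : N b - N a ≤ N (a - b) := by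
      have := hNtri (b - a) a
      simp only [sub_add_cancel] at this
      have hneg : N (b - a) = N (a - b) := by
        have := hNsmul (-1) (a - b)
        simpa [neg_sub] using this
      linarith
    have habs : |N a - N b| ≤ N (a - b) := abs_sub_le_iff.mpr ⟨h1, h2⟩
    have hC1nn : 0 ≤ C1 := Finset.sum_nonneg fun i _ => N_nonneg N hNtri hNsmul _
    calc dist (N a) (N b) = |N a - N b| := Real.dist_eq _ _
      _ ≤ N (a - b) := habs
      _ ≤ C1 * ‖a - b‖ := hNle _
      _ = (Real.toNNReal C1 : ℝ) * dist a b := by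
          rw [dist_eq_norm, Real.coe_toNNReal _ hC1nn]
  have hcont : Continuous N := hlip.continuous
  -- minimum of N on the unit sphere
  have : Nontrivial (EuclideanSpace ℝ (Fin m)) := by
    refine ⟨EuclideanSpace.single ⟨0, hm⟩ (1:ℝ), 0, ?_⟩
    intro h
    have := congrArg (fun w : EuclideanSpace ℝ (Fin m) => w ⟨0, hm⟩) h
    simp [EuclideanSpace.single_apply] at this
  have hsne : (Metric.sphere (0 : EuclideanSpace ℝ (Fin m)) 1).Nonempty :=
    NormedSpace.sphere_nonempty.mpr zero_le_one
  obtain ⟨a0, ha0, hmin⟩ :=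
    (isCompact_sphere (0 : EuclideanSpace ℝ (Fin m)) 1).exists_isMinOn hsne hcont.continuousOn
  have ha0n : a0 ≠ 0 := by
    intro h
    rw [mem_sphere_zero_iff_norm] at ha0
    simp [h] at ha0
  have hc : 0 < N a0 := by
    rcases lt_or_eq_of_le (N_nonneg N hNtri hNsmul a0) with h | h
    · exact h
    · exact absurd ((hNdef a0).mp h.symm) ha0n
  refine ⟨(N a0)⁻¹, inv_nonneg.mpr hc.le, fun a => ?_⟩
  rcases eq_or_ne a 0 with rfl | ha
  · simp [N_zero N hNsmul]
  have hna : 0 < ‖a‖ := norm_pos_iff.mpr ha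
  have hmem : (‖a‖⁻¹ • a) ∈ Metric.sphere (0 : EuclideanSpace ℝ (Fin m)) 1 := by
    rw [mem_sphere_zero_iff_norm, norm_smul]
    simp [abs_of_pos (inv_pos.mpr hna), inv_mul_cancel₀ hna.ne']
  have heq : N (‖a‖⁻¹ • a) = ‖a‖⁻¹ * N a := by
    rw [hNsmul]; congr 1; exact abs_of_pos (inv_pos.mpr hna)
  have hkey : N a0 ≤ ‖a‖⁻¹ * N a := by
    have := hmin hmem
    simpa [heq] using this
  have h1 : N a0 * ‖a‖ ≤ N a := by
    calc N a0 * ‖a‖ ≤ (‖a‖⁻¹ * N a) * ‖a‖ :=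
          mul_le_mul_of_nonneg_right hkey hna.le
      _ = N a := by field_simp
  calc ‖a‖ = (N a0)⁻¹ * (N a0 * ‖a‖) := by field_simp
    _ ≤ (N a0)⁻¹ * N a := mul_le_mul_of_nonneg_left h1 (inv_nonneg.mpr hc.le)

end DODWDAaux


set_option linter.unusedSectionVars false

namespace DODWDAaux2

variable {m : ℕ}

lemma S_mem_zero (N : EuclideanSpace ℝ (Fin m) → ℝ)
    (hNsmul : ∀ (c : ℝ) (a : EuclideanSpace ℝ (Fin m)), N (c • a) = |c| * N a)
    (v : EuclideanSpace ℝ (Fin m)) :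
    (0:ℝ) ∈ {r : ℝ | ∃ a, N a ≤ 1 ∧ r = ⟪v, a⟫} := by
  refine ⟨0, ?_, by simp⟩
  have : N 0 = 0 := by simpa using hNsmul 0 0
  simp [this]

lemma S_bddAbove (N : EuclideanSpace ℝ (Fin m) → ℝ)
    {C : ℝ} (hC0 : 0 ≤ C) (hC : ∀ a, ‖a‖ ≤ C * N a)
    (v : EuclideanSpace ℝ (Fin m)) :
    BddAbove {r : ℝ | ∃ a, N a ≤ 1 ∧ r = ⟪v, a⟫} := by
  refine ⟨‖v‖ * C, fun r hr => ?_⟩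
  obtain ⟨a, ha, rfl⟩ := hr
  calc ⟪v, a⟫ ≤ ‖v‖ * ‖a‖ := real_inner_le_norm v a
    _ ≤ ‖v‖ * (C * N a) := mul_le_mul_of_nonneg_left (hC a) (norm_nonneg v)
    _ ≤ ‖v‖ * (C * 1) := by
        apply mul_le_mul_of_nonneg_left _ (norm_nonneg v)
        exact mul_le_mul_of_nonneg_left ha hC0
    _ = ‖v‖ * C := by ring

variable (N Nd : EuclideanSpace ℝ (Fin m) → ℝ)
    (hNsmul : ∀ (c : ℝ) (a : EuclideanSpace ℝ (Fin m)), N (c • a) = |c| * N a)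
    (hNd : ∀ v, Nd v = sSup {r : ℝ | ∃ a, N a ≤ 1 ∧ r = ⟪v, a⟫})
    {C : ℝ} (hC0 : 0 ≤ C) (hC : ∀ a, ‖a‖ ≤ C * N a)

include hNsmul hNd hC0 hC

lemma Nd_nonneg (v : EuclideanSpace ℝ (Fin m)) : 0 ≤ Nd v := by
  rw [hNd]
  exact le_csSup (S_bddAbove N hC0 hC v) (S_mem_zero N hNsmul v)

lemma inner_le_Nd (v a : EuclideanSpace ℝ (Fin m)) (ha : N a ≤ 1) : ⟪v, a⟫ ≤ Nd v := by
  rw [hNd]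
  exact le_csSup (S_bddAbove N hC0 hC v) ⟨a, ha, rfl⟩

/-- Hölder inequality for the dual norm. -/
lemma holder (hNtri : ∀ a b, N (a + b) ≤ N a + N b)
    (hNdef : ∀ a, N a = 0 ↔ a = 0)
    (v a : EuclideanSpace ℝ (Fin m)) :
    ⟪v, a⟫ ≤ Nd v * N a := by
  have hNa0 : 0 ≤ N a := by
    have h0 : N 0 = 0 := by simpa using hNsmul 0 0
    have hneg : N (-a) = N a := by simpa using hNsmul (-1) a
    have := hNtri a (-a)
    simp only [add_neg_cancel, h0, hneg] at this
    linarith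
  rcases eq_or_lt_of_le hNa0 with h | h
  · have ha : a = 0 := (hNdef a).mp h.symm
    have h0 : N (0 : EuclideanSpace ℝ (Fin m)) = 0 := by simpa using hNsmul 0 0
    subst ha
    simp [h0]
  · have hmem : N ((N a)⁻¹ • a) ≤ 1 := by
      rw [hNsmul, abs_of_pos (inv_pos.mpr h), inv_mul_cancel₀ h.ne']
    have h1 : ⟪v, (N a)⁻¹ • a⟫ ≤ Nd v := inner_le_Nd N Nd hNsmul hNd hC0 hC v _ hmem
    rw [real_inner_smul_right] at h1
    calc ⟪v, a⟫ = N a * ((N a)⁻¹ * ⟪v, a⟫) := by field_simp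
      _ ≤ N a * Nd v := mul_le_mul_of_nonneg_left h1 hNa0
      _ = Nd v * N a := by ring

lemma Nd_add_le (u v : EuclideanSpace ℝ (Fin m)) : Nd (u + v) ≤ Nd u + Nd v := by
  rw [hNd]
  apply csSup_le ⟨0, S_mem_zero N hNsmul _⟩
  rintro r ⟨a, ha, rfl⟩
  rw [inner_add_left]
  exact add_le_add (inner_le_Nd N Nd hNsmul hNd hC0 hC u a ha)
    (inner_le_Nd N Nd hNsmul hNd hC0 hC v a ha)

lemma Nd_smul_le (c : ℝ) (v : EuclideanSpace ℝ (Fin m)) : Nd (c • v) ≤ |c| * Nd v := by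
  rw [hNd]
  apply csSup_le ⟨0, S_mem_zero N hNsmul _⟩
  rintro r ⟨a, ha, rfl⟩
  rw [real_inner_smul_left]
  rcases le_or_gt 0 c with hc | hc
  · rw [abs_of_nonneg hc]
    exact mul_le_mul_of_nonneg_left (inner_le_Nd N Nd hNsmul hNd hC0 hC v a ha) hc
  · rw [abs_of_neg hc]
    have hna : N (-a) ≤ 1 := by
      have h : N (-a) = N a := by simpa using hNsmul (-1) a
      rw [h]; exact ha
    have h2 := inner_le_Nd N Nd hNsmul hNd hC0 hC v (-a) hna
    rw [inner_neg_right] at h2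
    nlinarith

lemma Nd_neg (v : EuclideanSpace ℝ (Fin m)) : Nd (-v) ≤ Nd v := by
  have := Nd_smul_le N Nd hNsmul hNd hC0 hC (-1) v
  simpa using this

lemma Nd_zero_le : Nd 0 ≤ 0 := by
  rw [hNd]
  apply csSup_le ⟨0, S_mem_zero N hNsmul _⟩
  rintro r ⟨a, ha, rfl⟩
  simp

lemma Nd_sum_le {ι : Type*} (s : Finset ι) (v : ι → EuclideanSpace ℝ (Fin m)) :
    Nd (∑ i ∈ s, v i) ≤ ∑ i ∈ s, Nd (v i) := by
  classical
  induction s using Finset.induction_on with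
  | empty => simpa using Nd_zero_le N Nd hNsmul hNd hC0 hC
  | @insert a s h ih =>
    rw [Finset.sum_insert h, Finset.sum_insert h]
    exact (Nd_add_le N Nd hNsmul hNd hC0 hC _ _).trans (by linarith)

end DODWDAaux2


namespace DODWDAaux3

variable {m : ℕ}

/-- First-order condition for convex differentiable functions. -/
lemma convex_grad_ineq (f : EuclideanSpace ℝ (Fin m) → ℝ)
    (hf : ConvexOn ℝ Set.univ f) {g z : EuclideanSpace ℝ (Fin m)}
    (hg : HasGradientAt f g z) (u : EuclideanSpace ℝ (Fin m)) :
    f z + ⟪g, u - z⟫ ≤ f u := by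
  set d := u - z with hd
  set φ : ℝ → ℝ := fun θ => f (z + θ • d) with hφ
  have hφconv : ConvexOn ℝ Set.univ φ := by
    refine ⟨convex_univ, ?_⟩
    intro a _ b _ la lb hla hlb hab
    have hpt : z + (la • a + lb • b) • d = la • (z + a • d) + lb • (z + b • d) := by
      have h1 : la • z + lb • z = z := by
        rw [← add_smul, hab, one_smul]
      have h2 : la • (z + a • d) + lb • (z + b • d)
          = (la • z + lb • z) + (la * a + lb * b) • d := by
        rw [smul_add, smul_add, smul_smul, smul_smul, add_smul]
        abel
      rw [h2, h1, smul_eq_mul, smul_eq_mul]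
    have h3 := hf.2 (Set.mem_univ (z + a • d)) (Set.mem_univ (z + b • d)) hla hlb hab
    rw [← hpt] at h3
    simpa [hφ, smul_eq_mul] using h3
  have hderiv : HasDerivAt φ ⟪g, d⟫ 0 := by
    have h1 : HasDerivAt (fun θ : ℝ => θ • d) d 0 := by
      simpa using (hasDerivAt_id (0:ℝ)).smul_const d
    have h2 : HasDerivAt (fun θ : ℝ => z + θ • d) d 0 := h1.const_add z
    have hfd : HasFDerivAt f ((InnerProductSpace.toDual ℝ _) g) z :=
      hasGradientAt_iff_hasFDerivAt.mp hg
    have hz : (fun θ : ℝ => z + θ • d) 0 = z := by simp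
    rw [← hz] at hfd
    have h3 := hfd.comp_hasDerivAt 0 h2
    simp only [InnerProductSpace.toDual_apply_apply] at h3
    exact h3
  have hslope := hφconv.le_slope_of_hasDerivAt (Set.mem_univ (0:ℝ)) (Set.mem_univ (1:ℝ))
    zero_lt_one hderiv
  have : slope φ 0 1 = f u - f z := by
    rw [slope_def_field]
    simp [hφ, hd]
  rw [this] at hslope
  linarith

end DODWDAaux3

namespace Contract

variable {m : ℕ}

/-- Contraction property of the regularized projection. -/
lemma proj_contract
    (N Nd : EuclideanSpace ℝ (Fin m) → ℝ)
    (hNtri : ∀ a b, N (a + b) ≤ N a + N b)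
    (hNsmul : ∀ (c : ℝ) (a : EuclideanSpace ℝ (Fin m)), N (c • a) = |c| * N a)
    (hNdef : ∀ a, N a = 0 ↔ a = 0)
    (hNd : ∀ v, Nd v = sSup {r : ℝ | ∃ a, N a ≤ 1 ∧ r = ⟪v, a⟫})
    {C : ℝ} (hC0 : 0 ≤ C) (hC : ∀ a, ‖a‖ ≤ C * N a)
    (X : Set (EuclideanSpace ℝ (Fin m))) (hXcv : Convex ℝ X)
    (ψ : EuclideanSpace ℝ (Fin m) → ℝ)
    (hψ : ∀ (a b : EuclideanSpace ℝ (Fin m)) (θ : ℝ), 0 ≤ θ → θ ≤ 1 →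
      ψ (θ • a + (1 - θ) • b) ≤ θ * ψ a + (1 - θ) * ψ b - θ * (1 - θ) / 2 * (N (a - b)) ^ 2)
    (α : ℝ) (hα0 : 0 < α)
    (Proj : EuclideanSpace ℝ (Fin m) → EuclideanSpace ℝ (Fin m))
    (hProjX : ∀ z, Proj z ∈ X)
    (hProjMin : ∀ z, ∀ u ∈ X,
      ⟪z, Proj z⟫ + (1 / α) * ψ (Proj z) ≤ ⟪z, u⟫ + (1 / α) * ψ u)
    (z1 z2 : EuclideanSpace ℝ (Fin m)) :
    N (Proj z1 - Proj z2) ≤ α * Nd (z1 - z2) := by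
  have hNsym : ∀ a b : EuclideanSpace ℝ (Fin m), N (a - b) = N (b - a) := by
    intro a b
    have := hNsmul (-1) (b - a)
    simpa [neg_sub] using this
  have key : ∀ zA zB : EuclideanSpace ℝ (Fin m),
      (⟪zA, Proj zA⟫ + (1 / α) * ψ (Proj zA)) + N (Proj zB - Proj zA) ^ 2 / (2 * α)
        ≤ ⟪zA, Proj zB⟫ + (1 / α) * ψ (Proj zB) := by
    intro zA zB
    set x1 := Proj zA with hx1
    set x2 := Proj zB with hx2
    set S := N (x2 - x1) ^ 2 with hS
    have hS0 : 0 ≤ S := sq_nonneg _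
    set K := S / (2 * α) with hK
    have hK0 : 0 ≤ K := div_nonneg hS0 (by linarith)
    have hθstep : ∀ θ : ℝ, 0 < θ → θ ≤ 1 →
        (⟪zA, x1⟫ + (1 / α) * ψ x1) + (1 - θ) * K ≤ ⟪zA, x2⟫ + (1 / α) * ψ x2 := by
      intro θ hθ0 hθ1
      have hw : θ • x2 + (1 - θ) • x1 ∈ X :=
        hXcv (hProjX zB) (hProjX zA) hθ0.le (by linarith) (by ring)
      have hmin := hProjMin zA _ hw
      have hψw := hψ x2 x1 θ hθ0.le hθ1
      rw [← hS] at hψw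
      have hinner : ⟪zA, θ • x2 + (1 - θ) • x1⟫
          = θ * ⟪zA, x2⟫ + (1 - θ) * ⟪zA, x1⟫ := by
        rw [inner_add_right, real_inner_smul_right, real_inner_smul_right]
      have hα' : 0 < (1:ℝ) / α := by positivity
      have h1 : ⟪zA, x1⟫ + (1 / α) * ψ x1
          ≤ θ * ⟪zA, x2⟫ + (1 - θ) * ⟪zA, x1⟫
            + (1 / α) * (θ * ψ x2 + (1 - θ) * ψ x1 - θ * (1 - θ) / 2 * S) := by
        calc ⟪zA, x1⟫ + (1 / α) * ψ x1
            ≤ ⟪zA, θ • x2 + (1 - θ) • x1⟫ + (1 / α) * ψ (θ • x2 + (1 - θ) • x1) := hmin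
          _ ≤ θ * ⟪zA, x2⟫ + (1 - θ) * ⟪zA, x1⟫
              + (1 / α) * (θ * ψ x2 + (1 - θ) * ψ x1 - θ * (1 - θ) / 2 * S) := by
              rw [hinner]
              have := mul_le_mul_of_nonneg_left hψw hα'.le
              linarith
      have hexp : (1 / α) * (θ * ψ x2 + (1 - θ) * ψ x1 - θ * (1 - θ) / 2 * S)
          = θ * ((1 / α) * ψ x2) + (1 - θ) * ((1 / α) * ψ x1) - θ * (1 - θ) * K := by
        rw [hK]; field_simp
      rw [hexp] at h1
      nlinarith [h1, hθ0]
    have heps : ∀ ε : ℝ, 0 < ε →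
        (⟪zA, x1⟫ + (1 / α) * ψ x1) + K ≤ (⟪zA, x2⟫ + (1 / α) * ψ x2) + ε := by
      intro ε hε
      set θ := min 1 (ε / (K + 1)) with hθdef
      have hθ0 : 0 < θ := lt_min one_pos (div_pos hε (by linarith))
      have hθ1 : θ ≤ 1 := min_le_left _ _
      have hstep := hθstep θ hθ0 hθ1
      have hθK : θ * K ≤ ε := by
        have h4 : θ ≤ ε / (K + 1) := min_le_right _ _
        calc θ * K ≤ (ε / (K + 1)) * K := mul_le_mul_of_nonneg_right h4 hK0
          _ ≤ ε := by
              rw [div_mul_eq_mul_div, div_le_iff₀ (by linarith)]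
              nlinarith
      linarith
    have := le_of_forall_pos_le_add (fun ε hε => heps ε hε)
    linarith [this]
  have k1 := key z1 z2
  have k2 := key z2 z1
  set x1 := Proj z1
  set x2 := Proj z2
  have hsym12 : N (x1 - x2) = N (x2 - x1) := hNsym x1 x2
  set s := N (x1 - x2) with hs
  have hs0 : 0 ≤ s := by
    have h0 : N (0 : EuclideanSpace ℝ (Fin m)) = 0 := by simpa using hNsmul 0 0
    have hneg : N (-(x1 - x2)) = N (x1 - x2) := by simpa using hNsmul (-1) (x1 - x2)
    have := hNtri (x1 - x2) (-(x1 - x2))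
    simp only [add_neg_cancel, h0, hneg] at this
    linarith
  have hNd0 : 0 ≤ Nd (z1 - z2) :=
    DODWDAaux2.Nd_nonneg N Nd hNsmul hNd hC0 hC _
  have hholder : ⟪z1 - z2, x2 - x1⟫ ≤ Nd (z1 - z2) * s := by
    have := DODWDAaux2.holder N Nd hNsmul hNd hC0 hC hNtri hNdef (z1 - z2) (x2 - x1)
    rwa [← hsym12] at this
  have hinner : ⟪z1 - z2, x2 - x1⟫
      = ⟪z1, x2⟫ + ⟪z2, x1⟫ - ⟪z1, x1⟫ - ⟪z2, x2⟫ := by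
    rw [inner_sub_left, inner_sub_right, inner_sub_right]
    ring
  -- from k1 + k2 : s^2 / α ≤ inner
  have hsum : s ^ 2 / α ≤ ⟪z1 - z2, x2 - x1⟫ := by
    rw [hinner]
    have e1 : N (x2 - x1) ^ 2 = s ^ 2 := by rw [← hsym12]
    have e2 : N (x1 - x2) ^ 2 = s ^ 2 := rfl
    rw [e1] at k1
    rw [e2] at k2
    have : s ^ 2 / (2 * α) + s ^ 2 / (2 * α) = s ^ 2 / α := by
      field_simp; ring
    linarith
  rcases eq_or_lt_of_le hs0 with h | h
  · rw [← h]
    positivity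
  · have h1 : s ^ 2 ≤ α * (Nd (z1 - z2) * s) := by
      rw [div_le_iff₀ hα0] at hsum
      calc s ^ 2 ≤ ⟪z1 - z2, x2 - x1⟫ * α := hsum
        _ ≤ Nd (z1 - z2) * s * α := mul_le_mul_of_nonneg_right hholder hα0.le
        _ = α * (Nd (z1 - z2) * s) := by ring
    nlinarith [h1, h]

end Contract


set_option maxHeartbeats 2000000 in
/-- **Corollary 1 (local dynamic regret bound for D-ODWDA).**
Under the stated assumptions on the network matrix `P` (row-stochastic, stationary
distribution `π ∈ (0,1)^n`, geometric mixing with constants `γ ∈ (0,1)` and `ν ≥ 1`),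
the decision set `X` (nonempty, compact, convex), the regularizer `ψ` (1-strongly convex
w.r.t. the norm `N` with dual norm `Nd`), the losses `f_{i,t}` (convex, differentiable,
with gradients dual-norm-bounded by `L` on `X`), the D-ODWDA iterates with constant
stepsize `α = β/T`, a uniform bound `D` on `‖ȳ_t‖_*`, and a bound `Y` on dual
representatives of the round optima `x*_t`, for every agent `j` the local dynamic regret satisfies
`R_T(j) ≤ βL²(n/(γ(1 − γ^{1/ν})) + 2) + βL(D + Y) + L·V_T`. -/
theorem dodwda_local_dynamic_regret {m : ℕ} (n T : ℕ) (hn : 1 ≤ n) (hT : 1 ≤ T)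
    (β α : ℝ) (hβ : 0 < β) (hα : α = β / T)
    -- `P` is row-stochastic with stationary distribution `π ∈ (0,1)^n`
    (P : Matrix (Fin n) (Fin n) ℝ)
    (hPnn : ∀ i j, 0 ≤ P i j) (hProw : ∀ i, ∑ j, P i j = 1)
    (π : Fin n → ℝ) (hπ0 : ∀ i, 0 < π i) (hπ1 : ∀ i, π i < 1)
    (hπsum : ∑ i, π i = 1) (hπstat : ∀ j, ∑ i, π i * P i j = π j)
    -- geometric mixing of the matrix powers of `P` (`k / ν` is `⌊k/ν⌋`)
    (γ : ℝ) (hγ0 : 0 < γ) (hγ1 : γ < 1) (ν : ℕ) (hν : 1 ≤ ν)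
    (hmix : ∀ k : ℕ, 1 ≤ k → ∀ i j, |(P ^ k) i j - π j| ≤ γ ^ (k / ν))
    -- `X` is nonempty, compact, and convex
    (X : Set (EuclideanSpace ℝ (Fin m)))
    (hXne : X.Nonempty) (hXcp : IsCompact X) (hXcv : Convex ℝ X)
    -- `N` is a norm on `ℝ^m` and `Nd` its dual norm
    (N : EuclideanSpace ℝ (Fin m) → ℝ)
    (hNtri : ∀ a b, N (a + b) ≤ N a + N b)
    (hNsmul : ∀ (c : ℝ) (a : EuclideanSpace ℝ (Fin m)), N (c • a) = |c| * N a)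
    (hNdef : ∀ a, N a = 0 ↔ a = 0)
    (Nd : EuclideanSpace ℝ (Fin m) → ℝ)
    (hNd : ∀ v, Nd v = sSup {r : ℝ | ∃ a, N a ≤ 1 ∧ r = ⟪v, a⟫})
    -- `ψ` is 1-strongly convex with respect to `N`
    (ψ : EuclideanSpace ℝ (Fin m) → ℝ)
    (hψ : ∀ (a b : EuclideanSpace ℝ (Fin m)) (θ : ℝ), 0 ≤ θ → θ ≤ 1 →
      ψ (θ • a + (1 - θ) • b) ≤ θ * ψ a + (1 - θ) * ψ b - θ * (1 - θ) / 2 * (N (a - b)) ^ 2)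
    -- `Proj` is the `ψ`-regularized projection onto `X` with stepsize `α`
    (Proj : EuclideanSpace ℝ (Fin m) → EuclideanSpace ℝ (Fin m))
    (hProjX : ∀ z, Proj z ∈ X)
    (hProjMin : ∀ z, ∀ u ∈ X,
      ⟪z, Proj z⟫ + (1 / α) * ψ (Proj z) ≤ ⟪z, u⟫ + (1 / α) * ψ u)
    -- the losses: convex, differentiable, with dual-norm-bounded gradients on `X`
    (L : ℝ)
    (f : Fin n → ℕ → EuclideanSpace ℝ (Fin m) → ℝ)
    (grad : Fin n → ℕ → EuclideanSpace ℝ (Fin m) → EuclideanSpace ℝ (Fin m))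
    (hconv : ∀ (i : Fin n) (t : ℕ), t ≤ T + 1 → ConvexOn ℝ Set.univ (f i t))
    (hdiff : ∀ (i : Fin n) (t : ℕ), t ≤ T + 1 → ∀ z, HasGradientAt (f i t) (grad i t z) z)
    (hgradbd : ∀ (i : Fin n) (t : ℕ), t ≤ T + 1 → ∀ z ∈ X, Nd (grad i t z) ≤ L)
    -- the D-ODWDA iterates
    (y x : Fin n → ℕ → EuclideanSpace ℝ (Fin m))
    (hy0 : ∀ i, y i 0 = 0) (hx0 : ∀ i, x i 0 ∈ X)
    (hyrec : ∀ i t, y i (t + 1) = (∑ j, P i j • y j t) + grad i t (x i t))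
    (hxrec : ∀ i t, x i (t + 1) = Proj (y i (t + 1)))
    -- the weighted dual average
    (ybar : ℕ → EuclideanSpace ℝ (Fin m))
    (hybar : ∀ t, ybar t = ∑ i, π i • y i t)
    -- `x*_t` minimizes `f_t = (1/n) Σ_i f_{i,t}` over `X`
    (xstar : ℕ → EuclideanSpace ℝ (Fin m))
    (hxstarX : ∀ t : ℕ, 1 ≤ t → t ≤ T + 1 → xstar t ∈ X)
    (hxstarMin : ∀ t : ℕ, 1 ≤ t → t ≤ T + 1 → ∀ u ∈ X,
      (1 / (n : ℝ)) * ∑ i, f i t (xstar t) ≤ (1 / (n : ℝ)) * ∑ i, f i t u)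
    -- (i) a uniform bound on `‖ȳ_t‖_*`
    (D : ℝ) (hD : 0 ≤ D)
    (hybarbd : ∀ t : ℕ, 1 ≤ t → t ≤ T → Nd (ybar t) ≤ D)
    -- (ii) dual representatives of the round optima, dual-norm-bounded by `Y`
    (Y : ℝ) (hY : 0 ≤ Y)
    (hYstar : ∀ (i : Fin n) (t : ℕ), 2 ≤ t → t ≤ T + 1 →
      ∃ ystar : EuclideanSpace ℝ (Fin m), xstar t = Proj ystar ∧ Nd ystar ≤ Y) :
    -- the local dynamic regret bound, for every agent `j`
    ∀ j : Fin n,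
      ∑ t ∈ Icc 1 T,
          ((1 / (n : ℝ)) * ∑ i, f i t (x j t) - (1 / (n : ℝ)) * ∑ i, f i t (xstar t))
        ≤ β * L ^ 2 * ((n : ℝ) / (γ * (1 - γ ^ ((1 : ℝ) / (ν : ℝ)))) + 2)
          + β * L * (D + Y)
          + L * ∑ t ∈ Icc 1 T, N (xstar (t + 1) - xstar t) := by
  classical
  intro j
  have hT0 : (0:ℝ) < (T:ℝ) := by exact_mod_cast Nat.lt_of_lt_of_le Nat.zero_lt_one hT
  have hn0 : (0:ℝ) < (n:ℝ) := by exact_mod_cast Nat.lt_of_lt_of_le Nat.zero_lt_one hn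
  have hα0 : 0 < α := by rw [hα]; positivity
  obtain ⟨C, hC0, hC⟩ := DODWDAaux.norm_le_mul_N N hNtri hNsmul hNdef
  have Nd0 : ∀ v, 0 ≤ Nd v := fun v => DODWDAaux2.Nd_nonneg N Nd hNsmul hNd hC0 hC v
  have Nnn : ∀ a, 0 ≤ N a := DODWDAaux.N_nonneg N hNtri hNsmul
  have hold : ∀ v a, ⟪v, a⟫ ≤ Nd v * N a := fun v a =>
    DODWDAaux2.holder N Nd hNsmul hNd hC0 hC hNtri hNdef v a
  have hxX : ∀ i t, x i t ∈ X := by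
    intro i t
    cases t with
    | zero => exact hx0 i
    | succ s => rw [hxrec]; exact hProjX _
  have hL0 : 0 ≤ L := by
    obtain ⟨z0, hz0⟩ := hXne
    exact le_trans (Nd0 _) (hgradbd ⟨0, hn⟩ 0 (by omega) z0 hz0)
  -- geometric quantities
  set q : ℝ := γ ^ ((1 : ℝ) / (ν : ℝ)) with hqdef
  have hνR : (0:ℝ) < (ν:ℝ) := by exact_mod_cast Nat.lt_of_lt_of_le Nat.zero_lt_one hν
  have hq0 : 0 < q := Real.rpow_pos_of_pos hγ0 _
  have hq1 : q < 1 := Real.rpow_lt_one hγ0.le hγ1 (by positivity)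
  have h1q : 0 < 1 - q := by linarith
  -- comparison of `γ^(k/ν)` (nat div) with `(1/γ) * q^k`
  have hpowle : ∀ k : ℕ, 1 ≤ k → (γ : ℝ) ^ (k / ν) ≤ (1/γ) * q ^ k := by
    intro k hk
    have hmod : (k % ν : ℕ) < ν := Nat.mod_lt _ (by omega)
    have hdm : ν * (k / ν) + k % ν = k := Nat.div_add_mod k ν
    have hdmR : (k:ℝ) = (ν:ℝ) * ((k / ν : ℕ):ℝ) + ((k % ν : ℕ):ℝ) := by exact_mod_cast hdm.symm
    have hmR : ((k % ν : ℕ):ℝ) < (ν:ℝ) := by exact_mod_cast hmod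
    have h1 : (k:ℝ)/(ν:ℝ) - 1 ≤ ((k / ν : ℕ) : ℝ) := by
      rw [sub_le_iff_le_add, div_le_iff₀ hνR]
      nlinarith [hdmR, hmR]
    have hqk : q ^ k = γ ^ ((k:ℝ)/(ν:ℝ)) := by
      rw [← Real.rpow_natCast q k, hqdef, ← Real.rpow_mul hγ0.le]
      congr 1
      field_simp
    calc (γ:ℝ) ^ (k / ν) = γ ^ (((k / ν : ℕ)):ℝ) := (Real.rpow_natCast γ _).symm
      _ ≤ γ ^ ((k:ℝ)/(ν:ℝ) - 1) := Real.rpow_le_rpow_of_exponent_ge hγ0 hγ1.le h1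
      _ = (1/γ) * q ^ k := by
          rw [Real.rpow_sub hγ0, Real.rpow_one, hqk]
          ring
  -- coefficient bounds
  have hcoef0 : ∀ i : Fin n, ∑ l, |(P ^ 0) i l - π l| ≤ 2 := by
    intro i
    have hterm : ∀ l, |(P ^ 0) i l - π l| ≤ (if i = l then (1:ℝ) else 0) + π l := by
      intro l
      rw [pow_zero, Matrix.one_apply]
      have h1 := abs_add_le (if i = l then (1:ℝ) else 0) (-π l)
      have h2 : |if i = l then (1:ℝ) else 0| = if i = l then (1:ℝ) else 0 := by
        split <;> simp
      have h3 : |(-π l)| = π l := by rw [abs_neg, abs_of_pos (hπ0 l)]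
      calc |(if i = l then (1:ℝ) else 0) - π l|
          = |(if i = l then (1:ℝ) else 0) + (- π l)| := by rw [sub_eq_add_neg]
        _ ≤ |if i = l then (1:ℝ) else 0| + |(-π l)| := h1
        _ = (if i = l then (1:ℝ) else 0) + π l := by rw [h2, h3]
    calc ∑ l, |(P ^ 0) i l - π l| ≤ ∑ l, ((if i = l then (1:ℝ) else 0) + π l) :=
          Finset.sum_le_sum (fun l _ => hterm l)
      _ = (∑ l, (if i = l then (1:ℝ) else 0)) + ∑ l, π l := Finset.sum_add_distrib
      _ = 1 + 1 := by rw [Finset.sum_ite_eq, hπsum]; simp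
      _ = 2 := by norm_num
  have hcoefk : ∀ k : ℕ, 1 ≤ k → ∀ i : Fin n,
      ∑ l, |(P ^ k) i l - π l| ≤ (n:ℝ) * ((1/γ) * q ^ k) := by
    intro k hk i
    calc ∑ l, |(P ^ k) i l - π l| ≤ ∑ _l : Fin n, (γ:ℝ) ^ (k / ν) :=
          Finset.sum_le_sum (fun l _ => hmix k hk i l)
      _ = (n:ℝ) * (γ:ℝ) ^ (k / ν) := by
          rw [Finset.sum_const, Finset.card_univ, Fintype.card_fin, nsmul_eq_mul]
      _ ≤ (n:ℝ) * ((1/γ) * q ^ k) :=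
          mul_le_mul_of_nonneg_left (hpowle k hk) (by positivity)
  -- geometric sum bound
  have hgeom : ∀ K : ℕ, ∑ s ∈ range K, q ^ (K - s) ≤ 1/(1-q) := by
    intro K
    have h1 : ∑ s ∈ range K, q ^ (K - s) = ∑ k ∈ range K, q ^ (k+1) := by
      rw [← Finset.sum_range_reflect]
      apply Finset.sum_congr rfl
      intro s hs
      rw [Finset.mem_range] at hs
      congr 1
      omega
    have h2 : ∑ k ∈ range K, q ^ (k+1) = q * ∑ k ∈ range K, q ^ k := by
      rw [Finset.mul_sum]
      apply Finset.sum_congr rfl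
      intro k _
      rw [pow_succ]
      ring
    have h3 : ∑ k ∈ range K, q ^ k ≤ 1/(1-q) := by
      rw [geom_sum_eq hq1.ne]
      have he : (q ^ K - 1)/(q - 1) = (1 - q ^ K)/(1 - q) := by
        rw [div_eq_div_iff (by linarith) (by linarith)]
        ring
      rw [he]
      rw [div_le_div_iff₀ h1q h1q]
      nlinarith [pow_nonneg hq0.le K, h1q]
    have h4 : 0 ≤ ∑ k ∈ range K, q ^ k :=
      Finset.sum_nonneg fun k _ => pow_nonneg hq0.le k
    rw [h1, h2]
    calc q * ∑ k ∈ range K, q ^ k ≤ q * (1/(1-q)) :=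
          mul_le_mul_of_nonneg_left h3 hq0.le
      _ ≤ 1/(1-q) := by
          have hpos : 0 < 1/(1-q) := by positivity
          nlinarith [hq1, hq0, hpos]
  -- explicit formula for the iterates
  have hyform : ∀ t : ℕ, ∀ i : Fin n,
      y i t = ∑ s ∈ range t, ∑ l, ((P ^ (t - 1 - s)) i l) • grad l s (x l s) := by
    intro t
    induction t with
    | zero => intro i; simp [hy0]
    | succ t ih =>
      intro i
      rw [hyrec, Finset.sum_range_succ]
      have hlast : ∑ l, ((P ^ (t + 1 - 1 - t)) i l) • grad l t (x l t)
          = grad i t (x i t) := by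
        have h0 : t + 1 - 1 - t = 0 := by omega
        rw [h0]
        simp [Matrix.one_apply, ite_smul, Finset.sum_ite_eq]
      rw [hlast]
      congr 1
      calc ∑ jj, P i jj • y jj t
          = ∑ jj, ∑ s ∈ range t, ∑ l,
              (P i jj * (P ^ (t - 1 - s)) jj l) • grad l s (x l s) := by
            apply Finset.sum_congr rfl
            intro jj _
            rw [ih jj, Finset.smul_sum]
            apply Finset.sum_congr rfl
            intro s _
            rw [Finset.smul_sum]
            apply Finset.sum_congr rfl
            intro l _
            rw [smul_smul]
        _ = ∑ s ∈ range t, ∑ l,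
              (∑ jj, P i jj * (P ^ (t - 1 - s)) jj l) • grad l s (x l s) := by
            rw [Finset.sum_comm]
            apply Finset.sum_congr rfl
            intro s _
            rw [Finset.sum_comm]
            apply Finset.sum_congr rfl
            intro l _
            rw [← Finset.sum_smul]
        _ = ∑ s ∈ range t, ∑ l, ((P ^ (t + 1 - 1 - s)) i l) • grad l s (x l s) := by
            apply Finset.sum_congr rfl
            intro s hs
            rw [Finset.mem_range] at hs
            apply Finset.sum_congr rfl
            intro l _
            congr 1
            have h1 : t + 1 - 1 - s = (t - 1 - s) + 1 := by omega
            rw [h1, pow_succ', Matrix.mul_apply]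
  -- stationarity of powers
  have hπpow : ∀ k : ℕ, ∀ l, ∑ i, π i * (P ^ k) i l = π l := by
    intro k
    induction k with
    | zero =>
      intro l
      simp [Matrix.one_apply, mul_ite, Finset.sum_ite_eq']
    | succ k ih =>
      intro l
      calc ∑ i, π i * (P ^ (k+1)) i l
          = ∑ i, ∑ jj, π i * ((P ^ k) i jj * P jj l) := by
            apply Finset.sum_congr rfl
            intro i _
            rw [pow_succ, Matrix.mul_apply, Finset.mul_sum]
        _ = ∑ jj, (∑ i, π i * (P ^ k) i jj) * P jj l := by
            rw [Finset.sum_comm]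
            apply Finset.sum_congr rfl
            intro jj _
            rw [Finset.sum_mul]
            apply Finset.sum_congr rfl
            intro i _
            ring
        _ = ∑ jj, π jj * P jj l := by
            apply Finset.sum_congr rfl
            intro jj _
            rw [ih jj]
        _ = π l := hπstat l
  -- formula for the weighted dual average
  have hybarform : ∀ t : ℕ,
      ybar t = ∑ s ∈ range t, ∑ l, (π l) • grad l s (x l s) := by
    intro t
    rw [hybar]
    calc ∑ i, π i • y i t
        = ∑ i, ∑ s ∈ range t, ∑ l,
            (π i * (P ^ (t - 1 - s)) i l) • grad l s (x l s) := by
          apply Finset.sum_congr rfl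
          intro i _
          rw [hyform t i, Finset.smul_sum]
          apply Finset.sum_congr rfl
          intro s _
          rw [Finset.smul_sum]
          apply Finset.sum_congr rfl
          intro l _
          rw [smul_smul]
      _ = ∑ s ∈ range t, ∑ l,
            (∑ i, π i * (P ^ (t - 1 - s)) i l) • grad l s (x l s) := by
          rw [Finset.sum_comm]
          apply Finset.sum_congr rfl
          intro s _
          rw [Finset.sum_comm]
          apply Finset.sum_congr rfl
          intro l _
          rw [← Finset.sum_smul]
      _ = ∑ s ∈ range t, ∑ l, (π l) • grad l s (x l s) := by
          apply Finset.sum_congr rfl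
          intro s _
          apply Finset.sum_congr rfl
          intro l _
          rw [hπpow]
  -- the network error bound
  set Enet : ℝ := L * (2 + (n:ℝ) * ((1/γ) * (1/(1-q)))) with hEnet
  have hnet : ∀ t : ℕ, 1 ≤ t → t ≤ T → Nd (y j t - ybar t) ≤ Enet := by
    intro t ht1 htT
    obtain ⟨t', rfl⟩ : ∃ t', t = t' + 1 := ⟨t - 1, by omega⟩
    have hdiffe : y j (t'+1) - ybar (t'+1)
        = ∑ s ∈ range (t'+1), ∑ l,
            (((P ^ (t' + 1 - 1 - s)) j l - π l)) • grad l s (x l s) := by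
      rw [hyform (t'+1) j, hybarform (t'+1), ← Finset.sum_sub_distrib]
      apply Finset.sum_congr rfl
      intro s _
      rw [← Finset.sum_sub_distrib]
      apply Finset.sum_congr rfl
      intro l _
      rw [sub_smul]
    rw [hdiffe]
    set c : ℕ → ℝ := fun s => ∑ l, |(P ^ (t' + 1 - 1 - s)) j l - π l| with hc
    have hstep1 : Nd (∑ s ∈ range (t'+1), ∑ l,
        (((P ^ (t' + 1 - 1 - s)) j l - π l)) • grad l s (x l s))
        ≤ ∑ s ∈ range (t'+1), c s * L := by
      calc Nd (∑ s ∈ range (t'+1), ∑ l,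
            (((P ^ (t' + 1 - 1 - s)) j l - π l)) • grad l s (x l s))
          ≤ ∑ s ∈ range (t'+1), Nd (∑ l,
              (((P ^ (t' + 1 - 1 - s)) j l - π l)) • grad l s (x l s)) :=
            DODWDAaux2.Nd_sum_le N Nd hNsmul hNd hC0 hC _ _
        _ ≤ ∑ s ∈ range (t'+1), c s * L := by
            apply Finset.sum_le_sum
            intro s hs
            rw [Finset.mem_range] at hs
            have hsT : s ≤ T + 1 := by omega
            calc Nd (∑ l, (((P ^ (t' + 1 - 1 - s)) j l - π l)) • grad l s (x l s))
                ≤ ∑ l, Nd ((((P ^ (t' + 1 - 1 - s)) j l - π l)) • grad l s (x l s)) :=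
                  DODWDAaux2.Nd_sum_le N Nd hNsmul hNd hC0 hC _ _
              _ ≤ ∑ l, |(P ^ (t' + 1 - 1 - s)) j l - π l| * L := by
                  apply Finset.sum_le_sum
                  intro l _
                  refine (DODWDAaux2.Nd_smul_le N Nd hNsmul hNd hC0 hC _ _).trans ?_
                  exact mul_le_mul_of_nonneg_left
                    (hgradbd l s hsT (x l s) (hxX l s)) (abs_nonneg _)
              _ = c s * L := by rw [hc, Finset.sum_mul]
    refine hstep1.trans ?_
    rw [Finset.sum_range_succ]
    have hlastc : c t' * L ≤ 2 * L := by
      apply mul_le_mul_of_nonneg_right _ hL0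
      have h0 : t' + 1 - 1 - t' = 0 := by omega
      rw [hc]
      simpa [h0] using hcoef0 j
    have hinitc : ∑ s ∈ range t', c s * L
        ≤ ((n:ℝ) * ((1/γ) * (1/(1-q)))) * L := by
      have h1 : ∀ s ∈ range t', c s * L ≤ ((n:ℝ) * ((1/γ) * q ^ (t' - s))) * L := by
        intro s hs
        rw [Finset.mem_range] at hs
        apply mul_le_mul_of_nonneg_right _ hL0
        have hk1 : 1 ≤ t' - s := by omega
        have he : t' + 1 - 1 - s = t' - s := by omega
        rw [hc]
        simpa [he] using hcoefk (t' - s) hk1 j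
      calc ∑ s ∈ range t', c s * L
          ≤ ∑ s ∈ range t', ((n:ℝ) * ((1/γ) * q ^ (t' - s))) * L :=
            Finset.sum_le_sum h1
        _ = ((n:ℝ) * (1/γ) * L) * ∑ s ∈ range t', q ^ (t' - s) := by
            rw [Finset.mul_sum]
            apply Finset.sum_congr rfl
            intro s _
            ring
        _ ≤ ((n:ℝ) * (1/γ) * L) * (1/(1-q)) := by
            apply mul_le_mul_of_nonneg_left (hgeom t')
            positivity
        _ = ((n:ℝ) * ((1/γ) * (1/(1-q)))) * L := by ring
    rw [hEnet]
    linarith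
  -- per-round regret bound
  have hround : ∀ t : ℕ, 1 ≤ t → t ≤ T →
      (1 / (n : ℝ)) * ∑ i, f i t (x j t) - (1 / (n : ℝ)) * ∑ i, f i t (xstar t)
        ≤ L * (α * (Enet + D + Y)) + L * N (xstar (t + 1) - xstar t) := by
    intro t ht1 htT
    have htT1 : t ≤ T + 1 := by omega
    -- convexity: regret ≤ L * N (x j t - xstar t)
    have hreg : (1 / (n : ℝ)) * ∑ i, f i t (x j t) - (1 / (n : ℝ)) * ∑ i, f i t (xstar t)
        ≤ L * N (x j t - xstar t) := by
      rw [← mul_sub, ← Finset.sum_sub_distrib]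
      have hterm : ∀ i : Fin n, f i t (x j t) - f i t (xstar t)
          ≤ L * N (x j t - xstar t) := by
        intro i
        have hfo := DODWDAaux3.convex_grad_ineq (f i t) (hconv i t htT1)
          (hdiff i t htT1 (x j t)) (xstar t)
        have h2 : ⟪grad i t (x j t), x j t - xstar t⟫
            ≤ Nd (grad i t (x j t)) * N (x j t - xstar t) := hold _ _
        have h3 : Nd (grad i t (x j t)) * N (x j t - xstar t)
            ≤ L * N (x j t - xstar t) :=
          mul_le_mul_of_nonneg_right (hgradbd i t htT1 (x j t) (hxX j t)) (Nnn _)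
        have h4 : ⟪grad i t (x j t), xstar t - x j t⟫
            = -⟪grad i t (x j t), x j t - xstar t⟫ := by
          rw [← inner_neg_right]
          congr 1
          abel
        rw [h4] at hfo
        linarith
      calc (1 / (n : ℝ)) * ∑ i, (f i t (x j t) - f i t (xstar t))
          ≤ (1 / (n : ℝ)) * ∑ _i : Fin n, L * N (x j t - xstar t) := by
            apply mul_le_mul_of_nonneg_left (Finset.sum_le_sum (fun i _ => hterm i))
            positivity
        _ = L * N (x j t - xstar t) := by
            rw [Finset.sum_const, Finset.card_univ, Fintype.card_fin, nsmul_eq_mul]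
            field_simp
    have htri : N (x j t - xstar t)
        ≤ N (x j t - xstar (t + 1)) + N (xstar (t + 1) - xstar t) := by
      have h := hNtri (x j t - xstar (t + 1)) (xstar (t + 1) - xstar t)
      have he : (x j t - xstar (t + 1)) + (xstar (t + 1) - xstar t)
          = x j t - xstar t := by abel
      rwa [he] at h
    -- contraction bound
    obtain ⟨t', rfl⟩ : ∃ t', t = t' + 1 := ⟨t - 1, by omega⟩
    obtain ⟨ys, hys1, hys2⟩ := hYstar j (t' + 1 + 1) (by omega) (by omega)
    have hxj : x j (t' + 1) = Proj (y j (t' + 1)) := hxrec j t'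
    have hcontr : N (x j (t' + 1) - xstar (t' + 1 + 1))
        ≤ α * Nd (y j (t' + 1) - ys) := by
      rw [hxj, hys1]
      exact Contract.proj_contract N Nd hNtri hNsmul hNdef hNd hC0 hC X hXcv ψ hψ
        α hα0 Proj hProjX hProjMin _ _
    have hNdsplit : Nd (y j (t' + 1) - ys) ≤ Enet + D + Y := by
      have he : y j (t' + 1) - ys
          = (y j (t' + 1) - ybar (t' + 1)) + (ybar (t' + 1) + (-ys)) := by abel
      calc Nd (y j (t' + 1) - ys)
          ≤ Nd (y j (t' + 1) - ybar (t' + 1)) + Nd (ybar (t' + 1) + (-ys)) := by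
            rw [he]
            exact DODWDAaux2.Nd_add_le N Nd hNsmul hNd hC0 hC _ _
        _ ≤ Nd (y j (t' + 1) - ybar (t' + 1)) + (Nd (ybar (t' + 1)) + Nd (-ys)) := by
            have := DODWDAaux2.Nd_add_le N Nd hNsmul hNd hC0 hC (ybar (t' + 1)) (-ys)
            linarith
        _ ≤ Enet + (D + Y) := by
            have hb1 := hnet (t' + 1) ht1 htT
            have hb2 := hybarbd (t' + 1) ht1 htT
            have hb3 := (DODWDAaux2.Nd_neg N Nd hNsmul hNd hC0 hC ys).trans hys2
            linarith
        _ = Enet + D + Y := by ring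
    have hA : N (x j (t' + 1) - xstar (t' + 1 + 1)) ≤ α * (Enet + D + Y) :=
      hcontr.trans (mul_le_mul_of_nonneg_left hNdsplit hα0.le)
    calc (1 / (n : ℝ)) * ∑ i, f i (t' + 1) (x j (t' + 1))
          - (1 / (n : ℝ)) * ∑ i, f i (t' + 1) (xstar (t' + 1))
        ≤ L * N (x j (t' + 1) - xstar (t' + 1)) := hreg
      _ ≤ L * (N (x j (t' + 1) - xstar (t' + 1 + 1))
            + N (xstar (t' + 1 + 1) - xstar (t' + 1))) :=
          mul_le_mul_of_nonneg_left htri hL0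
      _ ≤ L * (α * (Enet + D + Y) + N (xstar (t' + 1 + 1) - xstar (t' + 1))) := by
          apply mul_le_mul_of_nonneg_left _ hL0
          linarith [hA]
      _ = L * (α * (Enet + D + Y)) + L * N (xstar (t' + 1 + 1) - xstar (t' + 1)) := by
          ring
  -- summation
  have hsum : ∑ t ∈ Icc 1 T,
      ((1 / (n : ℝ)) * ∑ i, f i t (x j t) - (1 / (n : ℝ)) * ∑ i, f i t (xstar t))
      ≤ (T : ℝ) * (L * (α * (Enet + D + Y)))
        + L * ∑ t ∈ Icc 1 T, N (xstar (t + 1) - xstar t) := by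
    calc ∑ t ∈ Icc 1 T,
        ((1 / (n : ℝ)) * ∑ i, f i t (x j t) - (1 / (n : ℝ)) * ∑ i, f i t (xstar t))
        ≤ ∑ t ∈ Icc 1 T,
            (L * (α * (Enet + D + Y)) + L * N (xstar (t + 1) - xstar t)) := by
          apply Finset.sum_le_sum
          intro t ht
          rw [Finset.mem_Icc] at ht
          exact hround t ht.1 ht.2
      _ = (T : ℝ) * (L * (α * (Enet + D + Y)))
          + L * ∑ t ∈ Icc 1 T, N (xstar (t + 1) - xstar t) := by
          rw [Finset.sum_add_distrib, Finset.sum_const, Nat.card_Icc,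
            Finset.mul_sum]
          have hc : T + 1 - 1 = T := by omega
          rw [hc, nsmul_eq_mul]
  refine hsum.trans ?_
  have hEq : (T : ℝ) * (L * (α * (Enet + D + Y)))
      = β * L ^ 2 * ((n : ℝ) / (γ * (1 - q)) + 2) + β * L * (D + Y) := by
    rw [hα, hEnet]
    have hγne : γ ≠ 0 := hγ0.ne'
    have h1qne : (1 - q) ≠ 0 := h1q.ne'
    field_simp
    ring
  rw [hEq]
end

section
/- (Sub-gradient-based D-ODWDA.) Let n ≥ 1, T ≥ 1, β > 0, α = β/T. Let P ∈ ℝ^{n×n} be row-stochastic with stationary distribution π ∈ (0,1)^n, and suppose |(P^k)_{ij} − π_j| ≤ γ^{⌊k/ν⌋} for all k ≥ 1 and all i,j, with γ ∈ (0,1) and integer ν ≥ 1. Let X ⊆ ℝ^m be nonempty compact convex and ψ 1-strongly convex with respect to ‖·‖. For t = 1,…,T+1 and i = 1,…,n let f_{i,t}: ℝ^m → ℝ be convex (not necessarily differentiable), and for each i,t let g_{i,t} be a subgradient of f_{i,t} at x_{i,t} with ‖g_{i,t}‖_* ≤ L; moreover assume |f_{i,t}(x) − f_{i,t}(y)| ≤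 L‖x − y‖ for all x,y ∈ X. Generate y_{i,0} = 0, x_{i,0} ∈ X, y_{i,t+1} = Σ_j P_{ij} y_{j,t} + g_{i,t}, x_{i,t+1} = Π(y_{i,t+1}, α), and let ȳ_t = Σ_i π_i y_{i,t}, f_t = (1/n)Σ_i f_{i,t}, and x*_t ∈ X a minimizer of f_t over X for t = 1,…,T+1. Assume ‖ȳ_t‖_* ≤ D for all t = 1,…,T, and that for every i and t = 2,…,T+1 there exists y*_{i,t} with x*_t = Π(y*_{i,t}, α) and ‖y*_{i,t}‖_* ≤ Y. Then both the network dynamic regret R_T = Σ_{t=1}^T ((1/n)Σ_i f_{i,t}(x_{i,t}) − f_t(x*_t)) and, for every j, the local dynamic regret R_T(j) = Σ_{t=1}^T (f_t(x_{j,t}) − f_t(x*_t)) are bounded above by βL²(n/(γ(1 − γ^{1/ν})) + 2) + βL(D + Y) + L·V_T, with V_T = Σ_{t=1}^T ‖x*_{t+1} − x*_t‖. -/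
open Finset
open scoped RealInnerProductSpace BigOperators


private lemma norm_sum_le_aux {m : ℕ} (N : EuclideanSpace ℝ (Fin m) → ℝ)
    (hNtri : ∀ a b, N (a + b) ≤ N a + N b)
    (hN0 : N 0 = 0) {ι : Type*} (s : Finset ι) (v : ι → EuclideanSpace ℝ (Fin m)) :
    N (∑ i ∈ s, v i) ≤ ∑ i ∈ s, N (v i) := by
  classical
  induction s using Finset.cons_induction with
  | empty => simp [hN0]
  | cons a s ha ih =>
      rw [Finset.sum_cons, Finset.sum_cons]
      exact (hNtri _ _).trans (by linarith)

private lemma aux_dual_bound {m : ℕ} (N : EuclideanSpace ℝ (Fin m) → ℝ)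
    (hNtri : ∀ a b, N (a + b) ≤ N a + N b)
    (hNsmul : ∀ (c : ℝ) (a : EuclideanSpace ℝ (Fin m)), N (c • a) = |c| * N a)
    (hNdef : ∀ a, N a = 0 ↔ a = 0) :
    ∃ C : ℝ, 0 ≤ C ∧ ∀ a, ‖a‖ ≤ C * N a := by
  classical
  have hN0 : N 0 = 0 := by simpa using hNsmul 0 0
  have hNneg : ∀ a, N (-a) = N a := by
    intro a; have := hNsmul (-1) a; simpa using this
  have hNnn : ∀ a, 0 ≤ N a := by
    intro a
    have h := hNtri a (-a)
    simp [hN0, hNneg] at h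
    linarith
  -- upper bound : N a ≤ C0 * ‖a‖
  set C0 : ℝ := ∑ i : Fin m, N (EuclideanSpace.single i (1:ℝ)) with hC0def
  have hC0nn : 0 ≤ C0 := Finset.sum_nonneg fun i _ => hNnn _
  have hdecomp : ∀ a : EuclideanSpace ℝ (Fin m),
      a = ∑ i : Fin m, a i • EuclideanSpace.single i (1:ℝ) := by
    intro a
    have := (EuclideanSpace.basisFun (Fin m) ℝ).sum_repr a
    simpa [EuclideanSpace.basisFun_repr, EuclideanSpace.basisFun_apply] using this.symm
  have hupper : ∀ a, N a ≤ C0 * ‖a‖ := by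
    intro a
    calc N a = N (∑ i : Fin m, a i • EuclideanSpace.single i (1:ℝ)) := by rw [← hdecomp]
      _ ≤ ∑ i : Fin m, N (a i • EuclideanSpace.single i (1:ℝ)) :=
          norm_sum_le_aux N hNtri hN0 _ _
      _ ≤ ∑ i : Fin m, ‖a‖ * N (EuclideanSpace.single i (1:ℝ)) := by
          refine Finset.sum_le_sum fun i _ => ?_
          rw [hNsmul]
          refine mul_le_mul_of_nonneg_right ?_ (hNnn _)
          calc |a i| = ‖a i‖ := rfl
            _ ≤ ‖a‖ := by
              have := EuclideanSpace.norm_single (𝕜 := ℝ) i (1:ℝ)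
              have h2 := abs_real_inner_le_norm (EuclideanSpace.single i (1:ℝ)) a
              have h3 : ⟪EuclideanSpace.single i (1:ℝ), a⟫ = a i := by
                simp [EuclideanSpace.inner_single_left]
              rw [h3] at h2
              simpa [this] using h2
      _ = C0 * ‖a‖ := by rw [← Finset.mul_sum]; ring
  have hlipN : ∀ a b, |N a - N b| ≤ C0 * ‖a - b‖ := by
    intro a b
    have h1 : N a ≤ N (a - b) + N b := by
      have := hNtri (a - b) b; simpa using this
    have h2 : N b ≤ N (b - a) + N a := by
      have := hNtri (b - a) a; simpa using this
    have h3 : N (b - a) = N (a - b) := by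
      have : b - a = -(a - b) := by abel
      rw [this, hNneg]
    have h4 := hupper (a - b)
    rw [h3] at h2
    rw [abs_le]; constructor <;> linarith
  have hcont : Continuous N := by
    refine Metric.continuous_iff.2 fun b ε hε => ?_
    refine ⟨ε / (C0 + 1), by positivity, fun a ha => ?_⟩
    have := hlipN a b
    have h2 : dist (N a) (N b) = |N a - N b| := Real.dist_eq _ _
    have h3 : ‖a - b‖ = dist a b := (dist_eq_norm a b).symm
    rw [h2]
    have h5 : C0 * dist a b < C0 * (ε / (C0 + 1)) + ε/(C0+1) := by
      nlinarith [dist_nonneg (x := a) (y := b)]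
    have h6 : C0 * (ε / (C0+1)) + ε/(C0+1) = ε := by field_simp
    rw [h3] at this; linarith
  rcases subsingleton_or_nontrivial (EuclideanSpace ℝ (Fin m)) with hsub | hnt
  · refine ⟨0, le_rfl, fun a => ?_⟩
    have : a = 0 := Subsingleton.elim a 0
    simp [this]
  · obtain ⟨a₀, ha₀, hmin⟩ := (isCompact_sphere (0 : EuclideanSpace ℝ (Fin m)) 1).exists_isMinOn
      (NormedSpace.sphere_nonempty.2 zero_le_one) hcont.continuousOn
    have ha₀norm : ‖a₀‖ = 1 := by simpa using mem_sphere_iff_norm.1 ha₀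
    have ha₀ne : a₀ ≠ 0 := by intro h; rw [h] at ha₀norm; simp at ha₀norm
    have hc : 0 < N a₀ := by
      rcases lt_or_eq_of_le (hNnn a₀) with h | h
      · exact h
      · exact absurd ((hNdef a₀).1 h.symm) ha₀ne
    refine ⟨(N a₀)⁻¹, by positivity, fun a => ?_⟩
    rcases eq_or_ne a 0 with rfl | hane
    · simp [hN0]
    · have hna : 0 < ‖a‖ := norm_pos_iff.2 hane
      set u : EuclideanSpace ℝ (Fin m) := ‖a‖⁻¹ • a with hu
      have hunorm : ‖u‖ = 1 := by
        rw [hu, norm_smul]; simp [abs_of_nonneg (le_of_lt (by positivity : (0:ℝ) < ‖a‖⁻¹))]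
        field_simp
      have humem : u ∈ Metric.sphere (0 : EuclideanSpace ℝ (Fin m)) 1 := by
        simp [mem_sphere_iff_norm, hunorm]
      have h1 : N a₀ ≤ N u := hmin humem
      have h2 : N a = ‖a‖ * N u := by
        have heq : a = ‖a‖ • u := by rw [hu, smul_smul]; field_simp; rw [one_smul]
        conv_lhs => rw [heq]
        rw [hNsmul, abs_of_pos hna]
      have h3 : ‖a‖ * N a₀ ≤ N a := by
        rw [h2]; exact mul_le_mul_of_nonneg_left h1 (le_of_lt hna)
      calc ‖a‖ ≤ N a / N a₀ := (le_div_iff₀ hc).2 h3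
        _ = (N a₀)⁻¹ * N a := div_eq_inv_mul _ _

set_option maxHeartbeats 4000000 in
/-- **Corollary 2 (sub-gradient-based D-ODWDA).**
Under the assumptions of the network dynamic regret theorem, but with convex, not
necessarily differentiable losses `f_{i,t}` that are `L`-Lipschitz on `X` w.r.t. the norm
`N`, and with the update driven by subgradients `g_{i,t} ∈ ∂f_{i,t}(x_{i,t})` satisfying
`‖g_{i,t}‖_* ≤ L`, both the network dynamic regret and every agent's local dynamic regret
are bounded above by `βL²(n/(γ(1 − γ^{1/ν})) + 2) + βL(D + Y) + L·V_T`. -/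
theorem dodwda_subgradient_dynamic_regret {m : ℕ} (n T : ℕ) (hn : 1 ≤ n) (hT : 1 ≤ T)
    (β α : ℝ) (hβ : 0 < β) (hα : α = β / T)
    -- `P` is row-stochastic with stationary distribution `π ∈ (0,1)^n`
    (P : Matrix (Fin n) (Fin n) ℝ)
    (hPnn : ∀ i j, 0 ≤ P i j) (hProw : ∀ i, ∑ j, P i j = 1)
    (π : Fin n → ℝ) (hπ0 : ∀ i, 0 < π i) (hπ1 : ∀ i, π i < 1)
    (hπsum : ∑ i, π i = 1) (hπstat : ∀ j, ∑ i, π i * P i j = π j)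
    -- geometric mixing of the matrix powers of `P` (`k / ν` is `⌊k/ν⌋`)
    (γ : ℝ) (hγ0 : 0 < γ) (hγ1 : γ < 1) (ν : ℕ) (hν : 1 ≤ ν)
    (hmix : ∀ k : ℕ, 1 ≤ k → ∀ i j, |(P ^ k) i j - π j| ≤ γ ^ (k / ν))
    -- `X` is nonempty, compact, and convex
    (X : Set (EuclideanSpace ℝ (Fin m)))
    (hXne : X.Nonempty) (hXcp : IsCompact X) (hXcv : Convex ℝ X)
    -- `N` is a norm on `ℝ^m` and `Nd` its dual norm
    (N : EuclideanSpace ℝ (Fin m) → ℝ)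
    (hNtri : ∀ a b, N (a + b) ≤ N a + N b)
    (hNsmul : ∀ (c : ℝ) (a : EuclideanSpace ℝ (Fin m)), N (c • a) = |c| * N a)
    (hNdef : ∀ a, N a = 0 ↔ a = 0)
    (Nd : EuclideanSpace ℝ (Fin m) → ℝ)
    (hNd : ∀ v, Nd v = sSup {r : ℝ | ∃ a, N a ≤ 1 ∧ r = ⟪v, a⟫})
    -- `ψ` is 1-strongly convex with respect to `N`
    (ψ : EuclideanSpace ℝ (Fin m) → ℝ)
    (hψ : ∀ (a b : EuclideanSpace ℝ (Fin m)) (θ : ℝ), 0 ≤ θ → θ ≤ 1 →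
      ψ (θ • a + (1 - θ) • b) ≤ θ * ψ a + (1 - θ) * ψ b - θ * (1 - θ) / 2 * (N (a - b)) ^ 2)
    -- `Proj` is the `ψ`-regularized projection onto `X` with stepsize `α`
    (Proj : EuclideanSpace ℝ (Fin m) → EuclideanSpace ℝ (Fin m))
    (hProjX : ∀ z, Proj z ∈ X)
    (hProjMin : ∀ z, ∀ u ∈ X,
      ⟪z, Proj z⟫ + (1 / α) * ψ (Proj z) ≤ ⟪z, u⟫ + (1 / α) * ψ u)
    -- the losses: convex (not necessarily differentiable), `L`-Lipschitz on `X`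
    (L : ℝ)
    (f : Fin n → ℕ → EuclideanSpace ℝ (Fin m) → ℝ)
    (hconv : ∀ (i : Fin n) (t : ℕ), t ≤ T + 1 → ConvexOn ℝ Set.univ (f i t))
    (hlip : ∀ (i : Fin n) (t : ℕ), t ≤ T + 1 → ∀ a ∈ X, ∀ b ∈ X,
      |f i t a - f i t b| ≤ L * N (a - b))
    -- the D-ODWDA iterates, driven by subgradients `g_{i,t} ∈ ∂f_{i,t}(x_{i,t})`
    (y x : Fin n → ℕ → EuclideanSpace ℝ (Fin m))
    (g : Fin n → ℕ → EuclideanSpace ℝ (Fin m))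
    (hsubgrad : ∀ (i : Fin n) (t : ℕ), t ≤ T + 1 → ∀ z,
      f i t (x i t) + ⟪g i t, z - x i t⟫ ≤ f i t z)
    (hgbd : ∀ (i : Fin n) (t : ℕ), t ≤ T + 1 → Nd (g i t) ≤ L)
    (hy0 : ∀ i, y i 0 = 0) (hx0 : ∀ i, x i 0 ∈ X)
    (hyrec : ∀ i t, y i (t + 1) = (∑ j, P i j • y j t) + g i t)
    (hxrec : ∀ i t, x i (t + 1) = Proj (y i (t + 1)))
    -- the weighted dual average
    (ybar : ℕ → EuclideanSpace ℝ (Fin m))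
    (hybar : ∀ t, ybar t = ∑ i, π i • y i t)
    -- `x*_t` minimizes `f_t = (1/n) Σ_i f_{i,t}` over `X`
    (xstar : ℕ → EuclideanSpace ℝ (Fin m))
    (hxstarX : ∀ t : ℕ, 1 ≤ t → t ≤ T + 1 → xstar t ∈ X)
    (hxstarMin : ∀ t : ℕ, 1 ≤ t → t ≤ T + 1 → ∀ u ∈ X,
      (1 / (n : ℝ)) * ∑ i, f i t (xstar t) ≤ (1 / (n : ℝ)) * ∑ i, f i t u)
    -- a uniform bound on `‖ȳ_t‖_*`
    (D : ℝ) (hD : 0 ≤ D)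
    (hybarbd : ∀ t : ℕ, 1 ≤ t → t ≤ T → Nd (ybar t) ≤ D)
    -- dual representatives of the round optima, dual-norm-bounded by `Y`
    (Y : ℝ) (hY : 0 ≤ Y)
    (hYstar : ∀ (i : Fin n) (t : ℕ), 2 ≤ t → t ≤ T + 1 →
      ∃ ystar : EuclideanSpace ℝ (Fin m), xstar t = Proj ystar ∧ Nd ystar ≤ Y) :
    -- both the network and every local dynamic regret satisfy the bound
    (∑ t ∈ Icc 1 T,
        ((1 / (n : ℝ)) * ∑ i, f i t (x i t) - (1 / (n : ℝ)) * ∑ i, f i t (xstar t))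
      ≤ β * L ^ 2 * ((n : ℝ) / (γ * (1 - γ ^ ((1 : ℝ) / (ν : ℝ)))) + 2)
        + β * L * (D + Y)
        + L * ∑ t ∈ Icc 1 T, N (xstar (t + 1) - xstar t)) ∧
    (∀ j : Fin n,
      ∑ t ∈ Icc 1 T,
          ((1 / (n : ℝ)) * ∑ i, f i t (x j t) - (1 / (n : ℝ)) * ∑ i, f i t (xstar t))
        ≤ β * L ^ 2 * ((n : ℝ) / (γ * (1 - γ ^ ((1 : ℝ) / (ν : ℝ)))) + 2)
          + β * L * (D + Y)
          + L * ∑ t ∈ Icc 1 T, N (xstar (t + 1) - xstar t)) := by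
  classical
  have hN0 : N 0 = 0 := by simpa using hNsmul 0 0
  have hNneg : ∀ a, N (-a) = N a := by
    intro a; have := hNsmul (-1) a; simpa using this
  have hNnn : ∀ a, 0 ≤ N a := by
    intro a
    have h := hNtri a (-a)
    simp [hN0, hNneg] at h
    linarith
  obtain ⟨C, hCnn, hC⟩ := aux_dual_bound N hNtri hNsmul hNdef
  have hT0 : (0:ℝ) < T := by exact_mod_cast hT
  have hα0 : 0 < α := by rw [hα]; exact div_pos hβ hT0
  have hαne : α ≠ 0 := ne_of_gt hα0
  -- dual norm basic facts
  have hSne : ∀ v : EuclideanSpace ℝ (Fin m),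
      ((0:ℝ) ∈ {r : ℝ | ∃ a, N a ≤ 1 ∧ r = ⟪v, a⟫}) := by
    intro v; exact ⟨0, by simp [hN0], by simp⟩
  have hSbdd : ∀ v : EuclideanSpace ℝ (Fin m),
      BddAbove {r : ℝ | ∃ a, N a ≤ 1 ∧ r = ⟪v, a⟫} := by
    intro v
    refine ⟨‖v‖ * C, ?_⟩
    rintro r ⟨a, ha, rfl⟩
    calc ⟪v, a⟫ ≤ ‖v‖ * ‖a‖ := real_inner_le_norm v a
      _ ≤ ‖v‖ * (C * N a) := mul_le_mul_of_nonneg_left (hC a) (norm_nonneg v)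
      _ ≤ ‖v‖ * (C * 1) := by
          refine mul_le_mul_of_nonneg_left ?_ (norm_nonneg v)
          exact mul_le_mul_of_nonneg_left ha hCnn
      _ = ‖v‖ * C := by ring
  have hNdnn : ∀ v, 0 ≤ Nd v := by
    intro v; rw [hNd]; exact le_csSup (hSbdd v) (hSne v)
  have habs : ∀ v a, N a ≤ 1 → |⟪v, a⟫| ≤ Nd v := by
    intro v a ha
    rw [abs_le]
    constructor
    · have hmem : ⟪v, -a⟫ ∈ {r : ℝ | ∃ b, N b ≤ 1 ∧ r = ⟪v, b⟫} :=
        ⟨-a, by rw [hNneg]; exact ha, rfl⟩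
      have := le_csSup (hSbdd v) hmem
      rw [← hNd] at this
      rw [inner_neg_right] at this
      linarith
    · have hmem : ⟪v, a⟫ ∈ {r : ℝ | ∃ b, N b ≤ 1 ∧ r = ⟪v, b⟫} := ⟨a, ha, rfl⟩
      have := le_csSup (hSbdd v) hmem
      rw [← hNd] at this
      exact this
  have hinner_le : ∀ (v a : EuclideanSpace ℝ (Fin m)), ⟪v, a⟫ ≤ Nd v * N a := by
    intro v a
    rcases eq_or_lt_of_le (hNnn a) with h | h
    · have ha0 : a = 0 := (hNdef a).1 h.symm
      rw [ha0]; simp [hN0]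
    · have hmem : N ((N a)⁻¹ • a) ≤ 1 := by
        rw [hNsmul, abs_of_pos (inv_pos.2 h)]
        rw [inv_mul_cancel₀ (ne_of_gt h)]
      have h2 := (le_abs_self _).trans (habs v ((N a)⁻¹ • a) hmem)
      rw [real_inner_smul_right] at h2
      have h3 : (N a)⁻¹ * ⟪v, a⟫ ≤ Nd v := h2
      calc ⟪v, a⟫ = N a * ((N a)⁻¹ * ⟪v, a⟫) := by field_simp
        _ ≤ N a * Nd v := mul_le_mul_of_nonneg_left h3 (le_of_lt h)
        _ = Nd v * N a := mul_comm _ _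
  have hNd_add : ∀ u v, Nd (u + v) ≤ Nd u + Nd v := by
    intro u v
    rw [hNd]
    refine csSup_le ⟨0, hSne _⟩ ?_
    rintro r ⟨a, ha, rfl⟩
    rw [inner_add_left]
    have h1 := (le_abs_self _).trans (habs u a ha)
    have h2 := (le_abs_self _).trans (habs v a ha)
    linarith
  have hNd_sub : ∀ u v, Nd (u - v) ≤ Nd u + Nd v := by
    intro u v
    rw [hNd]
    refine csSup_le ⟨0, hSne _⟩ ?_
    rintro r ⟨a, ha, rfl⟩
    rw [inner_sub_left]
    have h1 := (le_abs_self _).trans (habs u a ha)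
    have h2 := abs_le.1 (habs v a ha)
    linarith [h2.1, h2.2]
  have hNd_sum : ∀ {ι : Type} (s : Finset ι) (w : ι → EuclideanSpace ℝ (Fin m))
      (c : ι → ℝ), Nd (∑ i ∈ s, c i • w i) ≤ ∑ i ∈ s, |c i| * Nd (w i) := by
    intro ι s w c
    rw [hNd]
    refine csSup_le ⟨0, hSne _⟩ ?_
    rintro r ⟨a, ha, rfl⟩
    rw [sum_inner]
    refine Finset.sum_le_sum fun i _ => ?_
    rw [real_inner_smul_left]
    calc c i * ⟪w i, a⟫ ≤ |c i * ⟪w i, a⟫| := le_abs_self _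
      _ = |c i| * |⟪w i, a⟫| := abs_mul _ _
      _ ≤ |c i| * Nd (w i) := mul_le_mul_of_nonneg_left (habs _ _ ha) (abs_nonneg _)
  -- strong minimality of the regularized projection
  have hstrong : ∀ z, ∀ u ∈ X,
      ⟪z, Proj z⟫ + (1/α) * ψ (Proj z) + (1/(2*α)) * (N (u - Proj z))^2
        ≤ ⟪z, u⟫ + (1/α) * ψ u := by
    intro z u hu
    set x0 := Proj z with hx0
    have hx0X : x0 ∈ X := hProjX z
    have key : ∀ θ : ℝ, 0 < θ → θ < 1 →
        ⟪z, x0⟫ + (1/α) * ψ x0 + ((1-θ)/(2*α)) * (N (u - x0))^2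
          ≤ ⟪z, u⟫ + (1/α) * ψ u := by
      intro θ hθ0 hθ1
      have hmem : θ • u + (1 - θ) • x0 ∈ X :=
        hXcv hu hx0X (le_of_lt hθ0) (by linarith) (by ring)
      have h1 := hProjMin z _ hmem
      have h2 := hψ u x0 θ (le_of_lt hθ0) (le_of_lt hθ1)
      have h3 : ⟪z, θ • u + (1 - θ) • x0⟫ = θ * ⟪z, u⟫ + (1-θ) * ⟪z, x0⟫ := by
        rw [inner_add_right, real_inner_smul_right, real_inner_smul_right]
      have hαinv : 0 < 1/α := by positivity
      have h4 : ⟪z, x0⟫ + (1/α) * ψ x0 ≤ θ * ⟪z, u⟫ + (1-θ) * ⟪z, x0⟫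
          + (1/α) * (θ * ψ u + (1 - θ) * ψ x0 - θ * (1 - θ) / 2 * (N (u - x0))^2) := by
        calc ⟪z, x0⟫ + (1/α) * ψ x0 ≤ ⟪z, θ • u + (1 - θ) • x0⟫
              + (1/α) * ψ (θ • u + (1 - θ) • x0) := h1
          _ ≤ θ * ⟪z, u⟫ + (1-θ) * ⟪z, x0⟫
              + (1/α) * (θ * ψ u + (1 - θ) * ψ x0 - θ * (1 - θ) / 2 * (N (u - x0))^2) := by
            rw [h3]
            have := mul_le_mul_of_nonneg_left h2 (le_of_lt hαinv)
            linarith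
      have h5 : θ * (⟪z, x0⟫ + (1/α) * ψ x0) + θ * ((1-θ)/(2*α)) * (N (u - x0))^2
          ≤ θ * (⟪z, u⟫ + (1/α) * ψ u) := by
        have expand : (1/α) * (θ * ψ u + (1 - θ) * ψ x0 - θ * (1 - θ) / 2 * (N (u - x0))^2)
            = θ * (1/α) * ψ u + (1-θ) * (1/α) * ψ x0
              - θ * ((1-θ)/(2*α)) * (N (u - x0))^2 := by
          field_simp
        rw [expand] at h4
        nlinarith [h4]
      have := le_of_mul_le_mul_left (by nlinarith [h5] : θ * (⟪z, x0⟫ + (1/α) * ψ x0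
          + ((1-θ)/(2*α)) * (N (u - x0))^2) ≤ θ * (⟪z, u⟫ + (1/α) * ψ u)) hθ0
      linarith
    have hcont : Filter.Tendsto
        (fun θ : ℝ => ⟪z, x0⟫ + (1/α) * ψ x0 + ((1-θ)/(2*α)) * (N (u - x0))^2)
        (nhdsWithin 0 (Set.Ioo (0:ℝ) 1))
        (nhds (⟪z, x0⟫ + (1/α) * ψ x0 + ((1-0)/(2*α)) * (N (u - x0))^2)) := by
      apply Filter.Tendsto.mono_left _ nhdsWithin_le_nhds
      have hc : Continuous (fun θ : ℝ =>
          ⟪z, x0⟫ + (1/α) * ψ x0 + ((1-θ)/(2*α)) * (N (u - x0))^2) :=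
        continuous_const.add
          (((continuous_const.sub continuous_id).div_const _).mul continuous_const)
      exact hc.tendsto 0
    have hev : ∀ᶠ θ in nhdsWithin 0 (Set.Ioo (0:ℝ) 1),
        ⟪z, x0⟫ + (1/α) * ψ x0 + ((1-θ)/(2*α)) * (N (u - x0))^2
          ≤ ⟪z, u⟫ + (1/α) * ψ u := by
      filter_upwards [self_mem_nhdsWithin] with θ hθ
      exact key θ hθ.1 hθ.2
    have hne : (nhdsWithin (0:ℝ) (Set.Ioo (0:ℝ) 1)).NeBot := by
      apply mem_closure_iff_nhdsWithin_neBot.1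
      rw [closure_Ioo (by norm_num : (0:ℝ) ≠ 1)]
      exact ⟨le_rfl, by norm_num⟩
    have := le_of_tendsto hcont hev
    simpa using this
  -- the regularized projection is `α`-Lipschitz from the dual norm to `N`
  have hlipProj : ∀ z w, N (Proj z - Proj w) ≤ α * Nd (z - w) := by
    intro z w
    set a := Proj z with haa
    set b := Proj w with hbb
    have h1 := hstrong z b (hProjX w)
    have h2 := hstrong w a (hProjX z)
    have hsym : N (b - a) = N (a - b) := by
      have : b - a = -(a - b) := by abel
      rw [this, hNneg]
    rw [hsym] at h1
    have h3 : (1/α) * (N (a - b))^2 ≤ ⟪z - w, b - a⟫ := by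
      rw [inner_sub_left, inner_sub_right, inner_sub_right]
      have : (1/(2*α)) * (N (a-b))^2 + (1/(2*α)) * (N (a-b))^2 = (1/α) * (N (a-b))^2 := by
        field_simp; ring
      nlinarith [h1, h2]
    have h4 : ⟪z - w, b - a⟫ ≤ Nd (z - w) * N (b - a) := hinner_le _ _
    rw [hsym] at h4
    rcases eq_or_lt_of_le (hNnn (a - b)) with h | h
    · rw [← h]
      exact mul_nonneg (le_of_lt hα0) (hNdnn _)
    · have h5 : (1/α) * (N (a - b))^2 ≤ Nd (z - w) * N (a - b) := le_trans h3 h4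
      have h6 : (1/α) * N (a - b) ≤ Nd (z - w) := by
        have := (mul_le_mul_iff_of_pos_right h).1 (by nlinarith [h5] :
          ((1/α) * N (a - b)) * N (a - b) ≤ Nd (z - w) * N (a - b))
        exact this
      calc N (a - b) = α * ((1/α) * N (a - b)) := by field_simp
        _ ≤ α * Nd (z - w) := mul_le_mul_of_nonneg_left h6 (le_of_lt hα0)
  -- explicit formula for the iterates
  have hyform : ∀ (t : ℕ) (i : Fin n),
      y i t = ∑ s ∈ range t, ∑ j, ((P ^ (t - 1 - s)) i j) • g j s := by
    intro t
    induction t with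
    | zero => intro i; simp [hy0]
    | succ t ih =>
      intro i
      rw [hyrec i t]
      have e1 : (∑ j, P i j • y j t) = ∑ s ∈ range t, ∑ l, ((P ^ (t - s)) i l) • g l s := by
        simp_rw [ih, Finset.smul_sum, smul_smul]
        rw [Finset.sum_comm]
        refine Finset.sum_congr rfl fun s hs => ?_
        rw [Finset.sum_comm]
        refine Finset.sum_congr rfl fun l _ => ?_
        rw [← Finset.sum_smul]
        congr 1
        rw [mem_range] at hs
        have hts : t - s = (t - 1 - s) + 1 := by omega
        rw [hts, pow_succ', Matrix.mul_apply]
      have e2 : g i t = ∑ l, ((P ^ (t - t)) i l) • g l t := by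
        simp [Matrix.one_apply]
      rw [e1]
      conv_lhs => rw [e2]
      rw [← Finset.sum_range_succ (fun s => ∑ l, ((P ^ (t - s)) i l) • g l s) t]
      refine Finset.sum_congr rfl fun s _ => ?_
      refine Finset.sum_congr rfl fun l _ => ?_
      congr 2
  have hybarstep : ∀ t, ybar (t+1) = ybar t + ∑ i, π i • g i t := by
    intro t
    rw [hybar, hybar]
    simp_rw [hyrec, smul_add, Finset.sum_add_distrib, Finset.smul_sum, smul_smul]
    congr 1
    rw [Finset.sum_comm]
    refine Finset.sum_congr rfl fun j _ => ?_
    rw [← Finset.sum_smul, hπstat]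
  have hybarform : ∀ t, ybar t = ∑ s ∈ range t, ∑ j, π j • g j s := by
    intro t
    induction t with
    | zero => rw [hybar]; simp [hy0]
    | succ t ih => rw [hybarstep, ih, Finset.sum_range_succ]
  have hdiff : ∀ (i : Fin n) (t : ℕ), y i t - ybar t
      = ∑ s ∈ range t, ∑ j, ((P ^ (t - 1 - s)) i j - π j) • g j s := by
    intro i t
    rw [hyform, hybarform, ← Finset.sum_sub_distrib]
    refine Finset.sum_congr rfl fun s _ => ?_
    rw [← Finset.sum_sub_distrib]
    refine Finset.sum_congr rfl fun j _ => ?_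
    rw [← sub_smul]
  -- nonnegativity of L
  have hL0 : 0 ≤ L := le_trans (hNdnn (g ⟨0, hn⟩ 0)) (hgbd ⟨0, hn⟩ 0 (by omega))
  -- notation for the mixing constant
  set r : ℝ := γ ^ ((1 : ℝ) / (ν : ℝ)) with hrdef
  have hr0 : 0 < r := Real.rpow_pos_of_pos hγ0 _
  have hν0 : (0:ℝ) < (ν:ℝ) := by exact_mod_cast hν
  have hr1 : r < 1 := Real.rpow_lt_one (le_of_lt hγ0) hγ1 (by positivity)
  set Γ : ℝ := (n : ℝ) / (γ * (1 - r)) with hΓdef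
  have hΓ0 : 0 ≤ Γ := by
    apply div_nonneg (by positivity)
    have : 0 < γ * (1 - r) := mul_pos hγ0 (by linarith)
    linarith
  -- row bounds on the deviation of matrix powers from the stationary distribution
  have hA0 : ∀ i : Fin n, ∑ j, |(P ^ 0) i j - π j| ≤ 2 := by
    intro i
    have : ∀ j : Fin n, |(P ^ 0) i j - π j| ≤ (if i = j then (1:ℝ) else 0) + π j := by
      intro j
      rcases eq_or_ne i j with h | h
      · subst h
        have he : (P ^ 0) i i = 1 := by rw [pow_zero, Matrix.one_apply_eq]
        rw [he, if_pos rfl, abs_of_nonneg (by linarith [hπ1 i])]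
        linarith [hπ0 i]
      · have he : (P ^ 0) i j = 0 := by rw [pow_zero, Matrix.one_apply_ne h]
        rw [he, if_neg h, abs_of_nonpos (by linarith [hπ0 j])]
        linarith [hπ0 j]
    calc ∑ j, |(P ^ 0) i j - π j| ≤ ∑ j, ((if i = j then (1:ℝ) else 0) + π j) :=
          Finset.sum_le_sum fun j _ => this j
      _ = (∑ j, (if i = j then (1:ℝ) else 0)) + ∑ j, π j := Finset.sum_add_distrib
      _ = 1 + 1 := by rw [hπsum]; simp
      _ = 2 := by norm_num
  have hAk : ∀ (k : ℕ), 1 ≤ k → ∀ i : Fin n,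
      ∑ j, |(P ^ k) i j - π j| ≤ ((n:ℝ)/γ) * r ^ k := by
    intro k hk i
    have hpow : (γ : ℝ) ^ (k / ν) ≤ γ⁻¹ * r ^ k := by
      have hfloor : ((k:ℝ)/(ν:ℝ)) - 1 ≤ ((k / ν : ℕ) : ℝ) := by
        have h1 : ν * (k / ν) + k % ν = k := Nat.div_add_mod k ν
        have h2 : k % ν < ν := Nat.mod_lt k (by omega)
        have h1' : (ν:ℝ) * ((k / ν : ℕ):ℝ) + ((k % ν : ℕ):ℝ) = (k:ℝ) := by exact_mod_cast h1
        have h2' : ((k % ν : ℕ):ℝ) < (ν:ℝ) := by exact_mod_cast h2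
        rw [sub_le_iff_le_add, div_le_iff₀ hν0]
        nlinarith
      have e1 : (γ : ℝ) ^ (k / ν) = γ ^ (((k / ν : ℕ) : ℝ)) := by
        rw [Real.rpow_natCast]
      have e2 : γ⁻¹ * r ^ k = γ ^ (((k:ℝ)/(ν:ℝ)) - 1) := by
        rw [hrdef, ← Real.rpow_natCast (γ ^ ((1:ℝ)/(ν:ℝ))) k, ← Real.rpow_mul (le_of_lt hγ0),
          Real.rpow_sub hγ0, Real.rpow_one]
        rw [one_div, inv_mul_eq_div]
        congr 1
        ring
      rw [e1, e2]
      exact Real.rpow_le_rpow_of_exponent_ge hγ0 (le_of_lt hγ1) hfloor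
    calc ∑ j, |(P ^ k) i j - π j| ≤ ∑ j : Fin n, (γ : ℝ) ^ (k / ν) :=
          Finset.sum_le_sum fun j _ => hmix k hk i j
      _ = (n : ℝ) * γ ^ (k / ν) := by rw [Finset.sum_const]; simp [mul_comm]
      _ ≤ (n : ℝ) * (γ⁻¹ * r ^ k) := mul_le_mul_of_nonneg_left hpow (by positivity)
      _ = ((n:ℝ)/γ) * r ^ k := by ring
  -- the accumulated mixing error
  have hAsum : ∀ (t : ℕ), 1 ≤ t → ∀ i : Fin n,
      ∑ s ∈ range t, ∑ j, |(P ^ (t - 1 - s)) i j - π j| ≤ Γ + 2 := by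
    intro t ht i
    obtain ⟨t', rfl⟩ : ∃ t', t = t' + 1 := ⟨t - 1, by omega⟩
    have hrefl : ∑ s ∈ range (t'+1), ∑ j, |(P ^ (t' + 1 - 1 - s)) i j - π j|
        = ∑ k ∈ range (t'+1), ∑ j, |(P ^ k) i j - π j| := by
      exact Finset.sum_range_reflect (fun k => ∑ j, |(P ^ k) i j - π j|) (t'+1)
    rw [hrefl, Finset.sum_range_succ' (fun k => ∑ j, |(P ^ k) i j - π j|) t']
    have h1r : (0:ℝ) < 1 - r := by linarith
    have hgeom : ∑ k ∈ range t', r ^ k ≤ (1 - r)⁻¹ := by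
      have hgs := geom_sum_mul r t'
      have hrt : (0:ℝ) ≤ r ^ t' := by positivity
      have hmul : (∑ k ∈ range t', r ^ k) * (1 - r) ≤ 1 := by nlinarith [hgs]
      rw [inv_eq_one_div]
      exact (le_div_iff₀ h1r).2 hmul
    have htail : ∑ k ∈ range t', ∑ j, |(P ^ (k+1)) i j - π j| ≤ Γ := by
      calc ∑ k ∈ range t', ∑ j, |(P ^ (k+1)) i j - π j|
          ≤ ∑ k ∈ range t', ((n:ℝ)/γ) * r ^ (k+1) :=
            Finset.sum_le_sum fun k _ => hAk (k+1) (by omega) i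
        _ = ((n:ℝ)/γ) * r * ∑ k ∈ range t', r ^ k := by
            rw [Finset.mul_sum]
            refine Finset.sum_congr rfl fun k _ => ?_
            ring
        _ ≤ ((n:ℝ)/γ) * r * (1 - r)⁻¹ := by
            refine mul_le_mul_of_nonneg_left hgeom (by positivity)
        _ ≤ ((n:ℝ)/γ) * 1 * (1 - r)⁻¹ := by
            have h1 : (0:ℝ) ≤ (n:ℝ)/γ := by positivity
            have h2 : (0:ℝ) ≤ (1 - r)⁻¹ := by
              apply inv_nonneg.2; linarith
            nlinarith [mul_nonneg h1 h2]
        _ = Γ := by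
            have hγne : γ ≠ 0 := ne_of_gt hγ0
            have h1rne : (1:ℝ) - r ≠ 0 := ne_of_gt h1r
            rw [hΓdef]
            field_simp
    have := hA0 i
    linarith
  -- consensus: each agent's dual variable stays close to the weighted average
  have hcons : ∀ (i : Fin n) (t : ℕ), 1 ≤ t → t ≤ T →
      Nd (y i t - ybar t) ≤ L * (Γ + 2) := by
    intro i t ht1 htT
    rw [hdiff i t]
    have step1 : Nd (∑ s ∈ range t, ∑ j, ((P ^ (t - 1 - s)) i j - π j) • g j s)
        ≤ ∑ s ∈ range t, Nd (∑ j, ((P ^ (t - 1 - s)) i j - π j) • g j s) := by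
      have := hNd_sum (range t)
        (fun s => ∑ j, ((P ^ (t - 1 - s)) i j - π j) • g j s) (fun _ => (1:ℝ))
      simpa using this
    have step2 : ∀ s ∈ range t, Nd (∑ j, ((P ^ (t - 1 - s)) i j - π j) • g j s)
        ≤ ∑ j, |(P ^ (t - 1 - s)) i j - π j| * L := by
      intro s hs
      rw [mem_range] at hs
      refine le_trans (hNd_sum Finset.univ _ _) ?_
      refine Finset.sum_le_sum fun j _ => ?_
      exact mul_le_mul_of_nonneg_left (hgbd j s (by omega)) (abs_nonneg _)
    calc Nd (∑ s ∈ range t, ∑ j, ((P ^ (t - 1 - s)) i j - π j) • g j s)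
        ≤ ∑ s ∈ range t, ∑ j, |(P ^ (t - 1 - s)) i j - π j| * L :=
          le_trans step1 (Finset.sum_le_sum step2)
      _ = (∑ s ∈ range t, ∑ j, |(P ^ (t - 1 - s)) i j - π j|) * L := by
          rw [Finset.sum_mul]
          refine Finset.sum_congr rfl fun s _ => ?_
          rw [Finset.sum_mul]
      _ ≤ (Γ + 2) * L := mul_le_mul_of_nonneg_right (hAsum t ht1 i) hL0
      _ = L * (Γ + 2) := mul_comm _ _
  -- the dual iterates are uniformly bounded
  have hNdy : ∀ (i : Fin n) (t : ℕ), 1 ≤ t → t ≤ T →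
      Nd (y i t) ≤ D + L * (Γ + 2) := by
    intro i t ht1 htT
    have : y i t = (y i t - ybar t) + ybar t := by abel
    rw [this]
    calc Nd ((y i t - ybar t) + ybar t) ≤ Nd (y i t - ybar t) + Nd (ybar t) := hNd_add _ _
      _ ≤ L * (Γ + 2) + D := add_le_add (hcons i t ht1 htT) (hybarbd t ht1 htT)
      _ = D + L * (Γ + 2) := by ring
  -- the primal iterates stay in `X`
  have hxX : ∀ (i : Fin n) (t : ℕ), 1 ≤ t → x i t ∈ X := by
    intro i t ht
    obtain ⟨t', rfl⟩ : ∃ t', t = t' + 1 := ⟨t - 1, by omega⟩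
    rw [hxrec]
    exact hProjX _
  -- the key per-round distance bound
  set B : ℝ := α * (D + L * (Γ + 2) + Y) with hBdef
  have hkey : ∀ (i : Fin n) (t : ℕ), 1 ≤ t → t ≤ T →
      N (x i t - xstar t) ≤ B + (if t = 1 then N (xstar 2 - xstar 1) else 0) := by
    intro i t ht1 htT
    have hyt : Nd (y i t) ≤ D + L * (Γ + 2) := hNdy i t ht1 htT
    obtain ⟨t', rfl⟩ : ∃ t', t = t' + 1 := ⟨t - 1, by omega⟩
    rcases Nat.lt_or_ge t' 1 with h1 | h2
    · -- t = 1
      have ht'0 : t' = 0 := by omega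
      subst ht'0
      obtain ⟨ys2, hxs2, hys2⟩ := hYstar i 2 le_rfl (by omega)
      have hstep : N (x i 1 - xstar 2) ≤ B := by
        rw [hxrec i 0, hxs2]
        calc N (Proj (y i 1) - Proj ys2) ≤ α * Nd (y i 1 - ys2) := hlipProj _ _
          _ ≤ α * (Nd (y i 1) + Nd ys2) := mul_le_mul_of_nonneg_left (hNd_sub _ _) (le_of_lt hα0)
          _ ≤ α * ((D + L * (Γ + 2)) + Y) :=
              mul_le_mul_of_nonneg_left (add_le_add hyt hys2) (le_of_lt hα0)
          _ = B := by rw [hBdef]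
      have htri : N (x i 1 - xstar 1) ≤ N (x i 1 - xstar 2) + N (xstar 2 - xstar 1) := by
        have : x i 1 - xstar 1 = (x i 1 - xstar 2) + (xstar 2 - xstar 1) := by abel
        rw [this]
        exact hNtri _ _
      rw [if_pos rfl]
      linarith
    · -- t ≥ 2
      have ht2 : 2 ≤ t' + 1 := by omega
      obtain ⟨ys, hxs, hys⟩ := hYstar i (t' + 1) ht2 (by omega)
      rw [if_neg (by omega), add_zero, hxrec i t', hxs]
      calc N (Proj (y i (t' + 1)) - Proj ys) ≤ α * Nd (y i (t' + 1) - ys) := hlipProj _ _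
        _ ≤ α * (Nd (y i (t' + 1)) + Nd ys) := mul_le_mul_of_nonneg_left (hNd_sub _ _) (le_of_lt hα0)
        _ ≤ α * ((D + L * (Γ + 2)) + Y) :=
            mul_le_mul_of_nonneg_left (add_le_add hyt hys) (le_of_lt hα0)
        _ = B := by rw [hBdef]
  -- per-round regret bound for any point close to the optimum
  have hn0 : (0:ℝ) < (n:ℝ) := by exact_mod_cast hn
  have hterm : ∀ (t : ℕ), 1 ≤ t → t ≤ T → ∀ a : Fin n → EuclideanSpace ℝ (Fin m),
      (∀ i, a i ∈ X) →
      (∀ i, N (a i - xstar t) ≤ B + (if t = 1 then N (xstar 2 - xstar 1) else 0)) →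
      (1 / (n : ℝ)) * ∑ i, f i t (a i) - (1 / (n : ℝ)) * ∑ i, f i t (xstar t)
        ≤ L * (B + (if t = 1 then N (xstar 2 - xstar 1) else 0)) := by
    intro t ht1 htT a ha hdist
    have hx' : xstar t ∈ X := hxstarX t ht1 (by omega)
    have hper : ∀ i : Fin n, f i t (a i) - f i t (xstar t)
        ≤ L * (B + (if t = 1 then N (xstar 2 - xstar 1) else 0)) := by
      intro i
      have := hlip i t (by omega) (a i) (ha i) (xstar t) hx'
      have h1 := (le_abs_self _).trans this
      calc f i t (a i) - f i t (xstar t) ≤ L * N (a i - xstar t) := h1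
        _ ≤ L * (B + (if t = 1 then N (xstar 2 - xstar 1) else 0)) :=
            mul_le_mul_of_nonneg_left (hdist i) hL0
    have hsum : ∑ i, (f i t (a i) - f i t (xstar t))
        ≤ ∑ i : Fin n, L * (B + (if t = 1 then N (xstar 2 - xstar 1) else 0)) :=
      Finset.sum_le_sum fun i _ => hper i
    rw [Finset.sum_sub_distrib] at hsum
    rw [Finset.sum_const, Finset.card_univ, Fintype.card_fin, nsmul_eq_mul] at hsum
    have h2 : (1 / (n : ℝ)) * (∑ i, f i t (a i) - ∑ i, f i t (xstar t))
        ≤ (1 / (n : ℝ)) * ((n:ℝ) * (L * (B + (if t = 1 then N (xstar 2 - xstar 1) else 0)))) :=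
      mul_le_mul_of_nonneg_left hsum (by positivity)
    rw [mul_sub] at h2
    have h3 : (1 / (n : ℝ)) * ((n:ℝ) * (L * (B + (if t = 1 then N (xstar 2 - xstar 1) else 0))))
        = L * (B + (if t = 1 then N (xstar 2 - xstar 1) else 0)) := by
      field_simp
    rw [h3] at h2
    exact h2
  -- summing the per-round bounds over `t = 1, …, T`
  have hsumbound : ∑ t ∈ Icc 1 T,
      (L * (B + (if t = 1 then N (xstar 2 - xstar 1) else 0)))
      = (T : ℝ) * (L * B) + L * N (xstar 2 - xstar 1) := by
    have : ∀ t ∈ Icc 1 T, L * (B + (if t = 1 then N (xstar 2 - xstar 1) else 0))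
        = L * B + (if t = 1 then L * N (xstar 2 - xstar 1) else 0) := by
      intro t _
      rcases eq_or_ne t 1 with h | h
      · rw [if_pos h, if_pos h]; ring
      · rw [if_neg h, if_neg h]; ring
    rw [Finset.sum_congr rfl this, Finset.sum_add_distrib, Finset.sum_const,
      Nat.card_Icc]
    have h1 : ∑ t ∈ Icc 1 T, (if t = 1 then L * N (xstar 2 - xstar 1) else 0)
        = L * N (xstar 2 - xstar 1) := by
      rw [Finset.sum_ite_eq' (Icc 1 T) 1 (fun _ => L * N (xstar 2 - xstar 1))]
      rw [if_pos (by rw [Finset.mem_Icc]; omega)]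
    rw [h1]
    simp only [Nat.add_sub_cancel, nsmul_eq_mul]
    try ring
  -- the final bound
  have hTα : (T : ℝ) * α = β := by
    rw [hα]
    field_simp
  have hVT : L * N (xstar 2 - xstar 1) ≤ L * ∑ t ∈ Icc 1 T, N (xstar (t + 1) - xstar t) := by
    refine mul_le_mul_of_nonneg_left ?_ hL0
    have h1mem : (1:ℕ) ∈ Icc 1 T := by rw [Finset.mem_Icc]; omega
    have := Finset.single_le_sum (f := fun t => N (xstar (t + 1) - xstar t))
      (fun t _ => hNnn _) h1mem
    simpa using this
  have hfinal : (T : ℝ) * (L * B) + L * N (xstar 2 - xstar 1)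
      ≤ β * L ^ 2 * ((n : ℝ) / (γ * (1 - γ ^ ((1 : ℝ) / (ν : ℝ)))) + 2)
        + β * L * (D + Y) + L * ∑ t ∈ Icc 1 T, N (xstar (t + 1) - xstar t) := by
    have hTB : (T : ℝ) * (L * B) = β * L ^ 2 * (Γ + 2) + β * L * (D + Y) := by
      rw [hBdef]
      have : (T:ℝ) * (L * (α * (D + L * (Γ + 2) + Y)))
          = ((T:ℝ) * α) * (L * (D + L * (Γ + 2) + Y)) := by ring
      rw [this, hTα]
      ring
    rw [hTB, hrdef] at *
    linarith
  constructor
  · -- network dynamic regret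
    calc ∑ t ∈ Icc 1 T,
          ((1 / (n : ℝ)) * ∑ i, f i t (x i t) - (1 / (n : ℝ)) * ∑ i, f i t (xstar t))
        ≤ ∑ t ∈ Icc 1 T, (L * (B + (if t = 1 then N (xstar 2 - xstar 1) else 0))) := by
          refine Finset.sum_le_sum fun t ht => ?_
          rw [Finset.mem_Icc] at ht
          exact hterm t ht.1 ht.2 (fun i => x i t) (fun i => hxX i t ht.1)
            (fun i => hkey i t ht.1 ht.2)
      _ = (T : ℝ) * (L * B) + L * N (xstar 2 - xstar 1) := hsumbound
      _ ≤ _ := hfinal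
  · -- local dynamic regret
    intro j
    calc ∑ t ∈ Icc 1 T,
          ((1 / (n : ℝ)) * ∑ i, f i t (x j t) - (1 / (n : ℝ)) * ∑ i, f i t (xstar t))
        ≤ ∑ t ∈ Icc 1 T, (L * (B + (if t = 1 then N (xstar 2 - xstar 1) else 0))) := by
          refine Finset.sum_le_sum fun t ht => ?_
          rw [Finset.mem_Icc] at ht
          exact hterm t ht.1 ht.2 (fun _ => x j t) (fun _ => hxX j t ht.1)
            (fun _ => hkey j t ht.1 ht.2)
      _ = (T : ℝ) * (L * B) + L * N (xstar 2 - xstar 1) := hsumbound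
      _ ≤ _ := hfinal
end
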